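/- arXiv:2012.04530 — 9 statements merged into one kernel-verified Lean document; each statement's English description precedes it below -/
import Mathlib

section
/- If Q and R are mutually polar retractions on a Banach space X (i.e., Q and R are continuous positively homogeneous idempotent maps whose ranges are nonzero closed convex cones, mapping points outside their range to the boundary of their range, with Q + R = I and QR = RQ = 0) and the range of Q has nonempty interior, then there exists a nonzero vector u lying in both the range of R and the negative of the interior of the range of Q; in particular the span of u is a transversal line for the ranges of Q and R. -/
open Set

variable {X : Type*} [NormedAddCommGroup X] [NormedSpace ℝ X]

/-- A retraction: continuous, positively homogeneous, idempotent map whose range is a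
nonzero closed convex cone, mapping points outside the range to the boundary of the range. -/
def IsRetraction (T : X → X) : Prop :=
  Continuous T ∧
  (∀ t : ℝ, 0 ≤ t → ∀ x, T (t • x) = t • T x) ∧
  (∀ x, T (T x) = T x) ∧
  Set.range T ≠ {0} ∧
  IsClosed (Set.range T) ∧
  Convex ℝ (Set.range T) ∧
  (∀ t : ℝ, 0 ≤ t → ∀ y ∈ Set.range T, t • y ∈ Set.range T) ∧
  (∀ x, x ∉ Set.range T → T x ∈ frontier (Set.range T))

/-- Mutually polar retractions: Q + R = I and QR = RQ = 0. -/
def MutuallyPolar (Q R : X → X) : Prop :=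
  IsRetraction Q ∧ IsRetraction R ∧
  (∀ x, Q x + R x = x) ∧ (∀ x, Q (R x) = 0) ∧ (∀ x, R (Q x) = 0)

/-- M and N are transversal with transversal line Δ. -/
def TransversalWith (M N : Set X) (Δ : Submodule ℝ X) : Prop :=
  M ∩ N = {0} ∧
  (∃ d : X, d ≠ 0 ∧ Δ = Submodule.span ℝ {d}) ∧
  ((Δ : Set X) ∩ (M \ {0})).Nonempty ∧
  ((Δ : Set X) ∩ (N \ {0})).Nonempty ∧
  ((Δ : Set X) ∩ (interior M ∪ interior N)).Nonempty

/-- M and N are transversal cones. -/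
def Transversal (M N : Set X) : Prop := ∃ Δ : Submodule ℝ X, TransversalWith M N Δ

theorem stmt0 [CompleteSpace X] (Q R : X → X) (h : MutuallyPolar Q R)
    (hM : (interior (Set.range Q)).Nonempty) :
    ∃ u : X, u ≠ 0 ∧ u ∈ Set.range R ∧ -u ∈ interior (Set.range Q) ∧
      TransversalWith (Set.range Q) (Set.range R) (Submodule.span ℝ {u}) := by

  obtain ⟨hQ, hR, hQR, hQRz, hRQz⟩ := h
  obtain ⟨hQc, hQh, hQi, hQne, hQcl, hQconv, hQcone, hQfr⟩ := hQ
  obtain ⟨hRc, hRh, hRi, hRne, hRcl, hRconv, hRcone, hRfr⟩ := hR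
  set M := Set.range Q with hMdef
  set N := Set.range R with hNdef
  have hQ0 : Q 0 = 0 := by have := hQh 0 le_rfl 0; simpa using this
  have hR0 : R 0 = 0 := by have := hRh 0 le_rfl 0; simpa using this
  have h0M : (0:X) ∈ M := ⟨0, hQ0⟩
  have h0N : (0:X) ∈ N := ⟨0, hR0⟩
  have hfixQ : ∀ x ∈ M, Q x = x := by rintro x ⟨y, rfl⟩; exact hQi y
  have hfixR : ∀ x ∈ N, R x = x := by rintro x ⟨y, rfl⟩; exact hRi y
  have hMN : M ∩ N = {0} := by
    ext x
    constructor
    · rintro ⟨hxM, hxN⟩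
      have h1 : Q x = x := hfixQ x hxM
      have h2 : R x = x := hfixR x hxN
      have : Q (R x) = 0 := hQRz x
      rw [h2, h1] at this
      simpa using this
    · rintro rfl
      exact ⟨h0M, h0N⟩
  -- M + M ⊆ M
  have hMM : ∀ x ∈ M, ∀ y ∈ M, x + y ∈ M := by
    intro x hx y hy
    have hmid : (1/2 : ℝ) • x + (1/2 : ℝ) • y ∈ M :=
      hQconv hx hy (by norm_num) (by norm_num) (by norm_num)
    have := hQcone 2 (by norm_num) _ hmid
    have heq : (2:ℝ) • ((1/2 : ℝ) • x + (1/2 : ℝ) • y) = x + y := by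
      rw [smul_add, smul_smul, smul_smul]; norm_num
    rwa [heq] at this
  -- interior M + M ⊆ interior M
  have key : ∀ a ∈ interior M, ∀ m ∈ M, a + m ∈ interior M := by
    intro a ha m hm
    have hopen : IsOpen ((fun y => y + m) '' interior M) :=
      (isOpenMap_add_right m) _ isOpen_interior
    have hsub : ((fun y => y + m) '' interior M) ⊆ M := by
      rintro _ ⟨y, hy, rfl⟩
      exact hMM y (interior_subset hy) m hm
    exact interior_maximal hsub hopen ⟨a, ha, rfl⟩
  -- N contains a nonzero vector
  obtain ⟨v, hvN, hv0⟩ : ∃ v ∈ N, v ≠ 0 := by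
    by_contra hc
    push_neg at hc
    apply hRne
    ext x
    simp only [Set.mem_singleton_iff]
    exact ⟨fun hx => hc x hx, fun hx => hx ▸ h0N⟩
  -- a ∈ interior M implies -a ∉ M
  have hnotM : ∀ a ∈ interior M, -a ∉ M := by
    intro a ha hna
    have h0 : (0:X) ∈ interior M := by
      have := key a ha (-a) hna
      simpa using this
    -- then M = univ, contradiction with v
    rcases Metric.mem_nhds_iff.mp (mem_interior_iff_mem_nhds.mp h0) with ⟨ε, hε, hball⟩
    set t : ℝ := ε / (2 * (‖v‖ + 1)) with ht
    have hvpos : (0:ℝ) < ‖v‖ + 1 := by positivity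
    have htpos : 0 < t := by positivity
    have htv : t • v ∈ M := by
      apply hball
      rw [Metric.mem_ball, dist_zero_right, norm_smul, Real.norm_eq_abs, abs_of_pos htpos]
      have h1 : t * ‖v‖ ≤ t * (‖v‖ + 1) := by nlinarith
      have h2 : t * (‖v‖ + 1) = ε / 2 := by
        rw [ht, div_mul_eq_mul_div, mul_div_mul_right _ _ hvpos.ne']
      linarith
    have hvM : v ∈ M := by
      have := hQcone t⁻¹ (le_of_lt (inv_pos.mpr htpos)) _ htv
      rwa [smul_smul, inv_mul_cancel₀ (ne_of_gt htpos), one_smul] at this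
    have : v = 0 := by
      have : v ∈ M ∩ N := ⟨hvM, hvN⟩
      rwa [hMN, Set.mem_singleton_iff] at this
    exact hv0 this
  -- main construction
  obtain ⟨a, ha⟩ := hM
  have hnaM : -a ∉ M := hnotM a ha
  set u : X := R (-a) with hu
  have huN : u ∈ N := ⟨-a, rfl⟩
  have hsum : Q (-a) + u = -a := hQR (-a)
  have hu0 : u ≠ 0 := by
    intro h0
    apply hnaM
    rw [h0, add_zero] at hsum
    exact ⟨-a, hsum⟩
  have hnegu : -u ∈ interior M := by
    have hQaM : Q (-a) ∈ M := ⟨-a, rfl⟩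
    have : a + Q (-a) ∈ interior M := key a ha _ hQaM
    have heq : -u = a + Q (-a) := by
      have := hsum
      abel_nf
      abel_nf at this
      linear_combination (norm := abel_nf) -this
    rwa [heq]
  refine ⟨u, hu0, huN, hnegu, hMN, ⟨u, hu0, rfl⟩, ?_, ?_, ?_⟩
  · refine ⟨-u, ?_, interior_subset hnegu, ?_⟩
    · exact Submodule.neg_mem _ (Submodule.mem_span_singleton_self u)
    · simpa using hu0
  · exact ⟨u, Submodule.mem_span_singleton_self u, huN, hu0⟩
  · exact ⟨-u, Submodule.neg_mem _ (Submodule.mem_span_singleton_self u), Or.inl hnegu⟩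
end

section
/- In ℝ², let e₁, e₂, u₁, u₂ be nonzero vectors lying in the open first, second, third, and fourth quadrants respectively, and set K₁ = cone{e₁,e₂}, K₂ = cone{e₂,u₁}, K₃ = cone{u₁,u₂}, K₄ = cone{u₂,e₁}. Define Q by Qx = x on K₁, Qx = λe₁ for x = λe₁ + μu₂ ∈ K₄, Qx = λe₂ for x = λe₂ + μu₁ ∈ K₂, and Qx = 0 on K₃; define R = I − Q. Then Q and R are mutually polar retractions with ranges K₁ and K₃ respectively. -/
open Set

variable {X : Type*} [NormedAddCommGroup X] [NormedSpace ℝ X]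

/-- The cone generated by two vectors: `{s • v + t • w : 0 ≤ s, 0 ≤ t}`. -/
def cone2 (v w : ℝ × ℝ) : Set (ℝ × ℝ) :=
  {x | ∃ s t : ℝ, 0 ≤ s ∧ 0 ≤ t ∧ x = s • v + t • w}

namespace Stmt2Aux

/-- 2D cross product. -/
def cr (v w : ℝ × ℝ) : ℝ := v.1 * w.2 - v.2 * w.1

lemma cr_def (v w : ℝ × ℝ) : cr v w = v.1 * w.2 - v.2 * w.1 := rfl

lemma cr_cont (w : ℝ × ℝ) : Continuous fun x => cr x w := by
  unfold cr
  exact (continuous_fst.mul continuous_const).sub (continuous_snd.mul continuous_const)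

lemma cr_cont' (v : ℝ × ℝ) : Continuous fun x => cr v x := by
  unfold cr
  exact (continuous_const.mul continuous_snd).sub (continuous_const.mul continuous_fst)

lemma mem_cone2_iff {v w : ℝ × ℝ} (hc : 0 < cr v w) {x : ℝ × ℝ} :
    x ∈ cone2 v w ↔ 0 ≤ cr x w ∧ 0 ≤ cr v x := by
  constructor
  · rintro ⟨s, t, hs, ht, rfl⟩
    constructor
    · have h : cr (s • v + t • w) w = s * cr v w := by simp [cr]; ring
      rw [h]; positivity
    · have h : cr v (s • v + t • w) = t * cr v w := by simp [cr]; ring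
      rw [h]; positivity
  · rintro ⟨h1, h2⟩
    refine ⟨cr x w / cr v w, cr v x / cr v w, div_nonneg h1 hc.le, div_nonneg h2 hc.le, ?_⟩
    have hne : cr v w ≠ 0 := hc.ne'
    apply Prod.ext <;> simp only [Prod.fst_add, Prod.snd_add, Prod.smul_fst, Prod.smul_snd, smul_eq_mul] <;> field_simp <;> unfold cr <;> ring

lemma isClosed_cone2 {v w : ℝ × ℝ} (hc : 0 < cr v w) : IsClosed (cone2 v w) := by
  have : cone2 v w = {x | 0 ≤ cr x w} ∩ {x | 0 ≤ cr v x} := by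
    ext x; rw [mem_cone2_iff hc]; rfl
  rw [this]
  exact (isClosed_le continuous_const (cr_cont w)).inter
    (isClosed_le continuous_const (cr_cont' v))

lemma convex_cone2 (v w : ℝ × ℝ) : Convex ℝ (cone2 v w) := by
  rintro x ⟨s1, t1, hs1, ht1, rfl⟩ y ⟨s2, t2, hs2, ht2, rfl⟩ a b ha hb _
  refine ⟨a * s1 + b * s2, a * t1 + b * t2, by positivity, by positivity, ?_⟩
  module

lemma smul_mem_cone2 {v w : ℝ × ℝ} {t : ℝ} (ht : 0 ≤ t) {x : ℝ × ℝ}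
    (hx : x ∈ cone2 v w) : t • x ∈ cone2 v w := by
  obtain ⟨s, r, hs, hr, rfl⟩ := hx
  exact ⟨t * s, t * r, by positivity, by positivity, by module⟩

lemma zero_mem_cone2 (v w : ℝ × ℝ) : 0 ∈ cone2 v w :=
  ⟨0, 0, le_rfl, le_rfl, by simp⟩

lemma exists_sub_smul_mem {s : Set (ℝ × ℝ)} {x : ℝ × ℝ} (d : ℝ × ℝ)
    (hx : x ∈ interior s) : ∃ δ : ℝ, 0 < δ ∧ x - δ • d ∈ s := by
  obtain ⟨ε, hε, hball⟩ := Metric.isOpen_iff.1 isOpen_interior x hx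
  set δ := ε / (2 * (‖d‖ + 1)) with hδ
  have hδpos : 0 < δ := by positivity
  refine ⟨δ, hδpos, interior_subset (hball ?_)⟩
  rw [Metric.mem_ball, dist_eq_norm, sub_sub_cancel_left, norm_neg, norm_smul,
    Real.norm_eq_abs, abs_of_pos hδpos]
  have hd : (0:ℝ) ≤ ‖d‖ := norm_nonneg d
  rw [hδ, div_mul_eq_mul_div, div_lt_iff₀ (by positivity)]
  nlinarith

lemma interior_strict {v w : ℝ × ℝ} (hc : 0 < cr v w) {x : ℝ × ℝ}
    (hx : x ∈ interior (cone2 v w)) : 0 < cr x w ∧ 0 < cr v x := by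
  constructor
  · obtain ⟨δ, hδ, hmem⟩ := exists_sub_smul_mem v hx
    have h := ((mem_cone2_iff hc).1 hmem).1
    have he : cr (x - δ • v) w = cr x w - δ * cr v w := by simp [cr]; ring
    nlinarith
  · obtain ⟨δ, hδ, hmem⟩ := exists_sub_smul_mem w hx
    have h := ((mem_cone2_iff hc).1 hmem).2
    have he : cr v (x - δ • w) = cr v x - δ * cr v w := by simp [cr]; ring
    nlinarith

end Stmt2Aux

open Stmt2Aux
theorem stmt2 (e₁ e₂ u₁ u₂ : ℝ × ℝ)
    (he₁ : 0 < e₁.1 ∧ 0 < e₁.2) (he₂ : e₂.1 < 0 ∧ 0 < e₂.2)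
    (hu₁ : u₁.1 < 0 ∧ u₁.2 < 0) (hu₂ : 0 < u₂.1 ∧ u₂.2 < 0)
    (Q : ℝ × ℝ → ℝ × ℝ)
    (hQ1 : ∀ x ∈ cone2 e₁ e₂, Q x = x)
    (hQ4 : ∀ l m : ℝ, 0 ≤ l → 0 ≤ m → Q (l • e₁ + m • u₂) = l • e₁)
    (hQ2 : ∀ l m : ℝ, 0 ≤ l → 0 ≤ m → Q (l • e₂ + m • u₁) = l • e₂)
    (hQ3 : ∀ x ∈ cone2 u₁ u₂, Q x = 0) :
    MutuallyPolar Q (fun x => x - Q x) ∧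
    Set.range Q = cone2 e₁ e₂ ∧
    Set.range (fun x => x - Q x) = cone2 u₁ u₂ := by
  have hc1 : 0 < cr e₁ e₂ := by rw [cr_def]; nlinarith [he₁.1, he₁.2, he₂.1, he₂.2]
  have hc2 : 0 < cr e₂ u₁ := by rw [cr_def]; nlinarith [he₂.1, he₂.2, hu₁.1, hu₁.2]
  have hc3 : 0 < cr u₁ u₂ := by rw [cr_def]; nlinarith [hu₁.1, hu₁.2, hu₂.1, hu₂.2]
  have hc4 : 0 < cr u₂ e₁ := by rw [cr_def]; nlinarith [hu₂.1, hu₂.2, he₁.1, he₁.2]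
  have crskew : ∀ a b : ℝ × ℝ, cr a b = -cr b a := by
    intro a b; rw [cr_def, cr_def]; ring
  -- coverage
  have hcover : ∀ x : ℝ × ℝ, x ∈ cone2 e₁ e₂ ∨ x ∈ cone2 e₂ u₁ ∨
      x ∈ cone2 u₁ u₂ ∨ x ∈ cone2 u₂ e₁ := by
    intro x
    rw [mem_cone2_iff hc1, mem_cone2_iff hc2, mem_cone2_iff hc3, mem_cone2_iff hc4,
      crskew x e₂, crskew x u₁, crskew x u₂, crskew x e₁]
    have hx1a : x.1 * cr e₁ e₂ = e₂.1 * cr e₁ x - e₁.1 * cr e₂ x := by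
      rw [cr_def, cr_def, cr_def]; ring
    have hx1b : x.1 * cr u₁ u₂ = u₂.1 * cr u₁ x - u₁.1 * cr u₂ x := by
      rw [cr_def, cr_def, cr_def]; ring
    rcases le_or_gt 0 (cr e₁ x) with h1 | h1
    · rcases le_or_gt (cr e₂ x) 0 with h2 | h2
      · exact Or.inl ⟨by linarith, h1⟩
      · rcases le_or_gt (cr u₁ x) 0 with h3 | h3
        · exact Or.inr (Or.inl ⟨by linarith, h2.le⟩)
        · rcases le_or_gt (cr u₂ x) 0 with h4 | h4
          · exact Or.inr (Or.inr (Or.inl ⟨by linarith, h3.le⟩))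
          · exfalso
            have hA : x.1 * cr e₁ e₂ < 0 := by
              nlinarith [mul_pos he₁.1 h2, mul_nonneg h1 (neg_nonneg.2 he₂.1.le)]
            have hB : 0 < x.1 * cr u₁ u₂ := by
              nlinarith [mul_pos hu₂.1 h3, mul_pos h4 (neg_pos.2 hu₁.1)]
            nlinarith [mul_pos hc1 hc3]
    · rcases le_or_gt 0 (cr u₂ x) with h4 | h4
      · exact Or.inr (Or.inr (Or.inr ⟨by linarith, h4⟩))
      · rcases le_or_gt 0 (cr u₁ x) with h3 | h3
        · exact Or.inr (Or.inr (Or.inl ⟨by linarith, h3⟩))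
        · rcases le_or_gt 0 (cr e₂ x) with h2 | h2
          · exact Or.inr (Or.inl ⟨by linarith, h2⟩)
          · exfalso
            have hA : 0 < x.1 * cr e₁ e₂ := by
              nlinarith [mul_pos he₁.1 (neg_pos.2 h2), mul_pos (neg_pos.2 h1) (neg_pos.2 he₂.1)]
            have hB : x.1 * cr u₁ u₂ < 0 := by
              nlinarith [mul_pos hu₂.1 (neg_pos.2 h3), mul_pos (neg_pos.2 h4) (neg_pos.2 hu₁.1)]
            nlinarith [mul_pos hc1 hc3]
  -- master: Q maps into K₁, I - Q maps into K₃
  have master : ∀ x : ℝ × ℝ, Q x ∈ cone2 e₁ e₂ ∧ x - Q x ∈ cone2 u₁ u₂ := by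
    intro x
    rcases hcover x with h | h | h | h
    · rw [hQ1 x h]
      exact ⟨h, by simpa using zero_mem_cone2 u₁ u₂⟩
    · obtain ⟨l, m, hl, hm, rfl⟩ := h
      rw [hQ2 l m hl hm]
      refine ⟨⟨0, l, le_rfl, hl, by simp⟩, ⟨m, 0, hm, le_rfl, by module⟩⟩
    · rw [hQ3 x h]
      exact ⟨zero_mem_cone2 e₁ e₂, by simpa using h⟩
    · obtain ⟨l, m, hl, hm, rfl⟩ := h
      rw [show l • u₂ + m • e₁ = m • e₁ + l • u₂ from add_comm _ _, hQ4 m l hm hl]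
      refine ⟨⟨m, 0, hm, le_rfl, by simp⟩, ⟨0, l, le_rfl, hl, by module⟩⟩
  -- homogeneity
  have hQhom : ∀ t : ℝ, 0 ≤ t → ∀ x, Q (t • x) = t • Q x := by
    intro t ht x
    rcases hcover x with h | h | h | h
    · rw [hQ1 x h, hQ1 _ (smul_mem_cone2 ht h)]
    · obtain ⟨l, m, hl, hm, rfl⟩ := h
      rw [hQ2 l m hl hm, show t • (l • e₂ + m • u₁) = (t * l) • e₂ + (t * m) • u₁ from by module,
        hQ2 (t * l) (t * m) (by positivity) (by positivity), mul_smul]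
    · rw [hQ3 x h, hQ3 _ (smul_mem_cone2 ht h), smul_zero]
    · obtain ⟨l, m, hl, hm, rfl⟩ := h
      rw [show l • u₂ + m • e₁ = m • e₁ + l • u₂ from add_comm _ _, hQ4 m l hm hl,
        show t • (m • e₁ + l • u₂) = (t * m) • e₁ + (t * l) • u₂ from by module,
        hQ4 (t * m) (t * l) (by positivity) (by positivity), mul_smul]
  -- ranges
  have hrangeQ : Set.range Q = cone2 e₁ e₂ := by
    apply subset_antisymm
    · rintro _ ⟨x, rfl⟩; exact (master x).1
    · intro y hy; exact ⟨y, hQ1 y hy⟩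
  have hrangeR : Set.range (fun x => x - Q x) = cone2 u₁ u₂ := by
    apply subset_antisymm
    · rintro _ ⟨x, rfl⟩; exact (master x).2
    · intro y hy; exact ⟨y, by simp [hQ3 y hy]⟩
  -- idempotence and polarity
  have hQQ : ∀ x, Q (Q x) = Q x := fun x => hQ1 _ (master x).1
  have hQR : ∀ x, Q (x - Q x) = 0 := fun x => hQ3 _ (master x).2
  -- continuity
  have hQcont : Continuous Q := by
    have hlf : LocallyFinite
        (fun i : Fin 4 => ![cone2 e₁ e₂, cone2 e₂ u₁, cone2 u₁ u₂, cone2 u₂ e₁] i) :=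
      locallyFinite_of_finite _
    apply hlf.continuous
    · apply Set.eq_univ_of_forall
      intro x
      rw [Set.mem_iUnion]
      rcases hcover x with h | h | h | h
      exacts [⟨0, h⟩, ⟨1, h⟩, ⟨2, h⟩, ⟨3, h⟩]
    · intro i
      fin_cases i
      exacts [isClosed_cone2 hc1, isClosed_cone2 hc2, isClosed_cone2 hc3, isClosed_cone2 hc4]
    · intro i
      fin_cases i
      · exact continuousOn_id.congr (fun x hx => hQ1 x hx)
      · apply ContinuousOn.congr (f := fun x => (cr x u₁ / cr e₂ u₁) • e₂)
        · exact (((cr_cont u₁).div_const _).smul continuous_const).continuousOn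
        · rintro _ ⟨l, m, hl, hm, rfl⟩
          dsimp only
          rw [hQ2 l m hl hm]
          have h : cr (l • e₂ + m • u₁) u₁ = l * cr e₂ u₁ := by
            rw [cr_def, cr_def]; simp; ring
          rw [h, mul_div_assoc, div_self hc2.ne', mul_one]
      · exact continuousOn_const.congr (fun x hx => hQ3 x hx)
      · apply ContinuousOn.congr (f := fun x => (cr u₂ x / cr u₂ e₁) • e₁)
        · exact (((cr_cont' u₂).div_const _).smul continuous_const).continuousOn
        · rintro _ ⟨l, m, hl, hm, rfl⟩
          dsimp only
          rw [show l • u₂ + m • e₁ = m • e₁ + l • u₂ from add_comm _ _, hQ4 m l hm hl]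
          have h : cr u₂ (m • e₁ + l • u₂) = m * cr u₂ e₁ := by
            rw [cr_def, cr_def]; simp; ring
          rw [h, mul_div_assoc, div_self hc4.ne', mul_one]
  -- frontier for Q
  have hfrontQ : ∀ x, x ∉ Set.range Q → Q x ∈ frontier (Set.range Q) := by
    intro x hx
    rw [hrangeQ] at hx ⊢
    rw [(isClosed_cone2 hc1).frontier_eq, mem_diff]
    refine ⟨(master x).1, fun hint => ?_⟩
    obtain ⟨hs1, hs2⟩ := interior_strict hc1 hint
    rcases hcover x with h | h | h | h
    · exact hx h
    · obtain ⟨l, m, hl, hm, rfl⟩ := h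
      rw [hQ2 l m hl hm] at hs1
      rw [cr_def] at hs1; simp at hs1; nlinarith
    · rw [hQ3 x h] at hs1
      rw [cr_def] at hs1; simp at hs1
    · obtain ⟨l, m, hl, hm, rfl⟩ := h
      rw [show l • u₂ + m • e₁ = m • e₁ + l • u₂ from add_comm _ _, hQ4 m l hm hl] at hs2
      rw [cr_def] at hs2; simp at hs2; nlinarith
  -- frontier for R
  have hfrontR : ∀ x, x ∉ Set.range (fun x => x - Q x) →
      x - Q x ∈ frontier (Set.range (fun x => x - Q x)) := by
    intro x hx
    rw [hrangeR] at hx ⊢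
    rw [(isClosed_cone2 hc3).frontier_eq, mem_diff]
    refine ⟨(master x).2, fun hint => ?_⟩
    obtain ⟨hs1, hs2⟩ := interior_strict hc3 hint
    rcases hcover x with h | h | h | h
    · rw [hQ1 x h, sub_self] at hs1
      rw [cr_def] at hs1; simp at hs1
    · obtain ⟨l, m, hl, hm, rfl⟩ := h
      rw [hQ2 l m hl hm, add_sub_cancel_left] at hs2
      rw [cr_def] at hs2; simp at hs2; nlinarith
    · exact hx h
    · obtain ⟨l, m, hl, hm, rfl⟩ := h
      rw [show l • u₂ + m • e₁ = m • e₁ + l • u₂ from add_comm _ _, hQ4 m l hm hl,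
        add_sub_cancel_left] at hs1
      rw [cr_def] at hs1; simp at hs1; nlinarith
  -- nontriviality
  have hne1 : Set.range Q ≠ {0} := by
    rw [hrangeQ]
    intro h
    have he : e₁ ∈ cone2 e₁ e₂ := ⟨1, 0, zero_le_one, le_rfl, by simp⟩
    rw [h, mem_singleton_iff] at he
    rw [he] at he₁
    exact absurd he₁.1 (by norm_num)
  have hne3 : Set.range (fun x => x - Q x) ≠ {0} := by
    rw [hrangeR]
    intro h
    have hu : u₁ ∈ cone2 u₁ u₂ := ⟨1, 0, zero_le_one, le_rfl, by simp⟩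
    rw [h, mem_singleton_iff] at hu
    rw [hu] at hu₁
    exact absurd hu₁.1 (by norm_num)
  refine ⟨⟨⟨hQcont, hQhom, hQQ, hne1, ?_, ?_, ?_, hfrontQ⟩,
    ⟨continuous_id.sub hQcont, ?_, ?_, hne3, ?_, ?_, ?_, hfrontR⟩,
    fun x => by dsimp only; module, hQR, fun x => by simp [hQQ]⟩, hrangeQ, hrangeR⟩
  · rw [hrangeQ]; exact isClosed_cone2 hc1
  · rw [hrangeQ]; exact convex_cone2 e₁ e₂
  · rw [hrangeQ]; exact fun t ht y hy => smul_mem_cone2 ht hy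
  · intro t ht x
    simp only [smul_sub, hQhom t ht]
  · intro x
    simp only [hQR x, sub_zero]
  · rw [hrangeR]; exact isClosed_cone2 hc3
  · rw [hrangeR]; exact convex_cone2 u₁ u₂
  · rw [hrangeR]; exact fun t ht y hy => smul_mem_cone2 ht hy
end

section
/- If M and N are transversal closed pointed cones in ℝ², then there exists a unique pair of mutually polar retractions Q and R on ℝ² such that range Q = M and range R = N. -/
open Set

variable {X : Type*} [NormedAddCommGroup X] [NormedSpace ℝ X]

noncomputable section
namespace Stmt3Aux

def dt (x y : ℝ × ℝ) : ℝ := x.1 * y.2 - x.2 * y.1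

lemma cramer (u v x : ℝ × ℝ) : dt u v • x = dt x v • u + dt u x • v := by
  apply Prod.ext <;> simp [dt, Prod.smul_fst, Prod.smul_snd] <;> ring

lemma collinear_of_dt {x y : ℝ × ℝ} (hx : x ≠ 0) (h : dt x y = 0) : ∃ c : ℝ, y = c • x := by
  rcases eq_or_ne x.1 0 with h1 | h1
  · have h2 : x.2 ≠ 0 := by
      intro h2; exact hx (Prod.ext h1 h2)
    refine ⟨y.2 / x.2, ?_⟩
    have : x.1 * y.2 - x.2 * y.1 = 0 := h
    apply Prod.ext
    · simp only [Prod.smul_fst, smul_eq_mul, h1, mul_zero]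
      rcases mul_eq_zero.mp (show x.2 * y.1 = 0 by rw [h1] at this; linarith) with h' | h'
      · exact absurd h' h2
      · exact h'
    · simp only [Prod.smul_snd, smul_eq_mul]; rw [div_mul_cancel₀ _ h2]
  · refine ⟨y.1 / x.1, ?_⟩
    have : x.1 * y.2 - x.2 * y.1 = 0 := h
    apply Prod.ext
    · simp only [Prod.smul_fst, smul_eq_mul]; rw [div_mul_cancel₀ _ h1]
    · simp only [Prod.smul_snd, smul_eq_mul]; rw [div_mul_eq_mul_div, eq_div_iff h1]
      linear_combination this

/-- abstract 2D symplectic form (to be instantiated with `dt` and its flip) -/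
structure Om where
  ω : ℝ × ℝ → ℝ × ℝ → ℝ
  cr : ∀ u v x : ℝ × ℝ, ω u v • x = ω x v • u + ω u x • v
  sl : ∀ (t : ℝ) (x y : ℝ × ℝ), ω (t • x) y = t * ω x y
  sr : ∀ (t : ℝ) (x y : ℝ × ℝ), ω x (t • y) = t * ω x y
  al : ∀ x y z : ℝ × ℝ, ω (x + y) z = ω x z + ω y z
  ar : ∀ x y z : ℝ × ℝ, ω x (y + z) = ω x y + ω x z
  sf : ∀ x : ℝ × ℝ, ω x x = 0
  ctl : ∀ w : ℝ × ℝ, Continuous (fun x => ω x w)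
  col : ∀ x y : ℝ × ℝ, x ≠ 0 → ω x y = 0 → ∃ c : ℝ, y = c • x

namespace Om

variable (O : Om)

lemma swap (x y : ℝ × ℝ) : O.ω y x = - O.ω x y := by
  have h := O.sf (x + y)
  rw [O.al, O.ar, O.ar, O.sf, O.sf] at h
  linarith

lemma zl (y : ℝ × ℝ) : O.ω 0 y = 0 := by
  have := O.sl 0 0 y; simpa using this

lemma zr (y : ℝ × ℝ) : O.ω y 0 = 0 := by
  have := O.sr 0 y 0; simpa using this

lemma ctr (w : ℝ × ℝ) : Continuous (fun x => O.ω w x) := by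
  have : (fun x => O.ω w x) = fun x => - O.ω x w := by
    funext x; rw [O.swap]
  rw [this]
  exact (O.ctl w).neg

lemma plk (a b c x : ℝ × ℝ) :
    O.ω a b * O.ω c x = O.ω x b * O.ω c a + O.ω a x * O.ω c b := by
  have h := congrArg (fun z => O.ω c z) (O.cr a b x)
  simpa [O.sr, O.ar] using h

lemma negl (x y : ℝ × ℝ) : O.ω (-x) y = - O.ω x y := by
  have := O.sl (-1) x y; simpa using this

lemma negr (x y : ℝ × ℝ) : O.ω x (-y) = - O.ω x y := by
  have := O.sr (-1) x y; simpa using this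

lemma subl (x y z : ℝ × ℝ) : O.ω (x - y) z = O.ω x z - O.ω y z := by
  rw [sub_eq_add_neg, O.al, O.negl]; ring

lemma lin (w : ℝ × ℝ) : IsLinearMap ℝ (fun x => O.ω w x) := by
  constructor
  · intro x y; exact O.ar w x y
  · intro c x; exact O.sr c w x

lemma lin' (w : ℝ × ℝ) : IsLinearMap ℝ (fun x => O.ω x w) := by
  constructor
  · intro x y; exact O.al x y w
  · intro c x; exact O.sl c x w

/-- coordinates w.r.t. a basis (u, v) with O.ω u v ≠ 0 -/
lemma coords {u v : ℝ × ℝ} (h : O.ω u v ≠ 0) (x : ℝ × ℝ) :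
    x = (O.ω x v / O.ω u v) • u + (O.ω u x / O.ω u v) • v := by
  have h1 := O.cr u v x
  have h2 : (O.ω u v)⁻¹ • (O.ω u v • x) = (O.ω u v)⁻¹ • (O.ω x v • u + O.ω u x • v) := by
    rw [h1]
  rw [smul_smul, inv_mul_cancel₀ h, one_smul, smul_add, smul_smul, smul_smul] at h2
  conv_lhs => rw [h2]
  congr 1 <;> congr 1 <;> field_simp

end Om

def dtOm : Om where
  ω := dt
  cr := cramer
  sl := by intros; simp [dt, Prod.smul_fst, Prod.smul_snd]; ring
  sr := by intros; simp [dt, Prod.smul_fst, Prod.smul_snd]; ring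
  al := by intros; simp [dt]; ring
  ar := by intros; simp [dt]; ring
  sf := by intros; simp [dt]; ring
  ctl := by intro w; unfold dt; fun_prop
  col := fun x y hx h => collinear_of_dt hx h

def dtOm' : Om where
  ω := fun x y => dt y x
  cr := by
    intro u v x
    have h := cramer v u x
    rw [add_comm] at h
    exact h
  sl := by intros; simp [dt, Prod.smul_fst, Prod.smul_snd]; ring
  sr := by intros; simp [dt, Prod.smul_fst, Prod.smul_snd]; ring
  al := by intros; simp [dt]; ring
  ar := by intros; simp [dt]; ring
  sf := by intros; simp [dt]; ring
  ctl := by intro w; unfold dt; fun_prop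
  col := by
    intro x y hx h
    apply collinear_of_dt hx
    have h' : dt y x = 0 := h
    have : dt x y = - dt y x := by simp [dt]; ring
    rw [this, h', neg_zero]
/-- the retraction formula on one half plane -/
def Fr (O : Om) (u v : ℝ × ℝ) (x : ℝ × ℝ) : ℝ × ℝ :=
  (max (O.ω x v / O.ω u v) 0) • u + (min (O.ω u x / O.ω u v) 0) • v

/-- hypotheses bundle for one half-plane -/
structure Side (O : Om) (M N : Set (ℝ × ℝ)) (d u v : ℝ × ℝ) : Prop where
  hdu : 0 < O.ω d u
  hdv : 0 ≤ O.ω d v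
  huv : 0 < O.ω u v
  huM : u ∈ M
  hvN : v ∈ N
  hdN : -d ∈ N
  hdnN : d ∉ N
  hd0 : d ≠ 0
  hv0 : v ≠ 0
  hMco : ∀ t : ℝ, 0 ≤ t → ∀ x ∈ M, t • x ∈ M
  hNco : ∀ t : ℝ, 0 ≤ t → ∀ x ∈ N, t • x ∈ N
  hNadd : ∀ x ∈ N, ∀ y ∈ N, x + y ∈ N
  hNpt : ∀ x ∈ N, -x ∈ N → x = 0
  hM1 : ∀ x ∈ M, 0 ≤ O.ω d x → 0 ≤ O.ω x u
  hM2 : ∀ x, 0 ≤ O.ω d x → 0 ≤ O.ω x u → x ∈ M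
  hN1 : ∀ x ∈ N, O.ω x v ≤ 0

namespace Side

variable {O : Om} {M N : Set (ℝ × ℝ)} {d u v : ℝ × ℝ} (S : Side O M N d u v)
include S

lemma u0 : u ≠ 0 := by
  intro h
  have := S.hdu
  rw [h, O.zr] at this
  exact lt_irrefl 0 this

lemma D0 : O.ω u v ≠ 0 := ne_of_gt S.huv

lemma coords (x : ℝ × ℝ) :
    x = (O.ω x v / O.ω u v) • u + (O.ω u x / O.ω u v) • v := O.coords S.D0 x

lemma sl_M {x : ℝ × ℝ} (hx : 0 ≤ O.ω d x) (hb : O.ω u x ≤ 0) :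
    x ∈ M ∧ Fr O u v x = x := by
  have hxu : 0 ≤ O.ω x u := by rw [O.swap]; linarith
  have hM : x ∈ M := S.hM2 x hx hxu
  have ha : 0 ≤ O.ω x v := by
    have h := O.plk d u v x
    have h1 : O.ω v d = - O.ω d v := O.swap d v
    have h2 : O.ω v u = - O.ω u v := O.swap u v
    have h3 : O.ω v x = - O.ω x v := O.swap x v
    nlinarith [S.hdu, S.hdv, S.huv]
  refine ⟨hM, ?_⟩
  unfold Fr
  rw [max_eq_left (div_nonneg ha (le_of_lt S.huv)),
    min_eq_left (div_nonpos_of_nonpos_of_nonneg hb (le_of_lt S.huv))]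
  exact (S.coords x).symm

lemma sl_Mid {x : ℝ × ℝ} (hxM : x ∈ M) (hx : 0 ≤ O.ω d x) : Fr O u v x = x := by
  have h := S.hM1 x hxM hx
  have h2 : O.ω u x = - O.ω x u := O.swap x u
  exact (S.sl_M hx (by linarith)).2

lemma sl_ray {x : ℝ × ℝ} (hx : 0 ≤ O.ω d x) (hb : 0 < O.ω u x) :
    Fr O u v x = (max (O.ω x v / O.ω u v) 0) • u := by
  unfold Fr
  rw [min_eq_right (div_nonneg (le_of_lt hb) (le_of_lt S.huv)), zero_smul, add_zero]

lemma sl_FM {x : ℝ × ℝ} (hx : 0 ≤ O.ω d x) : Fr O u v x ∈ M := by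
  rcases le_or_gt (O.ω u x) 0 with hb | hb
  · rw [(S.sl_M hx hb).2]; exact (S.sl_M hx hb).1
  · rw [S.sl_ray hx hb]
    exact S.hMco _ (le_max_right _ 0) u S.huM

lemma sl_Ninter {x : ℝ × ℝ} (hx : 0 ≤ O.ω d x) (hav : O.ω x v < 0) : x ∈ N := by
  have h := O.plk d v u x
  have h1 : O.ω u d = - O.ω d u := O.swap d u
  have hdvpos : 0 < O.ω d v * O.ω u x := by nlinarith [S.hdu, S.huv]
  have hdv0 : 0 < O.ω d v := by
    rcases lt_or_eq_of_le S.hdv with h' | h'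
    · exact h'
    · exfalso; rw [← h'] at hdvpos; simp at hdvpos
  have hDvd : O.ω v (-d) ≠ 0 := by
    rw [O.negr, O.swap]
    simpa using ne_of_gt hdv0
  have hco := O.coords hDvd x
  have e1 : O.ω x (-d) = O.ω d x := by rw [O.negr, O.swap]; ring
  have e2 : O.ω v (-d) = O.ω d v := by rw [O.negr, O.swap]; ring
  rw [e1, e2] at hco
  have hs : 0 ≤ O.ω d x / O.ω d v := div_nonneg hx (le_of_lt hdv0)
  have ht : 0 ≤ O.ω v x / O.ω d v := by
    apply div_nonneg _ (le_of_lt hdv0)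
    rw [O.swap]; linarith
  rw [hco]
  exact S.hNadd _ (S.hNco _ hs v S.hvN) _ (S.hNco _ ht (-d) S.hdN)

lemma sl_N {x : ℝ × ℝ} (hxN : x ∈ N) (hx : 0 ≤ O.ω d x) : Fr O u v x = 0 := by
  have ha : O.ω x v ≤ 0 := S.hN1 x hxN
  have hb : 0 ≤ O.ω u x := by
    rcases lt_or_eq_of_le S.hdv with hdv0 | hdv0
    · have h := O.plk d v u x
      have h1 : O.ω u d = - O.ω d u := O.swap d u
      nlinarith [S.hdu, S.huv]
    · -- degenerate: v parallel to d
      obtain ⟨c, hc⟩ := O.col d v S.hd0 hdv0.symm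
      have hc0 : c ≠ 0 := by
        intro h; rw [h, zero_smul] at hc; exact S.hv0 hc
      have hcneg : c < 0 := by
        rcases lt_or_gt_of_ne hc0 with h | h
        · exact h
        · exfalso
          apply S.hdnN
          have : d = c⁻¹ • v := by rw [hc, smul_smul, inv_mul_cancel₀ hc0, one_smul]
          rw [this]
          exact S.hNco _ (le_of_lt (inv_pos.mpr h)) v S.hvN
      have hxv : O.ω x v = - c * O.ω d x := by rw [hc, O.sr, O.swap]; ring
      have hdx0 : O.ω d x = 0 := by nlinarith
      have hxv0 : O.ω x v = 0 := by rw [hxv, hdx0]; ring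
      by_contra hcon
      push_neg at hcon
      have hco := S.coords x
      rw [hxv0] at hco
      simp only [zero_div, zero_smul, zero_add] at hco
      -- x = (ω u x / D) • v with negative coefficient: pointedness contradiction
      set e := O.ω u x / O.ω u v with he
      have he0 : e < 0 := div_neg_of_neg_of_pos hcon S.huv
      have hxN' : -x ∈ N := by
        rw [hco, ← neg_smul]
        exact S.hNco _ (by linarith) v S.hvN
      have := S.hNpt x hxN hxN'
      rw [this] at hco
      have : e = 0 := by
        by_contra hee
        have : v = 0 := by
          have := congrArg (fun y => e⁻¹ • y) hco
          simpa [smul_smul, inv_mul_cancel₀ hee] using this.symm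
        exact S.hv0 this
      linarith
  unfold Fr
  rw [max_eq_right (div_nonpos_of_nonpos_of_nonneg ha (le_of_lt S.huv)),
    min_eq_right (div_nonneg hb (le_of_lt S.huv))]
  simp

lemma sl_RN {x : ℝ × ℝ} (hx : 0 ≤ O.ω d x) : x - Fr O u v x ∈ N := by
  rcases le_or_gt 0 (O.ω x v) with ha | ha
  · unfold Fr
    rw [max_eq_left (div_nonneg ha (le_of_lt S.huv))]
    set A := O.ω x v / O.ω u v with hA
    set B := O.ω u x / O.ω u v with hB
    have hco : x = A • u + B • v := S.coords x
    have : x - (A • u + (min B 0) • v) = (B - min B 0) • v := by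
      rw [hco, sub_smul]; abel
    rw [this]
    apply S.hNco _ _ v S.hvN
    rcases le_total B 0 with h | h
    · rw [min_eq_left h]; simp
    · rw [min_eq_right h]; simpa using h
  · have hxN := S.sl_Ninter hx ha
    rw [S.sl_N hxN hx, sub_zero]
    exact hxN

lemma sl_frN {x : ℝ × ℝ} (hx : 0 ≤ O.ω d x) (hxN : x ∉ N) :
    ∃ c : ℝ, 0 ≤ c ∧ x - Fr O u v x = c • v := by
  have ha : 0 ≤ O.ω x v := by
    by_contra h
    push_neg at h
    exact hxN (S.sl_Ninter hx h)
  refine ⟨O.ω u x / O.ω u v - min (O.ω u x / O.ω u v) 0, ?_, ?_⟩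
  · rcases le_total (O.ω u x / O.ω u v) 0 with h | h
    · rw [min_eq_left h]; simp
    · rw [min_eq_right h]; simpa using h
  · unfold Fr
    rw [max_eq_left (div_nonneg ha (le_of_lt S.huv))]
    set A := O.ω x v / O.ω u v with hA
    set B := O.ω u x / O.ω u v with hB
    have hco : x = A • u + B • v := S.coords x
    rw [hco, sub_smul]
    abel

lemma sl_glue (c : ℝ) : Fr O u v (c • d) = (max c 0) • d := by
  have ha : O.ω (c • d) v = c * O.ω d v := O.sl c d v
  have hb : O.ω u (c • d) = - c * O.ω d u := by rw [O.sr, O.swap]; ring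
  rcases le_or_gt 0 c with hc | hc
  · unfold Fr
    rw [ha, hb]
    rw [max_eq_left (div_nonneg (by nlinarith [S.hdv]) (le_of_lt S.huv)),
      min_eq_left (div_nonpos_of_nonpos_of_nonneg (by nlinarith [S.hdu]) (le_of_lt S.huv)),
      max_eq_left hc]
    have hco := S.coords (c • d)
    rw [ha, hb] at hco
    exact hco.symm
  · unfold Fr
    rw [ha, hb]
    rw [max_eq_right (div_nonpos_of_nonpos_of_nonneg (by nlinarith [S.hdv]) (le_of_lt S.huv)),
      min_eq_right (div_nonneg (by nlinarith [S.hdu]) (le_of_lt S.huv)),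
      max_eq_right (le_of_lt hc)]
    simp

lemma sl_part {x : ℝ × ℝ} (hx : 0 ≤ O.ω d x) :
    x ∈ M ∨ x ∈ N ∨ (0 ≤ O.ω u x ∧ 0 ≤ O.ω x v) := by
  rcases le_or_gt (O.ω u x) 0 with hb | hb
  · left; exact (S.sl_M hx hb).1
  · rcases le_or_gt 0 (O.ω x v) with ha | ha
    · right; right; exact ⟨le_of_lt hb, ha⟩
    · right; left; exact S.sl_Ninter hx ha

lemma sl_half {x : ℝ × ℝ} (hux : 0 ≤ O.ω u x) (hxv : 0 ≤ O.ω x v) : 0 ≤ O.ω d x := by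
  have hco := congrArg (fun y => O.ω d y) (S.coords x)
  simp only [O.ar, O.sr] at hco
  rw [hco]
  have h1 : 0 ≤ O.ω x v / O.ω u v := div_nonneg hxv (le_of_lt S.huv)
  have h2 : 0 ≤ O.ω u x / O.ω u v := div_nonneg hux (le_of_lt S.huv)
  nlinarith [S.hdu, S.hdv]

lemma sl_MS {x : ℝ × ℝ} (hxM : x ∈ M) (hux : 0 ≤ O.ω u x) (hxv : 0 ≤ O.ω x v) :
    ∃ c : ℝ, 0 ≤ c ∧ x = c • u := by
  have hd := S.sl_half hux hxv
  have h1 := S.hM1 x hxM hd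
  have h2 : O.ω u x = 0 := by rw [O.swap] at h1; linarith
  obtain ⟨c, hc⟩ := O.col u x S.u0 h2
  refine ⟨c, ?_, hc⟩
  have : O.ω x v = c * O.ω u v := by rw [hc, O.sl]
  nlinarith [S.huv]

lemma sl_NS {x : ℝ × ℝ} (hxN : x ∈ N) (hux : 0 ≤ O.ω u x) (hxv : 0 ≤ O.ω x v) :
    ∃ c : ℝ, 0 ≤ c ∧ x = c • v := by
  have h1 := S.hN1 x hxN
  have h2 : O.ω v x = 0 := by rw [O.swap]; linarith
  obtain ⟨c, hc⟩ := O.col v x S.hv0 h2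
  refine ⟨c, ?_, hc⟩
  have : O.ω u x = c * O.ω u v := by rw [hc, O.sr]
  nlinarith [S.huv]

end Side

lemma sl_hom (O : Om) (u v : ℝ × ℝ) {t : ℝ} (ht : 0 ≤ t) (x : ℝ × ℝ) :
    Fr O u v (t • x) = t • Fr O u v x := by
  unfold Fr
  rw [O.sl, O.sr]
  rw [smul_add, smul_smul, smul_smul]
  congr 2
  · rw [mul_div_assoc, mul_max_of_nonneg _ _ ht, mul_zero]
  · rw [mul_div_assoc, mul_min_of_nonneg _ _ ht, mul_zero]

lemma sl_cont (O : Om) (u v : ℝ × ℝ) : Continuous (Fr O u v) := by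
  unfold Fr
  apply Continuous.add
  · refine Continuous.fun_smul ?_ continuous_const
    exact (((O.ctl v).div_const _).max continuous_const)
  · refine Continuous.fun_smul ?_ continuous_const
    exact (((O.ctr u).div_const _).min continuous_const)

lemma preconn_closed {α : Type*} [TopologicalSpace α] {T A B : Set α}
    (hT : IsPreconnected T) (hA : IsClosed A) (hB : IsClosed B)
    (hcov : T ⊆ A ∪ B) (hdisj : T ∩ A ∩ B = ∅) (hne : (T ∩ A).Nonempty) : T ⊆ A := by
  intro x hx
  by_contra hxA
  have hxB : x ∈ B := (hcov hx).resolve_left hxA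
  have h2 : (T ∩ B).Nonempty := ⟨x, hx, hxB⟩
  obtain ⟨y, hyT, hyA, hyB⟩ := (isPreconnected_closed_iff.mp hT) A B hA hB hcov hne h2
  have : y ∈ T ∩ A ∩ B := ⟨⟨hyT, hyA⟩, hyB⟩
  rw [hdisj] at this
  exact this

namespace Side

variable {O : Om} {M N : Set (ℝ × ℝ)} {d u v : ℝ × ℝ} (S : Side O M N d u v)
include S

/-- uniqueness on the wedge between `u` and `v` -/
lemma sl_uniq {w z : ℝ × ℝ} {Q₁ R₁ : ℝ × ℝ → ℝ × ℝ}
    (hQc : Continuous Q₁)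
    (hsum : ∀ x, Q₁ x + R₁ x = x)
    (hQM : ∀ x, Q₁ x ∈ M)
    (hRN : ∀ x, R₁ x ∈ N)
    (hQid : ∀ x ∈ M, Q₁ x = x)
    (hQ0 : ∀ x ∈ N, Q₁ x = 0)
    (hQfr : ∀ x, x ∉ M → O.ω (Q₁ x) u = 0 ∨ O.ω w (Q₁ x) = 0)
    (hRfr : ∀ x, x ∉ N → O.ω v (R₁ x) = 0 ∨ O.ω (R₁ x) z = 0)
    (hwu : 0 < O.ω w u)
    (hvz : 0 ≤ O.ω v z)
    (hN2 : ∀ x ∈ N, O.ω z x ≤ 0)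
    (hzN : z ∈ N) (hz0 : z ≠ 0)
    {x : ℝ × ℝ} (hux : 0 ≤ O.ω u x) (hxv : 0 ≤ O.ω x v) :
    Q₁ x = (O.ω x v / O.ω u v) • u := by
  have hR₁ : ∀ y, R₁ y = y - Q₁ y := fun y => eq_sub_of_add_eq' (hsum y)
  have hRc : Continuous R₁ := by
    have h : R₁ = fun y => y - Q₁ y := funext hR₁
    rw [h]; exact continuous_id.sub hQc
  have claimA : ∀ y : ℝ × ℝ, 0 ≤ O.ω u y → 0 ≤ O.ω y v → O.ω (Q₁ y) u = 0 := by
    have hTconv : Convex ℝ ({y | 0 ≤ O.ω u y} ∩ {y | 0 < O.ω y v}) :=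
      (convex_halfSpace_ge (O.lin u) 0).inter (convex_halfSpace_gt (O.lin' v) 0)
    have hAc : IsClosed {y | O.ω (Q₁ y) u = 0} := isClosed_eq ((O.ctl u).comp hQc) continuous_const
    have hBc : IsClosed {y | O.ω w (Q₁ y) = 0} := isClosed_eq ((O.ctr w).comp hQc) continuous_const
    have hcov : ({y | 0 ≤ O.ω u y} ∩ {y | 0 < O.ω y v}) ⊆
        {y | O.ω (Q₁ y) u = 0} ∪ {y | O.ω w (Q₁ y) = 0} := by
      rintro y ⟨h1, h2⟩
      simp only [Set.mem_setOf_eq] at h1 h2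
      by_cases hyM : y ∈ M
      · obtain ⟨c, hc0, hc⟩ := S.sl_MS hyM h1 (le_of_lt h2)
        left
        show O.ω (Q₁ y) u = 0
        rw [hQid y hyM, hc, O.sl, O.sf, mul_zero]
      by_cases hyN : y ∈ N
      · left
        show O.ω (Q₁ y) u = 0
        rw [hQ0 y hyN, O.zl]
      · exact hQfr y hyM
    have hdisj : ({y | 0 ≤ O.ω u y} ∩ {y | 0 < O.ω y v}) ∩ {y | O.ω (Q₁ y) u = 0}
        ∩ {y | O.ω w (Q₁ y) = 0} = ∅ := by
      ext y
      simp only [Set.mem_inter_iff, Set.mem_setOf_eq, Set.mem_empty_iff_false, iff_false, not_and]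
      rintro ⟨⟨h1, h2⟩, hyA⟩ hyB
      have h3 : O.ω u (Q₁ y) = 0 := by rw [O.swap, hyA, neg_zero]
      obtain ⟨c, hc⟩ := O.col u (Q₁ y) S.u0 h3
      have h4 : c * O.ω w u = 0 := by rw [← O.sr, ← hc]; exact hyB
      have hc0 : c = 0 := by
        rcases mul_eq_zero.mp h4 with h | h
        · exact h
        · exact absurd h (ne_of_gt hwu)
      have hQy0 : Q₁ y = 0 := by rw [hc, hc0, zero_smul]
      have hyN : y ∈ N := by
        have h := hsum y
        rw [hQy0, zero_add] at h
        rw [← h]; exact hRN y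
      have := S.hN1 y hyN
      linarith
    have hne : (({y | 0 ≤ O.ω u y} ∩ {y | 0 < O.ω y v}) ∩ {y | O.ω (Q₁ y) u = 0}).Nonempty := by
      refine ⟨u, ⟨?_, ?_⟩, ?_⟩
      · show 0 ≤ O.ω u u; rw [O.sf]
      · show 0 < O.ω u v; exact S.huv
      · show O.ω (Q₁ u) u = 0; rw [hQid u S.huM, O.sf]
    have hTA := preconn_closed hTconv.isPreconnected hAc hBc hcov hdisj hne
    intro y h1 h2
    rcases lt_or_eq_of_le h2 with h2' | h2'
    · exact hTA ⟨h1, h2'⟩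
    · have h3 : O.ω v y = 0 := by rw [O.swap, ← h2', neg_zero]
      obtain ⟨c, hc⟩ := O.col v y S.hv0 h3
      have hc0 : 0 ≤ c := by
        have h5 : O.ω u y = c * O.ω u v := by rw [hc, O.sr]
        nlinarith [S.huv]
      have hyN : y ∈ N := by rw [hc]; exact S.hNco c hc0 v S.hvN
      rw [hQ0 y hyN, O.zl]
  have claimB : ∀ y : ℝ × ℝ, 0 ≤ O.ω u y → 0 ≤ O.ω y v → O.ω v (R₁ y) = 0 := by
    rcases eq_or_lt_of_le hvz with hdeg | hvz'
    · -- degenerate case: z is a positive multiple of v; N is the ray of v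
      obtain ⟨c, hc⟩ := O.col v z S.hv0 hdeg.symm
      have hcpos : 0 < c := by
        rcases lt_trichotomy c 0 with h | h | h
        · exfalso
          have hzz : -z ∈ N := by
            rw [hc, ← neg_smul]
            exact S.hNco (-c) (by linarith) v S.hvN
          have := S.hNpt z hzN hzz
          exact hz0 this
        · exfalso; apply hz0; rw [hc, h, zero_smul]
        · exact h
      intro y _ _
      have h1 := S.hN1 (R₁ y) (hRN y)
      have h2 := hN2 (R₁ y) (hRN y)
      rw [hc, O.sl] at h2
      have h3 : O.ω v (R₁ y) ≤ 0 := by nlinarith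
      have h4 : O.ω v (R₁ y) = - O.ω (R₁ y) v := O.swap (R₁ y) v
      linarith
    · have hTconv : Convex ℝ ({y | 0 < O.ω u y} ∩ {y | 0 ≤ O.ω y v}) :=
        (convex_halfSpace_gt (O.lin u) 0).inter (convex_halfSpace_ge (O.lin' v) 0)
      have hAc : IsClosed {y | O.ω v (R₁ y) = 0} := isClosed_eq ((O.ctr v).comp hRc) continuous_const
      have hBc : IsClosed {y | O.ω (R₁ y) z = 0} := isClosed_eq ((O.ctl z).comp hRc) continuous_const
      have hcov : ({y | 0 < O.ω u y} ∩ {y | 0 ≤ O.ω y v}) ⊆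
          {y | O.ω v (R₁ y) = 0} ∪ {y | O.ω (R₁ y) z = 0} := by
        rintro y ⟨h1, h2⟩
        simp only [Set.mem_setOf_eq] at h1 h2
        by_cases hyN : y ∈ N
        · obtain ⟨c, hc0, hc⟩ := S.sl_NS hyN (le_of_lt h1) h2
          left
          show O.ω v (R₁ y) = 0
          rw [hR₁ y, hQ0 y hyN, sub_zero, hc, O.sr, O.sf, mul_zero]
        by_cases hyM : y ∈ M
        · exfalso
          obtain ⟨c, hc0, hc⟩ := S.sl_MS hyM (le_of_lt h1) h2
          have : O.ω u y = c * O.ω u u := by rw [hc, O.sr]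
          rw [O.sf, mul_zero] at this
          linarith
        · exact hRfr y hyN
      have hdisj : ({y | 0 < O.ω u y} ∩ {y | 0 ≤ O.ω y v}) ∩ {y | O.ω v (R₁ y) = 0}
          ∩ {y | O.ω (R₁ y) z = 0} = ∅ := by
        ext y
        simp only [Set.mem_inter_iff, Set.mem_setOf_eq, Set.mem_empty_iff_false, iff_false,
          not_and]
        rintro ⟨⟨h1, h2⟩, hyA⟩ hyB
        obtain ⟨c, hc⟩ := O.col v (R₁ y) S.hv0 hyA
        have h4 : c * O.ω v z = 0 := by rw [← O.sl, ← hc]; exact hyB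
        have hc0 : c = 0 := by
          rcases mul_eq_zero.mp h4 with h | h
          · exact h
          · exact absurd h (ne_of_gt hvz')
        have hRy0 : R₁ y = 0 := by rw [hc, hc0, zero_smul]
        have hyM : y ∈ M := by
          have h := hsum y
          rw [hRy0, add_zero] at h
          rw [← h]; exact hQM y
        obtain ⟨c', _, hc'⟩ := S.sl_MS hyM (le_of_lt h1) h2
        have : O.ω u y = c' * O.ω u u := by rw [hc', O.sr]
        rw [O.sf, mul_zero] at this
        linarith
      have hne : (({y | 0 < O.ω u y} ∩ {y | 0 ≤ O.ω y v}) ∩ {y | O.ω v (R₁ y) = 0}).Nonempty := by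
        refine ⟨v, ⟨?_, ?_⟩, ?_⟩
        · show 0 < O.ω u v; exact S.huv
        · show 0 ≤ O.ω v v; rw [O.sf]
        · show O.ω v (R₁ v) = 0
          rw [hR₁ v, hQ0 v S.hvN, sub_zero, O.sf]
      have hTA := preconn_closed hTconv.isPreconnected hAc hBc hcov hdisj hne
      intro y h1 h2
      rcases lt_or_eq_of_le h1 with h1' | h1'
      · exact hTA ⟨h1', h2⟩
      · obtain ⟨c, hc⟩ := O.col u y S.u0 h1'.symm
        have hc0 : 0 ≤ c := by
          have h5 : O.ω y v = c * O.ω u v := by rw [hc, O.sl]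
          nlinarith [S.huv]
        have hyM : y ∈ M := by rw [hc]; exact S.hMco c hc0 u S.huM
        rw [hR₁ y, hQid y hyM, sub_self, O.zr]
  have hA := claimA x hux hxv
  have hB := claimB x hux hxv
  have h3 : O.ω u (Q₁ x) = 0 := by rw [O.swap, hA, neg_zero]
  obtain ⟨c, hc⟩ := O.col u (Q₁ x) S.u0 h3
  obtain ⟨e, he⟩ := O.col v (R₁ x) S.hv0 hB
  have hxs : x = c • u + e • v := by rw [← hc, ← he, hsum x]
  have h5 : O.ω x v = c * O.ω u v := by
    rw [hxs, O.al, O.sl, O.sl, O.sf, mul_zero, add_zero]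
  rw [hc]
  congr 1
  rw [h5, mul_div_assoc, div_self S.D0, mul_one]

end Side

def dot (x y : ℝ × ℝ) : ℝ := x.1 * y.1 + x.2 * y.2

/-- points with vanishing dt against w are not interior points of a set on one side -/
lemma noint {S : Set (ℝ × ℝ)} {w y : ℝ × ℝ} (hS : ∀ x ∈ S, 0 ≤ dt x w) (hw : w ≠ 0)
    (hy : dt y w = 0) : y ∉ interior S := by
  intro hint
  rw [mem_interior_iff_mem_nhds, Metric.mem_nhds_iff] at hint
  obtain ⟨ε, hε, hball⟩ := hint
  set p : ℝ × ℝ := (-w.2, w.1) with hp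
  have hpn : ‖p‖ = ‖w‖ := by
    simp [hp, Prod.norm_def, norm_neg]
    rw [max_comm]
  have hwn : 0 < ‖w‖ := norm_pos_iff.mpr hw
  set δ : ℝ := ε / (2 * ‖w‖) with hδ
  have hδ0 : 0 < δ := by positivity
  have hz : y + δ • p ∈ Metric.ball y ε := by
    simp only [Metric.mem_ball, dist_eq_norm]
    have : y + δ • p - y = δ • p := by abel
    rw [this, norm_smul, hpn]
    simp only [Real.norm_eq_abs, abs_of_pos hδ0, hδ]
    rw [abs_of_pos (by positivity : (0:ℝ) < ε / (2 * ‖w‖)), div_mul_eq_mul_div]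
    rw [div_lt_iff₀ (by positivity)]
    nlinarith
  have h1 := hS _ (hball hz)
  have h2 : dt (y + δ • p) w = δ * (-(w.2^2) - w.1^2) := by
    simp [dt, hy, hp, Prod.smul_fst, Prod.smul_snd] at hy ⊢
    ring_nf
    nlinarith [hy]
  have hw2 : 0 < w.1^2 + w.2^2 := by
    have : w.1 ≠ 0 ∨ w.2 ≠ 0 := by
      by_contra hc
      push_neg at hc
      exact hw (Prod.ext hc.1 hc.2)
    rcases this with h | h <;>
      nlinarith [sq_nonneg w.1, sq_nonneg w.2, mul_self_pos.mpr h]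
  rw [h2] at h1
  nlinarith

/-- scalar monotonicity fact -/
lemma mono_scalar {s s' c c' k : ℝ} (hs : 0 ≤ s) (hs' : 0 ≤ s') (hc : c ≤ c')
    (h1 : s^2 + c^2 = k) (h2 : s'^2 + c'^2 = k) : 0 ≤ s * c' - s' * c := by
  rcases le_or_gt 0 c with h | h
  · have : s' ≤ s := by nlinarith
    nlinarith
  · rcases le_or_gt 0 c' with h' | h'
    · nlinarith
    · have : s ≤ s' := by nlinarith
      nlinarith

/-- Lagrange-type identity -/
lemma lagrange (d p : ℝ × ℝ) : (dt d p)^2 + (dot d p)^2 = (dot d d) * (dot p p) := by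
  simp [dt, dot]; ring

lemma dtdot (d p q : ℝ × ℝ) :
    (dot d d) * dt q p = dt d p * dot d q - dot d p * dt d q := by
  simp [dt, dot]; ring

/-- the key monotonicity lemma: among unit vectors in the upper half plane w.r.t. d,
    smaller inner product with d means larger angle -/
lemma mono {d p q : ℝ × ℝ} (hd : d ≠ 0) (hp : dot p p = 1) (hq : dot q q = 1)
    (hdp : 0 ≤ dt d p) (hdq : 0 ≤ dt d q) (h : dot d p ≤ dot d q) : 0 ≤ dt q p := by
  have hk : 0 < dot d d := by
    have : d.1 ≠ 0 ∨ d.2 ≠ 0 := by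
      by_contra hc; push_neg at hc; exact hd (Prod.ext hc.1 hc.2)
    rcases this with h | h <;>
      simp only [dot] <;> nlinarith [sq_nonneg d.1, sq_nonneg d.2, mul_self_pos.mpr h]
  have l1 := lagrange d p
  have l2 := lagrange d q
  rw [hp, mul_one] at l1
  rw [hq, mul_one] at l2
  have key := mono_scalar hdp hdq h l1 l2
  have id := dtdot d p q
  nlinarith


lemma mono' {d p q : ℝ × ℝ} (hd : d ≠ 0) (hp : dot p p = 1) (hq : dot q q = 1)
    (hdp : 0 ≤ dt p d) (hdq : 0 ≤ dt q d) (h : dot d p ≤ dot d q) : 0 ≤ dt p q := by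
  have hCd : (⟨d.1, -d.2⟩ : ℝ × ℝ) ≠ 0 := by
    intro hc
    apply hd
    have h1 : d.1 = (0:ℝ) := congrArg Prod.fst hc
    have h2 : -d.2 = (0:ℝ) := congrArg Prod.snd hc
    have h3 : d.2 = (0:ℝ) := by linarith
    exact Prod.ext h1 h3
  have key := mono (d := (d.1, -d.2)) (p := (p.1, -p.2)) (q := (q.1, -q.2)) hCd
    (by simp [dot] at hp ⊢; linarith) (by simp [dot] at hq ⊢; linarith)
    (by simp [dt] at hdp ⊢; linarith) (by simp [dt] at hdq ⊢; linarith)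
    (by simp [dot] at h ⊢; linarith)
  simp only [dt] at key ⊢
  linarith

lemma dot_pos {x : ℝ × ℝ} (hx : x ≠ 0) : 0 < dot x x := by
  have : x.1 ≠ 0 ∨ x.2 ≠ 0 := by
    by_contra hc; push_neg at hc; exact hx (Prod.ext hc.1 hc.2)
  rcases this with h | h <;>
    simp only [dot] <;> nlinarith [sq_nonneg x.1, sq_nonneg x.2, mul_self_pos.mpr h]

lemma unit_ne_zero {x : ℝ × ℝ} (hx : dot x x = 1) : x ≠ 0 := by
  intro h
  rw [h] at hx
  simp [dot] at hx

lemma normalize {x : ℝ × ℝ} (hx : x ≠ 0) : ∃ c : ℝ, 0 < c ∧ dot (c • x) (c • x) = 1 := by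
  have h := dot_pos hx
  refine ⟨(Real.sqrt (dot x x))⁻¹, inv_pos.mpr (Real.sqrt_pos.mpr h), ?_⟩
  have hs : Real.sqrt (dot x x) ^ 2 = dot x x := Real.sq_sqrt (le_of_lt h)
  have hs0 : Real.sqrt (dot x x) ≠ 0 := ne_of_gt (Real.sqrt_pos.mpr h)
  simp only [dot, Prod.smul_fst, Prod.smul_snd, smul_eq_mul] at *
  field_simp
  simp only [← sq] at hs h
  rw [hs]
  exact div_self (ne_of_gt h)

lemma dot_smul_right (t : ℝ) (x y : ℝ × ℝ) : dot x (t • y) = t * dot x y := by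
  simp [dot, Prod.smul_fst, Prod.smul_snd]; ring

lemma dot_smul_left (t : ℝ) (x y : ℝ × ℝ) : dot (t • x) y = t * dot x y := by
  simp [dot, Prod.smul_fst, Prod.smul_snd]; ring

lemma dt_smul_left (t : ℝ) (x y : ℝ × ℝ) : dt (t • x) y = t * dt x y := by
  simp [dt, Prod.smul_fst, Prod.smul_snd]; ring

lemma dt_smul_right (t : ℝ) (x y : ℝ × ℝ) : dt x (t • y) = t * dt x y := by
  simp [dt, Prod.smul_fst, Prod.smul_snd]; ring

lemma dt_self (x : ℝ × ℝ) : dt x x = 0 := by simp [dt]; ring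

lemma dt_neg_right (x y : ℝ × ℝ) : dt x (-y) = - dt x y := by simp [dt]; ring

lemma cone_add {C : Set (ℝ × ℝ)} (hconv : Convex ℝ C)
    (hcone : ∀ t : ℝ, 0 ≤ t → ∀ x ∈ C, t • x ∈ C) :
    ∀ x ∈ C, ∀ y ∈ C, x + y ∈ C := by
  intro x hx y hy
  have h := hconv hx hy (by norm_num : (0:ℝ) ≤ (1:ℝ)/2) (by norm_num : (0:ℝ) ≤ (1:ℝ)/2)
    (by norm_num)
  have h2 := hcone 2 (by norm_num) _ h
  have heq : (2:ℝ) • (((1:ℝ)/2) • x + ((1:ℝ)/2) • y) = x + y := by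
    rw [smul_add, smul_smul, smul_smul]
    norm_num
  rwa [heq] at h2

lemma argmin_dot (C : Set (ℝ × ℝ)) (hCc : IsClosed C) (f : ℝ × ℝ → ℝ) (hf : Continuous f)
    {p0 d : ℝ × ℝ} (hp0 : p0 ∈ C) (hdp0 : 0 ≤ dt d p0) (hu : dot p0 p0 = 1) :
    ∃ m, m ∈ C ∧ 0 ≤ dt d m ∧ dot m m = 1 ∧
      ∀ x, x ∈ C → 0 ≤ dt d x → dot x x = 1 → f m ≤ f x := by
  set K := C ∩ {x | 0 ≤ dt d x} ∩ {x | dot x x = 1} with hK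
  have hKc : IsClosed K := by
    apply IsClosed.inter
    apply IsClosed.inter hCc
    · exact isClosed_le continuous_const (by unfold dt; fun_prop)
    · exact isClosed_eq (by unfold dot; fun_prop) continuous_const
  have hKb : K ⊆ Metric.closedBall 0 1 := by
    rintro x ⟨_, hx⟩
    simp only [Set.mem_setOf_eq] at hx
    simp only [Metric.mem_closedBall, dist_zero_right, Prod.norm_def]
    simp only [dot] at hx
    apply max_le <;> rw [Real.norm_eq_abs] <;> apply abs_le.mpr <;> constructor <;> nlinarith
  have hKcomp : IsCompact K :=
    (isCompact_closedBall (0 : ℝ × ℝ) 1).of_isClosed_subset hKc hKb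
  have hKne : K.Nonempty := ⟨p0, ⟨hp0, hdp0⟩, hu⟩
  obtain ⟨m, hmK, hmin⟩ := hKcomp.exists_isMinOn hKne hf.continuousOn
  obtain ⟨⟨hm1, hm2⟩, hm3⟩ := hmK
  refine ⟨m, hm1, hm2, hm3, ?_⟩
  intro x hx1 hx2 hx3
  exact hmin ⟨⟨hx1, hx2⟩, hx3⟩

lemma cross (O : Om) {N : Set (ℝ × ℝ)}
    (hNcone : ∀ t : ℝ, 0 ≤ t → ∀ x ∈ N, t • x ∈ N)
    (hNadd : ∀ x ∈ N, ∀ y ∈ N, x + y ∈ N)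
    {d : ℝ × ℝ} (hd0 : d ≠ 0) (hdnN : d ∉ N)
    {x g : ℝ × ℝ} (hx : x ∈ N) (hg : g ∈ N) (hg0 : g ≠ 0)
    (hdx : O.ω d x < 0) (hdg : 0 ≤ O.ω d g) : O.ω x g ≤ 0 := by
  rcases eq_or_lt_of_le hdg with hdg0 | hdgpos
  · obtain ⟨lam, hlam⟩ := O.col d g hd0 hdg0.symm
    rcases lt_trichotomy lam 0 with h | h | h
    · have h1 : O.ω x g = lam * O.ω x d := by rw [hlam, O.sr]
      rw [h1]
      have h2 : O.ω x d = - O.ω d x := O.swap d x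
      nlinarith
    · exfalso; apply hg0; rw [hlam, h, zero_smul]
    · exfalso
      apply hdnN
      have hh : d = lam⁻¹ • g := by rw [hlam, smul_smul, inv_mul_cancel₀ (ne_of_gt h), one_smul]
      rw [hh]
      exact hNcone _ (le_of_lt (inv_pos.mpr h)) g hg
  · by_contra hcon
    push_neg at hcon
    set y := (O.ω d g) • x + (-(O.ω d x)) • g with hy
    have hyN : y ∈ N :=
      hNadd _ (hNcone _ (le_of_lt hdgpos) x hx) _ (hNcone _ (by linarith) g hg)
    have hdy : O.ω d y = 0 := by
      rw [hy, O.ar, O.sr, O.sr]; ring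
    obtain ⟨c, hc⟩ := O.col d y hd0 hdy
    have hc0 : c ≤ 0 := by
      by_contra hcpos
      push_neg at hcpos
      apply hdnN
      have hh : d = c⁻¹ • y := by rw [hc, smul_smul, inv_mul_cancel₀ (ne_of_gt hcpos), one_smul]
      rw [hh]
      exact hNcone _ (le_of_lt (inv_pos.mpr hcpos)) y hyN
    have h1 : O.ω y g = O.ω d g * O.ω x g := by
      rw [hy, O.al, O.sl, O.sl, O.sf]; ring
    have h2 : O.ω y g = c * O.ω d g := by rw [hc, O.sl]
    nlinarith

lemma dtOm_ω : dtOm.ω = dt := rfl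

lemma mem_of_coords (O : Om) {C : Set (ℝ × ℝ)}
    (hadd : ∀ x ∈ C, ∀ y ∈ C, x + y ∈ C)
    (hcone : ∀ t : ℝ, 0 ≤ t → ∀ x ∈ C, t • x ∈ C)
    {a b : ℝ × ℝ} (ha : a ∈ C) (hb : b ∈ C) (hab : 0 < O.ω a b) :
    ∀ x, 0 ≤ O.ω x b → 0 ≤ O.ω a x → x ∈ C := by
  intro x h1 h2
  rw [O.coords (ne_of_gt hab) x]
  exact hadd _ (hcone _ (div_nonneg h1 hab.le) a ha) _ (hcone _ (div_nonneg h2 hab.le) b hb)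

lemma interior_side {M : Set (ℝ × ℝ)} {d : ℝ × ℝ} (hd0 : d ≠ 0)
    (hdint : d ∈ interior M) (σ : ℝ) (hσ : σ = 1 ∨ σ = -1) :
    ∃ w, w ∈ M ∧ 0 < σ * dt d w ∧ dot d w = dot d d := by
  rw [mem_interior_iff_mem_nhds, Metric.mem_nhds_iff] at hdint
  obtain ⟨ε, hε, hball⟩ := hdint
  have hdd := dot_pos hd0
  have hdn : 0 < ‖d‖ := norm_pos_iff.mpr hd0
  set δ : ℝ := ε / (2 * ‖d‖) with hδ
  have hδ0 : 0 < δ := by positivity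
  set jd : ℝ × ℝ := (-d.2, d.1) with hjd
  set w : ℝ × ℝ := d + (δ * σ) • jd with hw
  have hjnorm : ‖jd‖ = ‖d‖ := by
    simp [hjd, Prod.norm_def, norm_neg]
    rw [max_comm]
  have hσ1 : |σ| = 1 := by rcases hσ with h | h <;> rw [h] <;> norm_num
  have hwball : w ∈ Metric.ball d ε := by
    simp only [Metric.mem_ball, dist_eq_norm, hw]
    have h0 : d + (δ * σ) • jd - d = (δ * σ) • jd := by abel
    rw [h0, norm_smul, hjnorm, Real.norm_eq_abs, abs_mul, abs_of_pos hδ0, hσ1, mul_one, hδ]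
    rw [div_mul_eq_mul_div, div_lt_iff₀ (by positivity)]
    nlinarith
  refine ⟨w, hball hwball, ?_, ?_⟩
  · have h1 : dt d w = δ * σ * dot d d := by
      simp [hw, hjd, dt, dot, Prod.smul_fst, Prod.smul_snd]
      ring
    rw [h1]
    have h2 : σ * (δ * σ * dot d d) = δ * (σ * σ) * dot d d := by ring
    rw [h2]
    have hσ2 : σ * σ = 1 := by rcases hσ with h | h <;> rw [h] <;> norm_num
    rw [hσ2]
    nlinarith
  · simp [hw, hjd, dot, Prod.smul_fst, Prod.smul_snd]
    ring

lemma strict_core {d m nw : ℝ × ℝ} {c : ℝ} (hd0 : d ≠ 0) (hm : m = c • d) (hc : 0 < c)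
    (hm1 : dot m m = 1) (hnw1 : dot nw nw = 1) (hmin : dot d m ≤ dot d nw)
    (hnw : dt d nw ≠ 0) : False := by
  have hdd := dot_pos hd0
  have hL := lagrange d nw
  rw [hnw1, mul_one] at hL
  have h1 : dot d m = c * dot d d := by rw [hm, dot_smul_right]
  have h2 : dot m m = c * c * dot d d := by
    rw [hm]
    simp [dot, Prod.smul_fst, Prod.smul_snd]
    ring
  rw [hm1] at h2
  have h3 : 0 < dot d m := by rw [h1]; exact mul_pos hc hdd
  have h4 : dot d m * dot d m ≤ dot d nw * dot d nw := mul_self_le_mul_self h3.le hmin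
  have h5 : 0 < dt d nw * dt d nw := mul_self_pos.mpr hnw
  nlinarith [h1, h2, hL, h4, h5]

lemma build_uM {M : Set (ℝ × ℝ)} (hMc : IsClosed M)
    (hMcone : ∀ t : ℝ, 0 ≤ t → ∀ x ∈ M, t • x ∈ M)
    (hMpt : ∀ x ∈ M, -x ∈ M → x = 0)
    {d : ℝ × ℝ} (hd0 : d ≠ 0) (hdint : d ∈ interior M) (σ : ℝ) (hσ : σ = 1 ∨ σ = -1) :
    ∃ u, u ∈ M ∧ dot u u = 1 ∧ 0 < σ * dt d u ∧
      (∀ x ∈ M, 0 ≤ σ * dt d x → 0 ≤ σ * dt x u) := by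
  have hdM : d ∈ M := interior_subset hdint
  have hsd : (σ • d : ℝ × ℝ) ≠ 0 := by
    rcases hσ with h1 | h1 <;> rw [h1] <;> simpa using hd0
  obtain ⟨cd, hcd, hcdu⟩ := normalize hd0
  have hp0 : cd • d ∈ M := hMcone cd hcd.le d hdM
  have hdp0 : 0 ≤ dt (σ • d) (cd • d) := by
    rw [dt_smul_left, dt_smul_right, dt_self, mul_zero, mul_zero]
  obtain ⟨u, huM, hdu, huu, humin⟩ :=
    argmin_dot M hMc (fun x => dot d x) (by unfold dot; fun_prop) hp0 hdp0 hcdu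
  have hdu' : 0 ≤ σ * dt d u := by
    have h := dt_smul_left σ d u
    linarith [h ▸ hdu]
  have hkey : ∀ x ∈ M, 0 ≤ σ * dt d x → 0 ≤ σ * dt x u := by
    intro x hxM hxd
    rcases eq_or_ne x 0 with rfl | hx0
    · simp [dt]
    obtain ⟨cx, hcx, hcxu⟩ := normalize hx0
    have hx1 : cx • x ∈ M := hMcone cx hcx.le x hxM
    have hx2 : 0 ≤ dt (σ • d) (cx • x) := by
      rw [dt_smul_left, dt_smul_right]
      nlinarith
    have hmin := humin _ hx1 hx2 hcxu
    have hsdu : 0 ≤ dt (σ • d) u := hdu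
    have edotu : dot (σ • d) u = σ * dot d u := dot_smul_left σ d u
    have edotx : dot (σ • d) (cx • x) = σ * (cx * dot d x) := by
      rw [dot_smul_left, dot_smul_right]
    have edottx : dot d (cx • x) = cx * dot d x := dot_smul_right cx d x
    rcases hσ with h1 | h1
    · have hmono := mono (d := σ • d) (p := u) (q := cx • x) hsd huu hcxu hsdu hx2 (by
        rw [edotu, edotx, h1, one_mul, one_mul, ← edottx]
        exact hmin)
      have h3 : dt (cx • x) u = cx * dt x u := dt_smul_left cx x u
      rw [h3] at hmono
      rw [h1, one_mul] at *
      nlinarith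
    · have hmono := mono (d := σ • d) (p := cx • x) (q := u) hsd hcxu huu hx2 hsdu (by
        rw [edotu, edotx, h1, ← edottx]
        nlinarith [hmin])
      have h3 : dt u (cx • x) = cx * dt u x := dt_smul_right cx u x
      rw [h3] at hmono
      have h4 : dt u x = - dt x u := by simp only [dt, Prod.fst_neg, Prod.snd_neg]; ring
      rw [h1] at *
      nlinarith
  refine ⟨u, huM, huu, ?_, hkey⟩
  rcases eq_or_lt_of_le hdu' with heq | h
  · exfalso
    have hσ2 : σ * σ = 1 := by rcases hσ with h | h <;> rw [h] <;> norm_num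
    have hdu0 : dt d u = 0 := by
      have h2 : σ * (σ * dt d u) = dt d u := by rw [← mul_assoc, hσ2, one_mul]
      rw [← h2, ← heq, mul_zero]
    obtain ⟨c, hc⟩ := collinear_of_dt hd0 hdu0
    have hcpos : 0 < c := by
      rcases lt_trichotomy c 0 with h' | h' | h'
      · exfalso
        have hmu : -u ∈ M := by
          rw [hc, ← neg_smul]
          exact hMcone (-c) (by linarith) d hdM
        have := hMpt u huM hmu
        exact unit_ne_zero huu this
      · exfalso
        apply unit_ne_zero huu
        rw [hc, h', zero_smul]
      · exact h'
    obtain ⟨w, hwM, hw1, hw2⟩ := interior_side hd0 hdint σ hσ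
    have hw0 : w ≠ 0 := by
      intro h'
      rw [h'] at hw2
      simp only [dot] at hw2
      have hdd := dot_pos hd0
      simp only [dot] at hdd
      simp at hw2
      nlinarith
    obtain ⟨cw, hcw, hcwu⟩ := normalize hw0
    have hw3 : cw • w ∈ M := hMcone cw hcw.le w hwM
    have hw4 : 0 ≤ dt (σ • d) (cw • w) := by
      rw [dt_smul_left, dt_smul_right]
      nlinarith
    have hmin := humin _ hw3 hw4 hcwu
    have hdtnw : dt d (cw • w) ≠ 0 := by
      rw [dt_smul_right]
      intro h'
      rcases mul_eq_zero.mp h' with h'' | h''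
      · exact (ne_of_gt hcw) h''
      · rw [h'', mul_zero] at hw1
        exact lt_irrefl 0 hw1
    exact strict_core hd0 hc hcpos huu hcwu hmin hdtnw
  · exact h

lemma build_vN {N : Set (ℝ × ℝ)} (hNc : IsClosed N)
    (hNcone : ∀ t : ℝ, 0 ≤ t → ∀ x ∈ N, t • x ∈ N)
    (hNadd : ∀ x ∈ N, ∀ y ∈ N, x + y ∈ N)
    {d : ℝ × ℝ} (hd0 : d ≠ 0) (hdN : -d ∈ N) (hdnN : d ∉ N) (σ : ℝ) (hσ : σ = 1 ∨ σ = -1) :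
    ∃ v, v ∈ N ∧ dot v v = 1 ∧ 0 ≤ σ * dt d v ∧
      (∀ x ∈ N, σ * dt x v ≤ 0) := by
  have hsd : (σ • d : ℝ × ℝ) ≠ 0 := by
    rcases hσ with h1 | h1 <;> rw [h1] <;> simpa using hd0
  have hnd0 : (-d : ℝ × ℝ) ≠ 0 := neg_ne_zero.mpr hd0
  obtain ⟨cd, hcd, hcdu⟩ := normalize hnd0
  have hp0 : cd • (-d) ∈ N := hNcone cd hcd.le (-d) hdN
  have hdp0 : 0 ≤ dt (σ • d) (cd • (-d)) := by
    rw [dt_smul_left, dt_smul_right, dt_neg_right, dt_self]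
    ring_nf
    exact le_refl 0
  obtain ⟨v, hvN, hdv, hvv, hvmin⟩ :=
    argmin_dot N hNc (fun x => -(dot d x)) (by unfold dot; fun_prop) hp0 hdp0 hcdu
  have hdv' : 0 ≤ σ * dt d v := by
    have h := dt_smul_left σ d v
    linarith [h ▸ hdv]
  refine ⟨v, hvN, hvv, hdv', ?_⟩
  intro x hxN
  rcases eq_or_ne x 0 with rfl | hx0
  · simp [dt]
  rcases le_or_gt 0 (σ * dt d x) with hxd | hxd
  · obtain ⟨cx, hcx, hcxu⟩ := normalize hx0
    have hx1 : cx • x ∈ N := hNcone cx hcx.le x hxN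
    have hx2 : 0 ≤ dt (σ • d) (cx • x) := by
      rw [dt_smul_left, dt_smul_right]
      nlinarith
    have hmin := hvmin _ hx1 hx2 hcxu
    have hsdv : 0 ≤ dt (σ • d) v := hdv
    have edottx : dot d (cx • x) = cx * dot d x := dot_smul_right cx d x
    have edotu : dot (σ • d) v = σ * dot d v := dot_smul_left σ d v
    have edotx : dot (σ • d) (cx • x) = σ * (cx * dot d x) := by
      rw [dot_smul_left, dot_smul_right]
    rcases hσ with h1 | h1
    · have hmono := mono (d := σ • d) (p := cx • x) (q := v) hsd hcxu hvv hx2 hsdv (by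
        rw [edotu, edotx, h1, one_mul, one_mul, ← edottx]
        linarith [hmin])
      have h3 : dt v (cx • x) = cx * dt v x := dt_smul_right cx v x
      have h4 : dt v x = - dt x v := by simp only [dt, Prod.fst_neg, Prod.snd_neg]; ring
      rw [h3] at hmono
      rw [h1] at *
      nlinarith
    · have hmono := mono (d := σ • d) (p := v) (q := cx • x) hsd hvv hcxu hsdv hx2 (by
        rw [edotu, edotx, h1, ← edottx]
        nlinarith [hmin])
      have h3 : dt (cx • x) v = cx * dt x v := dt_smul_left cx x v
      rw [h3] at hmono
      rw [h1] at *
      nlinarith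
  · have hv0 : v ≠ 0 := unit_ne_zero hvv
    rcases hσ with h1 | h1
    · rw [h1, one_mul] at hxd hdv' ⊢
      exact cross dtOm hNcone hNadd hd0 hdnN hxN hvN hv0 hxd hdv'
    · rw [h1] at hxd hdv' ⊢
      have hxd' : dtOm'.ω d x < 0 := by
        show dt x d < 0
        have h2 : dt x d = - dt d x := by simp only [dt, Prod.fst_neg, Prod.snd_neg]; ring
        nlinarith
      have hdg : 0 ≤ dtOm'.ω d v := by
        show 0 ≤ dt v d
        have h2 : dt v d = - dt d v := by simp only [dt, Prod.fst_neg, Prod.snd_neg]; ring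
        nlinarith
      have hcr := cross dtOm' hNcone hNadd hd0 hdnN hxN hvN hv0 hxd' hdg
      have h2 : dtOm'.ω x v = dt v x := rfl
      have h3 : dt v x = - dt x v := by simp only [dt, Prod.fst_neg, Prod.snd_neg]; ring
      rw [h2, h3] at hcr
      nlinarith

lemma construct {M N : Set (ℝ × ℝ)}
    (hMc : IsClosed M) (hNc : IsClosed N)
    (hMconv : Convex ℝ M) (hNconv : Convex ℝ N)
    (hMcone : ∀ t : ℝ, 0 ≤ t → ∀ x ∈ M, t • x ∈ M)
    (hNcone : ∀ t : ℝ, 0 ≤ t → ∀ x ∈ N, t • x ∈ N)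
    (hMpt : ∀ x ∈ M, -x ∈ M → x = 0) (hNpt : ∀ x ∈ N, -x ∈ N → x = 0)
    (hMN : M ∩ N = {0})
    {d : ℝ × ℝ} (hd0 : d ≠ 0) (hdint : d ∈ interior M) (hdN : -d ∈ N) :
    ∃ u v u' v', Side dtOm M N d u v ∧ Side dtOm' M N d u' v' ∧
      0 < dt u' u ∧ 0 ≤ dt v v' := by
  have hdM : d ∈ M := interior_subset hdint
  have hdisj : ∀ x, x ∈ M → x ∈ N → x = 0 := by
    intro x h1 h2
    have : x ∈ M ∩ N := ⟨h1, h2⟩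
    rw [hMN] at this
    exact this
  have hdnN : d ∉ N := fun h => hd0 (hdisj d hdM h)
  have hMadd := cone_add hMconv hMcone
  have hNadd := cone_add hNconv hNcone
  obtain ⟨u, huM, huu, hdu0, hM1u⟩ := build_uM hMc hMcone hMpt hd0 hdint 1 (Or.inl rfl)
  obtain ⟨u', hu'M, hu'u1, hdu'0, hM1u'⟩ := build_uM hMc hMcone hMpt hd0 hdint (-1) (Or.inr rfl)
  obtain ⟨v, hvN, hvv1, hdv0, hN1v⟩ := build_vN hNc hNcone hNadd hd0 hdN hdnN 1 (Or.inl rfl)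
  obtain ⟨v', hv'N, hv'v1, hdv'0, hN1v'⟩ := build_vN hNc hNcone hNadd hd0 hdN hdnN (-1) (Or.inr rfl)
  have hu0 : u ≠ 0 := unit_ne_zero huu
  have hv0 : v ≠ 0 := unit_ne_zero hvv1
  have hu'0 : u' ≠ 0 := unit_ne_zero hu'u1
  have hv'0 : v' ≠ 0 := unit_ne_zero hv'v1
  have hdu : 0 < dt d u := by linarith
  have hu'd : 0 < dt u' d := by
    have h : dt u' d = - dt d u' := by simp only [dt, Prod.fst_neg, Prod.snd_neg]; ring
    nlinarith
  have hdv : 0 ≤ dt d v := by linarith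
  have hv'd : 0 ≤ dt v' d := by
    have h : dt v' d = - dt d v' := by simp only [dt, Prod.fst_neg, Prod.snd_neg]; ring
    nlinarith
  have hN1p : ∀ x ∈ N, dt x v ≤ 0 := by
    intro x hx; have := hN1v x hx; linarith
  have hN1m : ∀ x ∈ N, dt v' x ≤ 0 := by
    intro x hx
    have h1 := hN1v' x hx
    have h : dt v' x = - dt x v' := by simp only [dt, Prod.fst_neg, Prod.snd_neg]; ring
    nlinarith
  have hM1p : ∀ x ∈ M, 0 ≤ dt d x → 0 ≤ dt x u := by
    intro x hx h; have := hM1u x hx (by linarith); linarith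
  have hM1m : ∀ x ∈ M, 0 ≤ dt x d → 0 ≤ dt u' x := by
    intro x hx h
    have h1 : dt d x = - dt x d := by simp only [dt, Prod.fst_neg, Prod.snd_neg]; ring
    have h2 := hM1u' x hx (by nlinarith)
    have h3 : dt x u' = - dt u' x := by simp only [dt, Prod.fst_neg, Prod.snd_neg]; ring
    nlinarith
  -- huv : 0 < dt u v
  have huv : 0 < dt u v := by
    by_contra h
    push_neg at h
    have h1 : 0 ≤ dt v u := by
      have : dt v u = - dt u v := by simp only [dt, Prod.fst_neg, Prod.snd_neg]; ring
      linarith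
    have hvM : v ∈ M := mem_of_coords dtOm hMadd hMcone hdM huM hdu v h1 hdv
    exact hv0 (hdisj v hvM hvN)
  -- hv'u' : 0 < dt v' u'
  have hv'u' : 0 < dt v' u' := by
    by_contra h
    push_neg at h
    have h1 : 0 ≤ dt u' v' := by
      have : dt u' v' = - dt v' u' := by simp only [dt, Prod.fst_neg, Prod.snd_neg]; ring
      linarith
    have hv'M : v' ∈ M := by
      apply mem_of_coords dtOm' hMadd hMcone hdM hu'M (show 0 < dtOm'.ω d u' from hu'd) v'
      · exact h1
      · exact hv'd
    exact hv'0 (hdisj v' hv'M hv'N)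
  -- hu'u
  have hu'u : 0 < dt u' u := by
    by_contra h
    push_neg at h
    have h1 : 0 ≤ dt (-u) d := by
      have : dt (-u) d = dt d u := by simp only [dt, Prod.fst_neg, Prod.snd_neg]; ring
      linarith
    have h2 : 0 ≤ dt u' (-u) := by
      have : dt u' (-u) = - dt u' u := by simp only [dt, Prod.fst_neg, Prod.snd_neg]; ring
      linarith
    have hmu : -u ∈ M := mem_of_coords dtOm hMadd hMcone hu'M hdM hu'd (-u) h1 h2
    exact hu0 (hMpt u huM hmu)
  -- hvv'
  have hvv' : 0 ≤ dt v v' := by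
    by_contra h
    push_neg at h
    rcases eq_or_lt_of_le hv'd with hdeg | hpos
    · -- v' parallel to d
      have hdv'0' : dt d v' = 0 := by
        have : dt d v' = - dt v' d := by simp only [dt, Prod.fst_neg, Prod.snd_neg]; ring
        rw [this, ← hdeg, neg_zero]
      obtain ⟨lam, hlam⟩ := collinear_of_dt hd0 hdv'0'
      rcases lt_trichotomy lam 0 with hl | hl | hl
      · have : dt v v' = lam * dt v d := by rw [hlam, dt_smul_right]
        have h2 : dt v d = - dt d v := by simp only [dt, Prod.fst_neg, Prod.snd_neg]; ring
        nlinarith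
      · apply hv'0; rw [hlam, hl, zero_smul]
      · apply hdnN
        have hh : d = lam⁻¹ • v' := by
          rw [hlam, smul_smul, inv_mul_cancel₀ (ne_of_gt hl), one_smul]
        rw [hh]
        exact hNcone _ (le_of_lt (inv_pos.mpr hl)) v' hv'N
    · have hab : (0:ℝ) < dtOm'.ω v' (-d) := by
        show 0 < dt (-d) v'
        have : dt (-d) v' = dt v' d := by simp only [dt, Prod.fst_neg, Prod.snd_neg]; ring
        linarith
      have h1 : 0 ≤ dtOm'.ω (-v) (-d) := by
        show 0 ≤ dt (-d) (-v)
        have : dt (-d) (-v) = dt d v := by simp only [dt, Prod.fst_neg, Prod.snd_neg]; ring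
        linarith
      have h2 : 0 ≤ dtOm'.ω v' (-v) := by
        show 0 ≤ dt (-v) v'
        have : dt (-v) v' = - dt v v' := by simp only [dt, Prod.fst_neg, Prod.snd_neg]; ring
        linarith
      have hmv : -v ∈ N := mem_of_coords dtOm' hNadd hNcone hv'N hdN hab (-v) h1 h2
      exact hv0 (hNpt v hvN hmv)
  refine ⟨u, v, u', v', ?_, ?_, hu'u, hvv'⟩
  · exact {
      hdu := hdu
      hdv := hdv
      huv := huv
      huM := huM
      hvN := hvN
      hdN := hdN
      hdnN := hdnN
      hd0 := hd0
      hv0 := hv0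
      hMco := hMcone
      hNco := hNcone
      hNadd := hNadd
      hNpt := hNpt
      hM1 := hM1p
      hM2 := fun x h1 h2 => mem_of_coords dtOm hMadd hMcone hdM huM hdu x h2 h1
      hN1 := hN1p }
  · exact {
      hdu := hu'd
      hdv := hv'd
      huv := hv'u'
      huM := hu'M
      hvN := hv'N
      hdN := show -d ∈ N from hdN
      hdnN := hdnN
      hd0 := hd0
      hv0 := hv'0
      hMco := hMcone
      hNco := hNcone
      hNadd := hNadd
      hNpt := hNpt
      hM1 := hM1m
      hM2 := fun x h1 h2 => mem_of_coords dtOm' hMadd hMcone hdM hu'M hu'd x h2 h1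
      hN1 := hN1m }

lemma dt_anti (x y : ℝ × ℝ) : dt x y = - dt y x := by
  simp only [dt]; ring

lemma dt_add_left (x y z : ℝ × ℝ) : dt (x + y) z = dt x z + dt y z := by
  simp [dt]; ring

lemma dt_add_right (x y z : ℝ × ℝ) : dt x (y + z) = dt x y + dt x z := by
  simp [dt]; ring

lemma dt_continuous (w : ℝ × ℝ) : Continuous (fun x => dt x w) := by
  unfold dt; fun_prop

lemma dt_continuous' (w : ℝ × ℝ) : Continuous (fun x => dt w x) := by
  unfold dt; fun_prop

lemma main {M N : Set (ℝ × ℝ)}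
    (hMc : IsClosed M) (hNc : IsClosed N)
    (hMconv : Convex ℝ M) (hNconv : Convex ℝ N)
    (hMcone : ∀ t : ℝ, 0 ≤ t → ∀ x ∈ M, t • x ∈ M)
    (hNcone : ∀ t : ℝ, 0 ≤ t → ∀ x ∈ N, t • x ∈ N)
    (hMpt : ∀ x ∈ M, -x ∈ M → x = 0) (hNpt : ∀ x ∈ N, -x ∈ N → x = 0)
    (hMN : M ∩ N = {0})
    {d : ℝ × ℝ} (hd0 : d ≠ 0) (hdint : d ∈ interior M) (hdN : -d ∈ N) :
    ∃! p : ((ℝ × ℝ) → ℝ × ℝ) × ((ℝ × ℝ) → ℝ × ℝ),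
      MutuallyPolar p.1 p.2 ∧ Set.range p.1 = M ∧ Set.range p.2 = N := by
  classical
  obtain ⟨u, v, u', v', S1, S2, hu'u, hvv'⟩ :=
    construct hMc hNc hMconv hNconv hMcone hNcone hMpt hNpt hMN hd0 hdint hdN
  have hdM : d ∈ M := interior_subset hdint
  have hMadd := cone_add hMconv hMcone
  have hNadd := cone_add hNconv hNcone
  have hu0 : u ≠ 0 := S1.u0
  have hu'0 : u' ≠ 0 := S2.u0
  have hv0 : v ≠ 0 := S1.hv0
  have hv'0 : v' ≠ 0 := S2.hv0
  have hdu : 0 < dt d u := S1.hdu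
  have hu'd : 0 < dt u' d := S2.hdu
  have hdv : 0 ≤ dt d v := S1.hdv
  have hv'd : 0 ≤ dt v' d := S2.hdv
  have huv : 0 < dt u v := S1.huv
  have hv'u' : 0 < dt v' u' := S2.huv
  set Q : (ℝ × ℝ) → ℝ × ℝ :=
    fun x => if 0 ≤ dt d x then Fr dtOm u v x else Fr dtOm' u' v' x with hQdef
  set R : (ℝ × ℝ) → ℝ × ℝ := fun x => x - Q x with hRdef
  have hside : ∀ x : ℝ × ℝ, ¬ (0 ≤ dt d x) → 0 ≤ dtOm'.ω d x := by
    intro x h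
    push_neg at h
    show 0 ≤ dt x d
    rw [dt_anti]
    linarith
  have hQM : ∀ x, Q x ∈ M := by
    intro x
    by_cases h : 0 ≤ dt d x
    · rw [hQdef]; simp only [if_pos h]; exact S1.sl_FM h
    · rw [hQdef]; simp only [if_neg h]; exact S2.sl_FM (hside x h)
  have hQid : ∀ x ∈ M, Q x = x := by
    intro x hx
    by_cases h : 0 ≤ dt d x
    · rw [hQdef]; simp only [if_pos h]; exact S1.sl_Mid hx h
    · rw [hQdef]; simp only [if_neg h]; exact S2.sl_Mid hx (hside x h)
  have hQ0 : ∀ x ∈ N, Q x = 0 := by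
    intro x hx
    by_cases h : 0 ≤ dt d x
    · rw [hQdef]; simp only [if_pos h]; exact S1.sl_N hx h
    · rw [hQdef]; simp only [if_neg h]; exact S2.sl_N hx (hside x h)
  have hRN : ∀ x, R x ∈ N := by
    intro x
    by_cases h : 0 ≤ dt d x
    · rw [hRdef, hQdef]; simp only [if_pos h]; exact S1.sl_RN h
    · rw [hRdef, hQdef]; simp only [if_neg h]; exact S2.sl_RN (hside x h)
  have hRid : ∀ x ∈ N, R x = x := by
    intro x hx
    rw [hRdef]
    simp only
    rw [hQ0 x hx, sub_zero]
  have hQcont : Continuous Q := by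
    rw [hQdef]
    exact Continuous.if_le (sl_cont dtOm u v) (sl_cont dtOm' u' v') continuous_const
      (dt_continuous' d) (by
        intro x hx
        obtain ⟨c, hc⟩ := collinear_of_dt hd0 hx.symm
        rw [hc, S1.sl_glue c, S2.sl_glue c])
  have hRcont : Continuous R := by
    rw [hRdef]
    exact continuous_id.sub hQcont
  have hQhom : ∀ t : ℝ, 0 ≤ t → ∀ x, Q (t • x) = t • Q x := by
    intro t ht x
    rcases eq_or_lt_of_le ht with rfl | ht'
    · rw [zero_smul]
      have h0 : Q 0 = 0 := by
        have : (0 : ℝ × ℝ) = (0:ℝ) • d := by rw [zero_smul]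
        rw [hQdef]
        simp only
        rw [this]
        have h1 : 0 ≤ dt d ((0:ℝ) • d) := by rw [dt_smul_right, dt_self, mul_zero]
        rw [if_pos h1, S1.sl_glue 0]
        simp
      rw [h0, zero_smul]
    · by_cases h : 0 ≤ dt d x
      · have h2 : 0 ≤ dt d (t • x) := by rw [dt_smul_right]; positivity
        rw [hQdef]; simp only [if_pos h, if_pos h2]
        exact sl_hom dtOm u v ht x
      · have h2 : ¬ (0 ≤ dt d (t • x)) := by
          rw [dt_smul_right]
          push_neg at h ⊢
          exact mul_neg_of_pos_of_neg ht' h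
        rw [hQdef]; simp only [if_neg h, if_neg h2]
        exact sl_hom dtOm' u' v' ht x
  have hQQ : ∀ x, Q (Q x) = Q x := fun x => hQid _ (hQM x)
  have hQR : ∀ x, Q (R x) = 0 := fun x => hQ0 _ (hRN x)
  have hRR : ∀ x, R (R x) = R x := by
    intro x
    conv_lhs => rw [hRdef]
    simp only
    rw [hQR x, sub_zero]
  have hRQ : ∀ x, R (Q x) = 0 := by
    intro x
    rw [hRdef]
    simp only
    rw [hQQ x, sub_self]
  have hsum : ∀ x, Q x + R x = x := by
    intro x
    rw [hRdef]
    simp only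
    abel
  have hrangeQ : Set.range Q = M := by
    ext x
    constructor
    · rintro ⟨y, rfl⟩; exact hQM y
    · intro hx; exact ⟨x, hQid x hx⟩
  have hrangeR : Set.range R = N := by
    ext x
    constructor
    · rintro ⟨y, rfl⟩; exact hRN y
    · intro hx; exact ⟨x, hRid x hx⟩
  -- global characterizations of M
  have hMglob : ∀ y ∈ M, 0 ≤ dt u' y ∧ 0 ≤ dt y u := by
    intro y hy
    by_cases h : 0 ≤ dt d y
    · have h1 : 0 ≤ dt y u := S1.hM1 y hy h
      constructor
      · have hco : y = (dt y u / dt d u) • d + (dt d y / dt d u) • u :=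
          dtOm.coords (ne_of_gt hdu) y
        have h2 : dt u' y = (dt y u / dt d u) * dt u' d + (dt d y / dt d u) * dt u' u := by
          conv_lhs => rw [hco]
          rw [dt_add_right, dt_smul_right, dt_smul_right]
        rw [h2]
        have e1 : 0 ≤ dt y u / dt d u := div_nonneg h1 hdu.le
        have e2 : 0 ≤ dt d y / dt d u := div_nonneg h hdu.le
        nlinarith
      · exact h1
    · have h' := hside y h
      have h1 : 0 ≤ dt u' y := S2.hM1 y hy h'
      refine ⟨h1, ?_⟩
      have hco : y = (dt u' y / dt u' d) • d + (dt y d / dt u' d) • u' :=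
        dtOm'.coords (ne_of_gt (show 0 < dtOm'.ω d u' from hu'd)) y
      have h2 : dt y u = (dt u' y / dt u' d) * dt d u + (dt y d / dt u' d) * dt u' u := by
        conv_lhs => rw [hco]
        rw [dt_add_left, dt_smul_left, dt_smul_left]
      rw [h2]
      have hyd : 0 ≤ dt y d := h'
      have e1 : 0 ≤ dt u' y / dt u' d := div_nonneg h1 (le_of_lt hu'd)
      have e2 : 0 ≤ dt y d / dt u' d := div_nonneg hyd (le_of_lt hu'd)
      nlinarith
  have hNglob : ∀ y ∈ N, 0 ≤ dt v y ∧ 0 ≤ dt y v' := by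
    intro y hy
    have h1 : dt y v ≤ 0 := S1.hN1 y hy
    have h2 : dt v' y ≤ 0 := S2.hN1 y hy
    constructor
    · rw [dt_anti]; linarith
    · rw [dt_anti]; linarith
  -- frontier conditions
  have hQfront : ∀ x, x ∉ M → Q x ∈ frontier M := by
    intro x hx
    rw [hMc.frontier_eq]
    refine ⟨hQM x, ?_⟩
    by_cases h : 0 ≤ dt d x
    · have hb : 0 < dt u x := by
        by_contra h'
        push_neg at h'
        exact hx (S1.sl_M h h').1
      have hray : Q x = (max (dt x v / dt u v) 0) • u := by
        rw [hQdef]; simp only [if_pos h]; exact S1.sl_ray h hb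
      apply noint (fun y hy => (hMglob y hy).2) hu0
      rw [hray, dt_smul_left, dt_self, mul_zero]
    · have h' := hside x h
      have hb : 0 < dtOm'.ω u' x := by
        by_contra h''
        push_neg at h''
        exact hx (S2.sl_M h' h'').1
      have hray : Q x = (max (dtOm'.ω x v' / dtOm'.ω u' v') 0) • u' := by
        rw [hQdef]; simp only [if_neg h]; exact S2.sl_ray h' hb
      apply noint (S := M) (w := -u') (fun y hy => by
        rw [dt_neg_right]
        have := (hMglob y hy).1
        rw [dt_anti] at this
        linarith) (neg_ne_zero.mpr hu'0)
      rw [hray, dt_smul_left, dt_neg_right, dt_self]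
      ring
  have hRfront : ∀ x, x ∉ N → R x ∈ frontier N := by
    intro x hx
    rw [hNc.frontier_eq]
    refine ⟨hRN x, ?_⟩
    by_cases h : 0 ≤ dt d x
    · obtain ⟨c, hc0, hc⟩ := S1.sl_frN h hx
      have hray : R x = c • v := by
        rw [hRdef, hQdef]; simp only [if_pos h]; exact hc
      apply noint (S := N) (w := -v) (fun y hy => by
        rw [dt_neg_right]
        have := S1.hN1 y hy
        have h2 : dtOm.ω y v = dt y v := rfl
        linarith [h2 ▸ this]) (neg_ne_zero.mpr hv0)
      rw [hray, dt_smul_left, dt_neg_right, dt_self]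
      ring
    · obtain ⟨c, hc0, hc⟩ := S2.sl_frN (hside x h) hx
      have hray : R x = c • v' := by
        rw [hRdef, hQdef]; simp only [if_neg h]; exact hc
      apply noint (S := N) (w := v') (fun y hy => (hNglob y hy).2) hv'0
      rw [hray, dt_smul_left, dt_self, mul_zero]
  have hMne : M ≠ ({0} : Set (ℝ × ℝ)) := by
    intro h
    rw [h] at hdM
    exact hd0 hdM
  have hNne : N ≠ ({0} : Set (ℝ × ℝ)) := by
    intro h
    rw [h] at hdN
    simp at hdN
    exact hd0 hdN
  have hretQ : IsRetraction Q := by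
    refine ⟨hQcont, hQhom, hQQ, ?_, ?_, ?_, ?_, ?_⟩ <;> rw [hrangeQ]
    · exact hMne
    · exact hMc
    · exact hMconv
    · exact hMcone
    · exact hQfront
  have hretR : IsRetraction R := by
    refine ⟨hRcont, ?_, hRR, ?_, ?_, ?_, ?_, ?_⟩
    · intro t ht x
      rw [hRdef]
      simp only
      rw [hQhom t ht x, smul_sub]
    all_goals rw [hrangeR]
    · exact hNne
    · exact hNc
    · exact hNconv
    · exact hNcone
    · exact hRfront
  refine ⟨(Q, R), ⟨⟨hretQ, hretR, hsum, hQR, hRQ⟩, hrangeQ, hrangeR⟩, ?_⟩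
  -- uniqueness
  rintro ⟨Q₁, R₁⟩ ⟨hMP, hr1, hr2⟩
  obtain ⟨hret1, hret2, hsum1, hQR1, hRQ1⟩ := hMP
  have hQ₁M : ∀ x, Q₁ x ∈ M := by
    intro x; rw [← hr1]; exact Set.mem_range_self x
  have hR₁N : ∀ x, R₁ x ∈ N := by
    intro x; rw [← hr2]; exact Set.mem_range_self x
  have hQ₁id : ∀ x ∈ M, Q₁ x = x := by
    intro x hx
    rw [← hr1] at hx
    obtain ⟨y, rfl⟩ := hx
    exact hret1.2.2.1 y
  have hR₁id : ∀ x ∈ N, R₁ x = x := by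
    intro x hx
    rw [← hr2] at hx
    obtain ⟨y, rfl⟩ := hx
    exact hret2.2.2.1 y
  have hQ₁0 : ∀ x ∈ N, Q₁ x = 0 := by
    intro x hx
    rw [← hR₁id x hx]
    exact hQR1 x
  have hR₁0 : ∀ x ∈ M, R₁ x = 0 := by
    intro x hx
    rw [← hQ₁id x hx]
    exact hRQ1 x
  -- frontier facts in dt terms
  have hMintsub : {y : ℝ × ℝ | 0 < dt u' y ∧ 0 < dt y u} ⊆ interior M := by
    apply interior_maximal
    · intro y ⟨h1, h2⟩
      exact mem_of_coords dtOm hMadd hMcone S2.huM S1.huM hu'u y h2.le h1.le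
    · exact IsOpen.inter (isOpen_lt continuous_const (dt_continuous' u'))
        (isOpen_lt continuous_const (dt_continuous u))
  have hNintsub : {y : ℝ × ℝ | 0 < dt v y ∧ 0 < dt y v'} ⊆ interior N := by
    apply interior_maximal
    · rcases eq_or_lt_of_le hvv' with hdeg | hpos
      · intro y ⟨h1, h2⟩
        exfalso
        obtain ⟨c, hc⟩ := collinear_of_dt hv0 hdeg.symm
        have hcpos : 0 < c := by
          rcases lt_trichotomy c 0 with h | h | h
          · exfalso
            have hmv : -v' ∈ N := by
              rw [hc, ← neg_smul]
              exact hNcone (-c) (by linarith) v S1.hvN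
            exact hv'0 (hNpt v' S2.hvN hmv)
          · exact absurd (by rw [hc, h, zero_smul]) hv'0
          · exact h
        have e1 : dt y v' = c * dt y v := by rw [hc, dt_smul_right]
        have e2 : dt y v = - dt v y := dt_anti y v
        nlinarith
      · intro y ⟨h1, h2⟩
        exact mem_of_coords dtOm hNadd hNcone S1.hvN S2.hvN hpos y h2.le h1.le
    · exact IsOpen.inter (isOpen_lt continuous_const (dt_continuous' v))
        (isOpen_lt continuous_const (dt_continuous v'))
  have hQ₁fr : ∀ x, x ∉ M → dt (Q₁ x) u = 0 ∨ dt u' (Q₁ x) = 0 := by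
    intro x hx
    have hfr := hret1.2.2.2.2.2.2.2 x (by rw [hr1]; exact hx)
    rw [hr1, hMc.frontier_eq] at hfr
    obtain ⟨hQx, hnint⟩ := hfr
    obtain ⟨h1, h2⟩ := hMglob _ hQx
    by_contra hcon
    push_neg at hcon
    apply hnint
    apply hMintsub
    exact ⟨lt_of_le_of_ne h1 (Ne.symm hcon.2), lt_of_le_of_ne h2 (Ne.symm hcon.1)⟩
  have hR₁fr : ∀ x, x ∉ N → dt v (R₁ x) = 0 ∨ dt (R₁ x) v' = 0 := by
    intro x hx
    have hfr := hret2.2.2.2.2.2.2.2 x (by rw [hr2]; exact hx)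
    rw [hr2, hNc.frontier_eq] at hfr
    obtain ⟨hRx, hnint⟩ := hfr
    obtain ⟨h1, h2⟩ := hNglob _ hRx
    by_contra hcon
    push_neg at hcon
    apply hnint
    apply hNintsub
    exact ⟨lt_of_le_of_ne h1 (Ne.symm hcon.1), lt_of_le_of_ne h2 (Ne.symm hcon.2)⟩
  -- pointwise identification
  have hQeq : Q₁ = Q := by
    funext x
    by_cases hxM : x ∈ M
    · rw [hQ₁id x hxM, hQid x hxM]
    by_cases hxN : x ∈ N
    · rw [hQ₁0 x hxN, hQ0 x hxN]
    by_cases h : 0 ≤ dt d x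
    · rcases S1.sl_part h with hM | hN | ⟨h1, h2⟩
      · exact absurd hM hxM
      · exact absurd hN hxN
      · have huniq := S1.sl_uniq (w := u') (z := v') hret1.1 hsum1 hQ₁M hR₁N hQ₁id hQ₁0
          (fun y hy => hQ₁fr y hy) (fun y hy => hR₁fr y hy) hu'u hvv'
          (fun y hy => by
            have := S2.hN1 y hy
            exact this) S2.hvN hv'0 h1 h2
        have huniq' : Q₁ x = (dtOm.ω x v / dtOm.ω u v) • u := huniq
        rw [huniq', hQdef]
        simp only [if_pos h]
        unfold Fr
        rw [max_eq_left (div_nonneg h2 S1.huv.le), min_eq_right (div_nonneg h1 S1.huv.le),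
          zero_smul, add_zero]
    · have h' := hside x h
      rcases S2.sl_part h' with hM | hN | ⟨h1, h2⟩
      · exact absurd hM hxM
      · exact absurd hN hxN
      · have huniq := S2.sl_uniq (w := u) (z := v) hret1.1 hsum1 hQ₁M hR₁N hQ₁id hQ₁0
          (fun y hy => ((hQ₁fr y hy).symm : _ ∨ _)) (fun y hy => ((hR₁fr y hy).symm : _ ∨ _))
          (show (0:ℝ) < dtOm'.ω u u' from hu'u) (show (0:ℝ) ≤ dtOm'.ω v' v from hvv')
          (fun y hy => by
            have := S1.hN1 y hy
            exact this) S1.hvN hv0 h1 h2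
        have huniq' : Q₁ x = (dtOm'.ω x v' / dtOm'.ω u' v') • u' := huniq
        rw [huniq', hQdef]
        simp only [if_neg h]
        unfold Fr
        rw [max_eq_left (div_nonneg h2 S2.huv.le), min_eq_right (div_nonneg h1 S2.huv.le),
          zero_smul, add_zero]
  have hReq : R₁ = R := by
    funext x
    have h1 : Q₁ x + R₁ x = x := hsum1 x
    rw [hQeq] at h1
    exact eq_sub_of_add_eq' h1
  rw [Prod.ext_iff]
  exact ⟨hQeq, hReq⟩

lemma mp_swap {Q R : (ℝ × ℝ) → ℝ × ℝ} (h : MutuallyPolar Q R) : MutuallyPolar R Q :=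
  ⟨h.2.1, h.1, fun x => by rw [add_comm]; exact h.2.2.1 x, h.2.2.2.2, h.2.2.2.1⟩

lemma zero_not_interior {M : Set (ℝ × ℝ)}
    (hMcone : ∀ t : ℝ, 0 ≤ t → ∀ x ∈ M, t • x ∈ M)
    (hMpt : ∀ x ∈ M, -x ∈ M → x = 0)
    {e : ℝ × ℝ} (heM : e ∈ M) (he0 : e ≠ 0) : (0 : ℝ × ℝ) ∉ interior M := by
  intro h0
  rw [mem_interior_iff_mem_nhds, Metric.mem_nhds_iff] at h0
  obtain ⟨ε, hε, hball⟩ := h0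
  have hen : 0 < ‖e‖ := norm_pos_iff.mpr he0
  set δ : ℝ := ε / (2 * ‖e‖) with hδ
  have hδ0 : 0 < δ := by positivity
  have hmem : δ • (-e) ∈ Metric.ball (0 : ℝ × ℝ) ε := by
    simp only [Metric.mem_ball, dist_zero_right, norm_smul, norm_neg, Real.norm_eq_abs,
      abs_of_pos hδ0, hδ]
    rw [abs_of_pos (by positivity : (0:ℝ) < ε / (2 * ‖e‖)), div_mul_eq_mul_div, div_lt_iff₀ (by positivity)]
    nlinarith
  have h1 : δ • (-e) ∈ M := hball hmem
  have h2 : -e ∈ M := by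
    have := hMcone δ⁻¹ (le_of_lt (inv_pos.mpr hδ0)) _ h1
    rwa [smul_smul, inv_mul_cancel₀ (ne_of_gt hδ0), one_smul] at this
  exact he0 (hMpt e heM h2)

end Stmt3Aux

theorem stmt3 (M N : Set (ℝ × ℝ))
    (hMc : IsClosed M) (hNc : IsClosed N)
    (hMconv : Convex ℝ M) (hNconv : Convex ℝ N)
    (hMcone : ∀ t : ℝ, 0 ≤ t → ∀ x ∈ M, t • x ∈ M)
    (hNcone : ∀ t : ℝ, 0 ≤ t → ∀ x ∈ N, t • x ∈ N)
    (hMp : M ∩ (-M) = {0}) (hNp : N ∩ (-N) = {0})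
    (h : Transversal M N) :
    ∃! p : ((ℝ × ℝ) → ℝ × ℝ) × ((ℝ × ℝ) → ℝ × ℝ),
      MutuallyPolar p.1 p.2 ∧ Set.range p.1 = M ∧ Set.range p.2 = N := by
  classical
  open Stmt3Aux in
  obtain ⟨Δ, hMN, ⟨d₀, hd₀0, hΔ⟩, ⟨e, heΔ, heMd⟩, ⟨f, hfΔ, hfNd⟩, ⟨g, hgΔ, hg⟩⟩ := h
  have heM : e ∈ M := heMd.1
  have he0 : e ≠ 0 := by simpa using heMd.2
  have hfN : f ∈ N := hfNd.1
  have hf0 : f ≠ 0 := by simpa using hfNd.2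
  have hMpt : ∀ x ∈ M, -x ∈ M → x = 0 := by
    intro x h1 h2
    have hx : x ∈ M ∩ (-M) := ⟨h1, by rwa [Set.mem_neg]⟩
    rw [hMp] at hx
    exact hx
  have hNpt : ∀ x ∈ N, -x ∈ N → x = 0 := by
    intro x h1 h2
    have hx : x ∈ N ∩ (-N) := ⟨h1, by rwa [Set.mem_neg]⟩
    rw [hNp] at hx
    exact hx
  have hdisj : ∀ x, x ∈ M → x ∈ N → x = 0 := by
    intro x h1 h2
    have hx : x ∈ M ∩ N := ⟨h1, h2⟩
    rw [hMN] at hx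
    exact hx
  rw [hΔ] at heΔ hfΔ hgΔ
  obtain ⟨a, ha⟩ := Submodule.mem_span_singleton.mp heΔ
  obtain ⟨b, hb⟩ := Submodule.mem_span_singleton.mp hfΔ
  obtain ⟨c, hc⟩ := Submodule.mem_span_singleton.mp hgΔ
  have ha0 : a ≠ 0 := by
    rintro rfl
    rw [zero_smul] at ha
    exact he0 ha.symm
  have hb0 : b ≠ 0 := by
    rintro rfl
    rw [zero_smul] at hb
    exact hf0 hb.symm
  have hab : a * b < 0 := by
    rcases lt_trichotomy (a * b) 0 with h' | h' | h'
    · exact h'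
    · exact absurd h' (mul_ne_zero ha0 hb0)
    · exfalso
      have hba : 0 < b / a := by
        have heq2 : b / a = (a * b) / (a * a) := by
          field_simp
        rw [heq2]
        exact div_pos h' (by nlinarith [mul_self_pos.mpr ha0])
      have hfM : f ∈ M := by
        have hf2 : f = (b / a) • e := by
          rw [← ha, ← hb, smul_smul]
          congr 1
          field_simp
        rw [hf2]
        exact hMcone _ hba.le e heM
      exact hf0 (hdisj f hfM hfN)
  have h0M : (0 : ℝ × ℝ) ∉ interior M := zero_not_interior hMcone hMpt heM he0
  have h0N : (0 : ℝ × ℝ) ∉ interior N := zero_not_interior hNcone hNpt hfN hf0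
  have hc0 : c ≠ 0 := by
    rintro rfl
    rw [zero_smul] at hc
    rcases hg with h' | h' <;> rw [← hc] at h'
    · exact h0M h'
    · exact h0N h'
  have hg0 : g ≠ 0 := by
    rw [← hc]
    exact smul_ne_zero hc0 hd₀0
  rcases hg with hgM | hgN
  · -- g ∈ interior M
    have hgM' : g ∈ M := interior_subset hgM
    have hca : 0 < c * a := by
      rcases lt_trichotomy (c * a) 0 with h' | h' | h'
      · exfalso
        have hmg : -g ∈ M := by
          have h2 : -g = (-(c / a)) • e := by
            rw [← ha, ← hc, smul_smul, ← neg_smul]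
            congr 1
            field_simp
          rw [h2]
          apply hMcone _ _ e heM
          rcases lt_or_gt_of_ne ha0 with h3 | h3
          · have : 0 < c := by nlinarith
            have : c / a < 0 := div_neg_of_pos_of_neg this h3
            linarith
          · have : c < 0 := by nlinarith
            have : c / a < 0 := div_neg_of_neg_of_pos this h3
            linarith
        exact hg0 (hMpt g hgM' hmg)
      · exact absurd h' (mul_ne_zero hc0 ha0)
      · exact h'
    have hgN : -g ∈ N := by
      have h2 : -g = (-(c / b)) • f := by
        rw [← hb, ← hc, smul_smul, ← neg_smul]
        congr 1
        field_simp
      rw [h2]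
      apply hNcone _ _ f hfN
      have hcb : c * b < 0 := by
        nlinarith [mul_neg_of_pos_of_neg hca hab, mul_self_pos.mpr ha0]
      rcases lt_or_gt_of_ne hb0 with h3 | h3
      · have : 0 < c := by nlinarith
        have : c / b < 0 := div_neg_of_pos_of_neg this h3
        linarith
      · have : c < 0 := by nlinarith
        have : c / b < 0 := div_neg_of_neg_of_pos this h3
        linarith
    exact Stmt3Aux.main hMc hNc hMconv hNconv hMcone hNcone hMpt hNpt hMN hg0 hgM hgN
  · -- g ∈ interior N : apply main with roles swapped
    have hgN' : g ∈ N := interior_subset hgN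
    have hcb : 0 < c * b := by
      rcases lt_trichotomy (c * b) 0 with h' | h' | h'
      · exfalso
        have hmg : -g ∈ N := by
          have h2 : -g = (-(c / b)) • f := by
            rw [← hb, ← hc, smul_smul, ← neg_smul]
            congr 1
            field_simp
          rw [h2]
          apply hNcone _ _ f hfN
          rcases lt_or_gt_of_ne hb0 with h3 | h3
          · have : 0 < c := by nlinarith
            have : c / b < 0 := div_neg_of_pos_of_neg this h3
            linarith
          · have : c < 0 := by nlinarith
            have : c / b < 0 := div_neg_of_neg_of_pos this h3
            linarith
        exact hg0 (hNpt g hgN' hmg)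
      · exact absurd h' (mul_ne_zero hc0 hb0)
      · exact h'
    have hgM : -g ∈ M := by
      have h2 : -g = (-(c / a)) • e := by
        rw [← ha, ← hc, smul_smul, ← neg_smul]
        congr 1
        field_simp
      rw [h2]
      apply hMcone _ _ e heM
      have hca : c * a < 0 := by
        nlinarith [mul_neg_of_pos_of_neg hcb hab, mul_self_pos.mpr hb0]
      rcases lt_or_gt_of_ne ha0 with h3 | h3
      · have : 0 < c := by nlinarith
        have : c / a < 0 := div_neg_of_pos_of_neg this h3
        linarith
      · have : c < 0 := by nlinarith
        have : c / a < 0 := div_neg_of_neg_of_pos this h3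
        linarith
    have hNM : N ∩ M = {0} := by rw [Set.inter_comm]; exact hMN
    obtain ⟨p, ⟨hp1, hp2, hp3⟩, hu⟩ :=
      Stmt3Aux.main hNc hMc hNconv hMconv hNcone hMcone hNpt hMpt hNM hg0 hgN hgM
    refine ⟨(p.2, p.1), ⟨Stmt3Aux.mp_swap hp1, hp3, hp2⟩, ?_⟩
    rintro ⟨Q, R⟩ ⟨h1, h2, h3⟩
    have hqq := hu (R, Q) ⟨Stmt3Aux.mp_swap h1, h3, h2⟩
    have e1 : R = p.1 := congrArg Prod.fst hqq
    have e2 : Q = p.2 := congrArg Prod.snd hqq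
    rw [Prod.ext_iff]
    exact ⟨e2, e1⟩
end
end

section
/- Suppose Q and R are mutually polar retractions on a Banach space X with M = range Q, N = range R, dim N = 1, and int M ≠ ∅. Then M and N are transversal cones with transversal line span(N); in particular span(N) ∩ int M ≠ ∅. -/
open Set

variable {X : Type*} [NormedAddCommGroup X] [NormedSpace ℝ X]

theorem stmt5 [CompleteSpace X] (Q R : X → X) (h : MutuallyPolar Q R)
    (hdim : Module.finrank ℝ (Submodule.span ℝ (Set.range R)) = 1)
    (hint : (interior (Set.range Q)).Nonempty) :
    TransversalWith (Set.range Q) (Set.range R) (Submodule.span ℝ (Set.range R)) ∧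
    (((Submodule.span ℝ (Set.range R) : Submodule ℝ X) : Set X) ∩
        interior (Set.range Q)).Nonempty := by
  obtain ⟨hQ, hR, hsum, hQR, hRQ⟩ := h
  obtain ⟨Qcont, Qhom, Qidem, QneZ, Qclosed, Qconv, Qcone, Qfront⟩ := hQ
  obtain ⟨Rcont, Rhom, Ridem, RneZ, Rclosed, Rconv, Rcone, Rfront⟩ := hR
  set M := Set.range Q with hMdef
  set N := Set.range R with hNdef
  have hQ0 : Q 0 = 0 := by simpa using Qhom 0 le_rfl 0
  have hR0 : R 0 = 0 := by simpa using Rhom 0 le_rfl 0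
  have h0M : (0 : X) ∈ M := ⟨0, hQ0⟩
  have h0N : (0 : X) ∈ N := ⟨0, hR0⟩
  -- M ∩ N = {0}
  have hMN : M ∩ N = {0} := by
    ext x
    constructor
    · rintro ⟨⟨a, rfl⟩, ⟨b, hb⟩⟩
      have h1 : Q (Q a) = Q a := Qidem a
      have h2 : Q (Q a) = 0 := by rw [show Q a = R b from hb.symm]; exact hQR b
      simp only [Set.mem_singleton_iff]
      rw [← h1, h2]
    · rintro rfl
      exact ⟨h0M, h0N⟩
  -- a nonzero element of N
  have hNne : ∃ v ∈ N, v ≠ (0 : X) := by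
    by_contra hc
    push_neg at hc
    exact RneZ (Set.eq_singleton_iff_unique_mem.mpr ⟨h0N, fun y hy => hc y hy⟩)
  obtain ⟨v, hvN, hv0⟩ := hNne
  -- span N = span {v}
  have hle : Submodule.span ℝ {v} ≤ Submodule.span ℝ N :=
    Submodule.span_mono (Set.singleton_subset_iff.mpr hvN)
  haveI : FiniteDimensional ℝ (Submodule.span ℝ N) :=
    FiniteDimensional.of_finrank_eq_succ (n := 0) hdim
  have hspan : Submodule.span ℝ N = Submodule.span ℝ {v} :=
    (Submodule.eq_of_le_of_finrank_le hle
      (by rw [hdim, finrank_span_singleton hv0])).symm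
  set Δ : Submodule ℝ X := Submodule.span ℝ N with hΔdef
  have hNΔ : N ⊆ (Δ : Set X) := Submodule.subset_span
  -- key: Δ meets interior M
  have hkey : ((Δ : Set X) ∩ interior M).Nonempty := by
    by_contra hdis
    rw [Set.not_nonempty_iff_eq_empty] at hdis
    have hdisj : Disjoint (interior M) (Δ : Set X) :=
      Set.disjoint_iff_inter_eq_empty.mpr (by rw [Set.inter_comm]; exact hdis)
    obtain ⟨f, u, hfu1, hfu2⟩ :=
      geometric_hahn_banach_open Qconv.interior isOpen_interior Δ.convex hdisj
    have hu0 : u ≤ 0 := by simpa using hfu2 0 (Submodule.zero_mem Δ)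
    -- f vanishes on Δ
    have hfΔ : ∀ b ∈ Δ, f b = 0 := by
      intro b hb
      by_contra hne
      have ht : ((u - 1) / f b) • b ∈ Δ := Submodule.smul_mem Δ _ hb
      have := hfu2 _ ht
      rw [map_smul, smul_eq_mul, div_mul_cancel₀ _ hne] at this
      linarith
    -- f ≤ u on M
    obtain ⟨a, ha⟩ := hint
    have hMle : ∀ x ∈ M, f x ≤ u := by
      intro x hx
      have hseg : ∀ t : ℝ, t ∈ Set.Ioc (0 : ℝ) 1 → f x + t * f (a - x) < u := by
        intro t ht
        have hmem : x + t • (a - x) ∈ interior M :=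
          Qconv.add_smul_sub_mem_interior hx ha ht
        have := hfu1 _ hmem
        rwa [map_add, map_smul, smul_eq_mul] at this
      have htend : Filter.Tendsto (fun t : ℝ => f x + t * f (a - x)) (nhdsWithin 0 (Set.Ioi 0))
          (nhds (f x)) := by
        have : Filter.Tendsto (fun t : ℝ => f x + t * f (a - x)) (nhds 0) (nhds (f x + 0 * f (a - x))) := by
          exact (tendsto_const_nhds.add ((continuous_id.mul continuous_const).tendsto 0))
        simpa using this.mono_left nhdsWithin_le_nhds
      refine le_of_tendsto htend ?_
      filter_upwards [Ioc_mem_nhdsGT_of_mem (by norm_num : (0:ℝ) ∈ Set.Ico (0:ℝ) 1)] with t ht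
      exact (hseg t ht).le
    -- f ≤ u everywhere
    have hall : ∀ x, f x ≤ u := by
      intro x
      have hRx : f (R x) = 0 := hfΔ _ (hNΔ ⟨x, rfl⟩)
      have hQx : f (Q x) ≤ u := hMle _ ⟨x, rfl⟩
      calc f x = f (Q x + R x) := by rw [hsum x]
        _ = f (Q x) + f (R x) := map_add f _ _
        _ ≤ u := by rw [hRx]; simpa using hQx
    -- hence f = 0
    have hf0 : ∀ x, f x = 0 := by
      intro x
      by_contra hne
      have := hall (((u + 1) / f x) • x)
      rw [map_smul, smul_eq_mul, div_mul_cancel₀ _ hne] at this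
      linarith
    have h1 : f a < u := hfu1 a ha
    rw [hf0 a] at h1
    linarith
  obtain ⟨p, hpΔ, hpint⟩ := hkey
  -- 0 is not in interior M
  have h0int : (0 : X) ∉ interior M := by
    intro h0
    obtain ⟨ε, hε, hball⟩ := Metric.mem_nhds_iff.1 (isOpen_interior.mem_nhds h0)
    have hnv : ‖v‖ ≠ 0 := norm_ne_zero_iff.mpr hv0
    have hnvpos : 0 < ‖v‖ := norm_pos_iff.mpr hv0
    have hmem : ((ε / 2) / ‖v‖) • v ∈ M := by
      apply interior_subset
      apply hball
      simp only [Metric.mem_ball, dist_zero_right, norm_smul, Real.norm_eq_abs]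
      rw [abs_of_pos (by positivity)]
      rw [div_mul_cancel₀ _ hnv]
      linarith
    have hvM : v ∈ M := by
      have := Qcone (‖v‖ / (ε / 2)) (by positivity) _ hmem
      have hc : ‖v‖ / (ε / 2) * (ε / 2 / ‖v‖) = 1 := by field_simp
      rwa [smul_smul, hc, one_smul] at this
    have : v ∈ M ∩ N := ⟨hvM, hvN⟩
    rw [hMN] at this
    exact hv0 this
  have hp0 : p ≠ 0 := fun hp => h0int (hp ▸ hpint)
  refine ⟨⟨hMN, ⟨v, hv0, hspan⟩, ⟨p, hpΔ, interior_subset hpint, hp0⟩,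
    ⟨v, hNΔ hvN, hvN, hv0⟩, ⟨p, hpΔ, Or.inl hpint⟩⟩, ⟨p, hpΔ, hpint⟩⟩
end

section
/- If Q and R are mutually polar retractions on a Banach space X whose ranges M and N satisfy int M ≠ ∅ and dim N = 1, then Q and R are uniquely determined by M and N: any other pair of mutually polar retractions with the same cone ranges coincides with (Q,R). -/
open Set

variable {X : Type*} [NormedAddCommGroup X] [NormedSpace ℝ X]

/-- Supporting functional at a boundary point of a convex cone with interior point. -/
lemma support_at {M : Set X} (hconv : Convex ℝ M)
    (hcone : ∀ t : ℝ, 0 ≤ t → ∀ y ∈ M, t • y ∈ M) (hM0 : (0:X) ∈ M)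
    {m₀ : X} (hm₀ : m₀ ∈ interior M) {q : X} (hqM : q ∈ M) (hqi : q ∉ interior M) :
    ∃ f : X →L[ℝ] ℝ, (∀ m ∈ M, f m ≤ 0) ∧ f q = 0 ∧ f m₀ < 0 := by
  obtain ⟨f, hf⟩ := geometric_hahn_banach_open_point hconv.interior isOpen_interior hqi
  have hfm₀ : f m₀ < f q := hf m₀ hm₀
  have hle : ∀ m ∈ M, f m ≤ f q := by
    intro m hm
    by_contra hgt
    push_neg at hgt
    set A : ℝ := f q - f m₀ with hA
    set B : ℝ := f m - f q with hB
    have hApos : 0 < A := by simp [hA]; linarith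
    have hBpos : 0 < B := by simp [hB]; linarith
    have hsum : B/(A+B) + A/(A+B) = 1 := by field_simp; ring
    have hcombo : (B/(A+B)) • m₀ + (A/(A+B)) • m ∈ interior M :=
      hconv.combo_interior_self_mem_interior hm₀ hm (by positivity) (by positivity) hsum
    have hlt := hf _ hcombo
    rw [map_add, map_smul, map_smul] at hlt
    simp only [smul_eq_mul] at hlt
    have h2 : (B/(A+B)) * f m₀ + (A/(A+B)) * f m = f q := by
      have hAB : A + B ≠ 0 := by positivity
      field_simp
      rw [hA, hB]; ring
    linarith [h2 ▸ hlt]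
  have hq0 : f q = 0 := by
    have h2q := hle _ (hcone 2 (by norm_num) q hqM)
    rw [map_smul] at h2q
    simp only [smul_eq_mul] at h2q
    have h0 := hle 0 hM0
    rw [map_zero] at h0
    linarith
  exact ⟨f, fun m hm => hq0 ▸ hle m hm, hq0, by linarith⟩

/-- Key uniqueness step in the ray case: two boundary decompositions with different
coefficients along the ray direction are impossible. -/
lemma ray_key {M : Set X} {e : X} (hconv : Convex ℝ M) (hclosed : IsClosed M)
    (hcone : ∀ t : ℝ, 0 ≤ t → ∀ y ∈ M, t • y ∈ M) (hM0 : (0:X) ∈ M)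
    {m₀ : X} (hm₀ : m₀ ∈ interior M)
    (S : X → X) (hS : ∀ z, S z ∈ M)
    (hdec : ∀ z, ∃ cz : ℝ, 0 ≤ cz ∧ z = S z + cz • e)
    {x : X} {c c' : ℝ} (hcc : c' < c)
    (hq : x - c • e ∈ frontier M) (hq' : x - c' • e ∈ M) : False := by
  have hqM : x - c • e ∈ M := hclosed.frontier_subset hq
  have hqi : x - c • e ∉ interior M := hq.2
  obtain ⟨f, hfM, hfq, hfm₀⟩ := support_at hconv hcone hM0 hm₀ hqM hqi
  rw [map_sub, map_smul, smul_eq_mul] at hfq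
  have h1 := hfM _ hq'
  rw [map_sub, map_smul, smul_eq_mul] at h1
  have hfe : f e ≤ 0 := by nlinarith
  have hall : ∀ z, f z ≤ 0 := by
    intro z
    obtain ⟨cz, hcz, hz⟩ := hdec z
    have h2 : f z = f (S z) + cz * f e := by
      have h2' := congrArg f hz
      rwa [map_add, map_smul, smul_eq_mul] at h2'
    have h3 := hfM _ (hS z)
    nlinarith
  have h4 := hall m₀
  have h5 := hall (-m₀)
  rw [map_neg] at h5
  linarith

theorem stmt7 [CompleteSpace X] (Q R Q' R' : X → X)
    (h : MutuallyPolar Q R)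
    (hint : (interior (Set.range Q)).Nonempty)
    (hdim : Module.finrank ℝ (Submodule.span ℝ (Set.range R)) = 1)
    (h' : MutuallyPolar Q' R')
    (hq : Set.range Q' = Set.range Q) (hr : Set.range R' = Set.range R) :
    Q' = Q ∧ R' = R := by
  obtain ⟨⟨Qcont, Qhom, Qidem, Qne, Qcl, Qcv, Qco, Qfr⟩,
    ⟨Rcont, Rhom, Ridem, Rne, Rcl, Rcv, Rco, Rfr⟩, hQR, hQR0, hRQ0⟩ := h
  obtain ⟨⟨Q'cont, Q'hom, Q'idem, Q'ne, Q'cl, Q'cv, Q'co, Q'fr⟩,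
    ⟨R'cont, R'hom, R'idem, R'ne, R'cl, R'cv, R'co, R'fr⟩, hQR', hQR0', hRQ0'⟩ := h'
  -- basic facts
  have hQ0 : Q 0 = 0 := by
    have := Qhom 0 le_rfl 0; simpa using this
  have hR0 : R 0 = 0 := by
    have := Rhom 0 le_rfl 0; simpa using this
  have hM0 : (0:X) ∈ Set.range Q := ⟨0, hQ0⟩
  have hfix : ∀ m ∈ Set.range Q, Q m = m := by
    rintro m ⟨y, rfl⟩; exact Qidem y
  have hRM : ∀ m ∈ Set.range Q, R m = 0 := by
    rintro m ⟨y, rfl⟩; exact hRQ0 y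
  have hR'M : ∀ m ∈ Set.range Q, R' m = 0 := by
    intro m hm
    rw [← hq] at hm
    obtain ⟨y, rfl⟩ := hm
    exact hRQ0' y
  have hQN : ∀ n ∈ Set.range R, Q n = 0 := by
    rintro n ⟨y, rfl⟩; exact hQR0 y
  have hMN : ∀ v, v ∈ Set.range Q → v ∈ Set.range R → v = 0 := by
    intro v hM hN
    rw [← hfix v hM]
    exact hQN v hN
  -- a nonzero element of N = range R
  have hex : ∃ v, v ∈ Set.range R ∧ v ≠ 0 := by
    by_contra hc
    push_neg at hc
    exact Rne (Set.eq_singleton_iff_unique_mem.mpr ⟨⟨0, hR0⟩, fun v hv => hc v hv⟩)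
  obtain ⟨e, heN, he0⟩ := hex
  -- N is contained in the line through e
  have hNe : ∀ n ∈ Set.range R, ∃ c : ℝ, n = c • e := by
    have h1 : Submodule.span ℝ {e} ≤ Submodule.span ℝ (Set.range R) :=
      Submodule.span_mono (by simpa using heN)
    haveI : FiniteDimensional ℝ (Submodule.span ℝ (Set.range R)) :=
      FiniteDimensional.of_finrank_eq_succ hdim
    have h2 : Submodule.span ℝ {e} = Submodule.span ℝ (Set.range R) :=
      Submodule.eq_of_le_of_finrank_le h1 (by rw [hdim, finrank_span_singleton he0])
    intro n hn
    have hn' : n ∈ Submodule.span ℝ ({e} : Set X) := h2 ▸ Submodule.subset_span hn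
    obtain ⟨c, hc⟩ := Submodule.mem_span_singleton.mp hn'
    exact ⟨c, hc.symm⟩
  obtain ⟨m₀, hm₀⟩ := hint
  by_cases hneg : ∃ c : ℝ, c < 0 ∧ c • e ∈ Set.range R
  · -- "line" case: impossible
    exfalso
    obtain ⟨c, hc, hce⟩ := hneg
    have hcinv : c⁻¹ < 0 := inv_lt_zero.mpr hc
    have hme : -e ∈ Set.range R := by
      have h5 := Rco (-c⁻¹) (by linarith) _ hce
      have h6 : (-c⁻¹) * c = -1 := by
        rw [neg_mul, inv_mul_cancel₀ (ne_of_lt hc)]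
      rwa [smul_smul, h6, neg_one_smul] at h5
    have heM : e ∉ Set.range Q := fun hm => he0 (hMN e hm heN)
    have hmeM : -e ∉ Set.range Q := by
      intro hm
      have h7 := hMN _ hm hme
      rw [neg_eq_zero] at h7
      exact he0 h7
    have sep : ∀ w : X, w ∉ Set.range Q →
        ∃ g : X →L[ℝ] ℝ, (∀ m ∈ Set.range Q, g m ≤ 0) ∧ 0 < g w := by
      intro w hw
      obtain ⟨g, u, hg, hgu⟩ := geometric_hahn_banach_closed_point Qcv Qcl hw
      have hu : 0 < u := by have := hg 0 hM0; simpa using this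
      refine ⟨g, ?_, by linarith⟩
      intro m hm
      by_contra hpos
      push_neg at hpos
      have ht : (0:ℝ) ≤ u / g m := le_of_lt (by positivity)
      have h8 := hg _ (Qco (u / g m) ht m hm)
      rw [map_smul, smul_eq_mul, div_mul_cancel₀ u (ne_of_gt hpos)] at h8
      exact lt_irrefl u h8
    obtain ⟨g, hgM, hge⟩ := sep e heM
    obtain ⟨h, hhM, hhe⟩ := sep (-e) hmeM
    rw [map_neg] at hhe
    -- strictly negative values at the interior point
    have hintneg : ∀ φ : X →L[ℝ] ℝ, (∀ m ∈ Set.range Q, φ m ≤ 0) →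
        (∃ v, 0 < φ v) → φ m₀ < 0 := by
      intro φ hφ ⟨v, hv⟩
      rcases lt_or_ge (φ m₀) 0 with h9 | h9
      · exact h9
      have h10 : φ m₀ = 0 := le_antisymm (hφ m₀ (interior_subset hm₀)) h9
      exfalso
      obtain ⟨ε, hε, hball⟩ := Metric.isOpen_iff.mp isOpen_interior m₀ hm₀
      set t : ℝ := ε / (2 * (‖v‖ + 1)) with htdef
      have ht : 0 < t := by positivity
      have hmem : m₀ + t • v ∈ Set.range Q := by
        apply interior_subset
        apply hball
        rw [Metric.mem_ball, dist_eq_norm]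
        have : m₀ + t • v - m₀ = t • v := by abel
        rw [this, norm_smul, Real.norm_eq_abs, abs_of_pos ht]
        have hv1 : ‖v‖ < ‖v‖ + 1 := by linarith
        calc t * ‖v‖ ≤ t * (‖v‖ + 1) := by nlinarith
          _ = ε / 2 := by rw [htdef]; field_simp
          _ < ε := by linarith
      have h11 := hφ _ hmem
      rw [map_add, map_smul, smul_eq_mul, h10, zero_add] at h11
      nlinarith
    have hgm₀ : g m₀ < 0 := hintneg g hgM ⟨e, hge⟩
    have hhm₀ : h m₀ < 0 := hintneg h hhM ⟨-e, by rw [map_neg]; exact hhe⟩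
    -- build the contradicting point
    set cc : ℝ := (1 - h e) / (-(h m₀)) with hccdef
    have hcc : 0 < cc := by
      apply div_pos (by linarith) (by linarith)
    set z : X := e - cc • m₀ with hzdef
    obtain ⟨t, htz⟩ := hNe (R z) ⟨z, rfl⟩
    have hQz : Q z ∈ Set.range Q := ⟨z, rfl⟩
    have hzeq : z = Q z + t • e := by rw [← htz, hQR z]
    have hgz : 0 < g z := by
      have : g z = g e - cc * g m₀ := by
        rw [hzdef, map_sub, map_smul, smul_eq_mul]
      have h18 : cc * g m₀ < 0 := mul_neg_of_pos_of_neg hcc hgm₀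
      linarith
    have hhz : 0 < h z := by
      have h12 : h z = h e - cc * h m₀ := by
        rw [hzdef, map_sub, map_smul, smul_eq_mul]
      have h13 : cc * (-(h m₀)) = 1 - h e := by
        rw [hccdef]
        exact div_mul_cancel₀ _ (ne_of_gt (by linarith : (0:ℝ) < -h m₀))
      rw [mul_neg] at h13
      linarith
    have hgz2 : g z ≤ t * g e := by
      have h14 := congrArg g hzeq
      rw [map_add, map_smul, smul_eq_mul] at h14
      linarith [hgM _ hQz]
    have htpos : 0 < t := by
      by_contra ht0
      push_neg at ht0
      have h16 : t * g e ≤ 0 := mul_nonpos_iff.mpr (Or.inr ⟨ht0, le_of_lt hge⟩)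
      linarith
    have hhz2 : h z ≤ t * h e := by
      have h15 := congrArg h hzeq
      rw [map_add, map_smul, smul_eq_mul] at h15
      linarith [hhM _ hQz]
    have h17 : t * h e < 0 := mul_neg_of_pos_of_neg htpos (by linarith)
    linarith
  · -- "ray" case
    push_neg at hneg
    have hray : ∀ n ∈ Set.range R, ∃ c : ℝ, 0 ≤ c ∧ n = c • e := by
      intro n hn
      obtain ⟨c, rfl⟩ := hNe n hn
      refine ⟨c, ?_, rfl⟩
      by_contra hcneg
      push_neg at hcneg
      exact absurd hn (hneg c hcneg)
    have hdecQ : ∀ z, ∃ cz : ℝ, 0 ≤ cz ∧ z = Q z + cz • e := by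
      intro z
      obtain ⟨cz, hcz, hz⟩ := hray (R z) ⟨z, rfl⟩
      exact ⟨cz, hcz, by rw [← hz, hQR z]⟩
    have hdecQ' : ∀ z, ∃ cz : ℝ, 0 ≤ cz ∧ z = Q' z + cz • e := by
      intro z
      obtain ⟨cz, hcz, hz⟩ := hray (R' z) (hr ▸ ⟨z, rfl⟩)
      exact ⟨cz, hcz, by rw [← hz, hQR' z]⟩
    have key : ∀ x, R' x = R x := by
      intro x
      by_cases hxM : x ∈ Set.range Q
      · rw [hRM x hxM, hR'M x hxM]
      · obtain ⟨c, hc0, hcR⟩ := hray (R x) ⟨x, rfl⟩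
        obtain ⟨c', hc'0, hcR'⟩ := hray (R' x) (hr ▸ ⟨x, rfl⟩)
        have hQx : Q x = x - c • e := by
          apply eq_sub_of_add_eq
          rw [← hcR]
          exact hQR x
        have hQ'x : Q' x = x - c' • e := by
          apply eq_sub_of_add_eq
          rw [← hcR']
          exact hQR' x
        rcases lt_trichotomy c' c with hlt | heqc | hgt
        · exfalso
          have hfr : x - c • e ∈ frontier (Set.range Q) := hQx ▸ Qfr x hxM
          have hmem : x - c' • e ∈ Set.range Q := by
            rw [← hQ'x, ← hq]; exact ⟨x, rfl⟩
          exact ray_key Qcv Qcl Qco hM0 hm₀ Q (fun z => ⟨z, rfl⟩) hdecQ hlt hfr hmem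
        · rw [hcR, hcR', heqc]
        · exfalso
          have hxM' : x ∉ Set.range Q' := by rwa [hq]
          have hfr : x - c' • e ∈ frontier (Set.range Q) := by
            rw [← hQ'x, ← hq]
            exact Q'fr x hxM'
          have hmem : x - c • e ∈ Set.range Q := hQx ▸ ⟨x, rfl⟩
          have hS' : ∀ z, Q' z ∈ Set.range Q := fun z => hq ▸ ⟨z, rfl⟩
          exact ray_key Qcv Qcl Qco hM0 hm₀ Q' hS' hdecQ' hgt hfr hmem
    have hRR : R' = R := funext key
    have hQQ : Q' = Q := by
      funext x
      have h1 := hQR x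
      have h2 := hQR' x
      rw [key x] at h2
      have : Q' x + R x = Q x + R x := by rw [h1, h2]
      exact add_right_cancel this
    exact ⟨hQQ, hRR⟩
end

section
/- If g : X → ℝ₊ is an asymmetric norm on a Banach space X, then q : ℝ × X → ℝ₊ defined by q(t,x) = max(t + g(x), 0) is an asymmetric norm on ℝ × X satisfying q((t,x) − q(t,x)·(1,0)) = 0 for all (t,x). -/
open Set

variable {X : Type*} [NormedAddCommGroup X] [NormedSpace ℝ X]

/-- An asymmetric norm: nonnegative, positively homogeneous, subadditive, and
`q x = q (-x) = 0 → x = 0`. -/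
def IsAsymNorm {Y : Type*} [NormedAddCommGroup Y] [NormedSpace ℝ Y] (q : Y → ℝ) : Prop :=
  (∀ x, 0 ≤ q x) ∧ (∀ t : ℝ, 0 ≤ t → ∀ x, q (t • x) = t * q x) ∧
  (∀ x y, q (x + y) ≤ q x + q y) ∧ ∀ x, q x = 0 → q (-x) = 0 → x = 0

theorem stmt11 (g : X → ℝ) (hg : IsAsymNorm g) :
    IsAsymNorm (fun p : ℝ × X => max (p.1 + g p.2) 0) ∧
    ∀ p : ℝ × X,
      max ((p - max (p.1 + g p.2) 0 • ((1 : ℝ), (0 : X))).1 +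
          g (p - max (p.1 + g p.2) 0 • ((1 : ℝ), (0 : X))).2) 0 = 0 := by
  obtain ⟨hg0, hgh, hgs, hgd⟩ := hg
  have hg00 : g 0 = 0 := by
    have := hgh 0 le_rfl 0
    simpa using this
  constructor
  · refine ⟨fun p => le_max_right _ _, ?_, ?_, ?_⟩
    · intro t ht p
      simp only [Prod.smul_fst, Prod.smul_snd, smul_eq_mul, hgh t ht]
      rw [← mul_add, mul_max_of_nonneg _ _ ht, mul_zero]
    · intro p q
      simp only [Prod.fst_add, Prod.snd_add]
      have h1 : p.1 + q.1 + g (p.2 + q.2) ≤ (p.1 + g p.2) + (q.1 + g q.2) := by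
        have := hgs p.2 q.2; linarith
      have h2 : (p.1 + g p.2) + (q.1 + g q.2) ≤ max (p.1 + g p.2) 0 + max (q.1 + g q.2) 0 :=
        add_le_add (le_max_left _ _) (le_max_left _ _)
      exact max_le (h1.trans h2) (by positivity)
    · intro p hp hp'
      simp only [Prod.fst_neg, Prod.snd_neg] at hp'
      simp only at hp
      have h1 : p.1 + g p.2 ≤ 0 := by
        by_contra h; push_neg at h
        rw [max_eq_left h.le] at hp; linarith
      have h2 : -p.1 + g (-p.2) ≤ 0 := by
        by_contra h; push_neg at h
        rw [max_eq_left h.le] at hp'; linarith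
      have hsum : g p.2 + g (-p.2) ≤ 0 := by linarith
      have hz2 : g p.2 = 0 := le_antisymm (by have := hg0 (-p.2); linarith) (hg0 _)
      have hz2' : g (-p.2) = 0 := le_antisymm (by have := hg0 p.2; linarith) (hg0 _)
      have hp2 : p.2 = 0 := hgd _ hz2 hz2'
      have hp1 : p.1 = 0 := by simp [hz2, hp2, hg00] at h1 h2; linarith
      exact Prod.ext hp1 hp2
  · intro p
    simp only [Prod.fst_sub, Prod.snd_sub, Prod.smul_fst, Prod.smul_snd, smul_eq_mul,
      mul_one, mul_zero, sub_zero, smul_zero]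
    have : p.1 - max (p.1 + g p.2) 0 + g p.2 ≤ 0 := by
      have := le_max_left (p.1 + g p.2) 0; linarith
    exact max_eq_right this
end

section
/- Let X be a separable Banach space and let Q, R : X → X be mutually polar retractions with int(range Q) ≠ ∅ and dim(range R) = 1. Then Q is subadditive with respect to the order induced by range Q, and R is subadditive with respect to the order induced by range R. -/
open Set Pointwise

variable {X : Type*} [NormedAddCommGroup X] [NormedSpace ℝ X]

theorem stmt15 [CompleteSpace X] [TopologicalSpace.SeparableSpace X]
    (Q R : X → X) (h : MutuallyPolar Q R)
    (hint : (interior (Set.range Q)).Nonempty)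
    (hdim : Module.finrank ℝ (Submodule.span ℝ (Set.range R)) = 1) :
    (∀ x y : X, Q x + Q y - Q (x + y) ∈ Set.range Q) ∧
    (∀ x y : X, R x + R y - R (x + y) ∈ Set.range R) := by
  obtain ⟨⟨Qcont, Qhom, Qidem, Qne, Qclosed, Qconvex, Qcone, Qfront⟩,
    ⟨Rcont, Rhom, Ridem, Rne, Rclosed, Rconvex, Rcone, Rfront⟩, hQR, hQR0, hRQ0⟩ := h
  set P := Set.range Q with hPdef
  -- basic facts
  have hR0 : R 0 = 0 := by simpa using Rhom 0 le_rfl 0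
  have hRP : ∀ x ∈ P, R x = 0 := by rintro x ⟨y, rfl⟩; exact hRQ0 y
  have hQeq : ∀ x, Q x = x - R x := fun x => eq_sub_of_add_eq (hQR x)
  have hmemP : ∀ x, R x = 0 → x ∈ P := fun x hx => ⟨x, by rw [hQeq x, hx, sub_zero]⟩
  have hRR : ∀ x ∈ Set.range R, R x = x := by rintro x ⟨y, rfl⟩; exact Ridem y
  have hPRzero : ∀ x, x ∈ P → x ∈ Set.range R → x = 0 := fun x hx hx' => by
    rw [← hRR x hx', hRP x hx]
  -- scaling and addition stability
  have hsub : ∀ a : ℝ, 0 ≤ a → a • P ⊆ P := by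
    rintro a ha _ ⟨p, hp, rfl⟩; exact Qcone a ha p hp
  have hsint : ∀ a : ℝ, 0 < a → ∀ u ∈ interior P, a • u ∈ interior P := by
    intro a ha u hu
    have h1 : a • u ∈ a • interior P := smul_mem_smul_set hu
    rw [← interior_smul₀ (ne_of_gt ha)] at h1
    exact interior_mono (hsub a ha.le) h1
  have hIntAdd : ∀ u ∈ interior P, ∀ p ∈ P, u + p ∈ interior P := by
    intro u hu p hp
    have hm : (2:ℝ)⁻¹ • u + (2:ℝ)⁻¹ • p ∈ interior P :=
      Qconvex.combo_interior_self_mem_interior hu hp (by norm_num) (by norm_num) (by norm_num)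
    have h2 := hsint 2 (by norm_num) _ hm
    rwa [smul_add, smul_smul, smul_smul, show (2:ℝ)*2⁻¹ = 1 by norm_num, one_smul, one_smul] at h2
  have hPadd : ∀ p ∈ P, ∀ q ∈ P, p + q ∈ P := by
    intro p hp q hq
    have hm : (2:ℝ)⁻¹ • p + (2:ℝ)⁻¹ • q ∈ P :=
      Qconvex hp hq (by norm_num) (by norm_num) (by norm_num)
    have h2 := Qcone 2 (by norm_num) _ hm
    rwa [smul_add, smul_smul, smul_smul, show (2:ℝ)*2⁻¹ = 1 by norm_num, one_smul, one_smul] at h2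
  -- a nonzero element of range R
  have hRne : ∃ u ∈ Set.range R, u ≠ 0 := by
    by_contra hc
    push_neg at hc
    exact Rne (Set.eq_singleton_iff_unique_mem.2 ⟨⟨0, hR0⟩, fun x hx => hc x hx⟩)
  have h0ni : (0:X) ∉ interior P := by
    intro h0
    obtain ⟨u, hu, hune⟩ := hRne
    obtain ⟨ε, hε, hball⟩ := Metric.mem_nhds_iff.1 (mem_interior_iff_mem_nhds.1 h0)
    have hun : 0 < ‖u‖ := norm_pos_iff.2 hune
    have hmem : (ε / (2 * ‖u‖)) • u ∈ P := by
      apply hball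
      simp only [Metric.mem_ball, dist_zero_right, norm_smul, Real.norm_eq_abs]
      rw [abs_of_pos (by positivity)]
      rw [div_mul_eq_mul_div, mul_comm]
      calc ‖u‖ * ε / (2 * ‖u‖) = ε / 2 := by field_simp
        _ < ε := by linarith
    have hmem2 : u ∈ P := by
      have h2 := Qcone ((2 * ‖u‖) / ε) (by positivity) _ hmem
      rwa [smul_smul, div_mul_div_comm, mul_comm, div_self (by positivity), one_smul] at h2
    exact hune (hPRzero u hmem2 hu)
  -- range R is contained in a line
  letI : Module.Free ℝ ↥(Submodule.span ℝ (Set.range R)) := Module.Free.of_divisionRing _ _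
  obtain ⟨v0, hv0ne, hv0⟩ := finrank_eq_one_iff'.mp hdim
  have hvne : (v0 : X) ≠ 0 := fun hh => hv0ne (by exact_mod_cast hh)
  have hmul : ∀ x ∈ Set.range R, ∃ c : ℝ, x = c • (v0 : X) := by
    intro x hx
    obtain ⟨c, hc⟩ := hv0 ⟨x, Submodule.subset_span hx⟩
    have h1 := congrArg (Subtype.val) hc
    exact ⟨c, by simpa using h1.symm⟩
  obtain ⟨d, hd, hdne⟩ := hRne
  obtain ⟨c₀, hc₀⟩ := hmul d hd
  have hc₀ne : c₀ ≠ 0 := by rintro rfl; simp at hc₀; exact hdne hc₀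
  have hmd : ∀ x ∈ Set.range R, ∃ c : ℝ, x = c • d := by
    intro x hx
    obtain ⟨c, hc⟩ := hmul x hx
    exact ⟨c / c₀, by rw [hc, hc₀, smul_smul, div_mul_cancel₀ c hc₀ne]⟩
  by_cases hline : ∃ x ∈ Set.range R, ∃ t : ℝ, t < 0 ∧ x = t • d
  · exfalso
    obtain ⟨x, hx, t, ht, rfl⟩ := hline
    have hall : ∀ s : ℝ, s • d ∈ Set.range R := by
      intro s
      rcases le_or_gt 0 s with hs | hs
      · exact Rcone s hs d hd
      · have heq : s • d = (s / t) • (t • d) := by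
          rw [smul_smul, div_mul_cancel₀ s ht.ne]
        rw [heq]
        exact Rcone (s / t) (le_of_lt (div_pos_of_neg_of_neg hs ht)) _ hx
    obtain ⟨e, he⟩ := hint
    obtain ⟨s, hs⟩ := hmd (R (-e)) ⟨-e, rfl⟩
    have hz : Q (-e) ∈ P := ⟨-e, rfl⟩
    have hsum : e + Q (-e) = (-s) • d := by
      rw [hQeq (-e), hs, neg_smul]; abel
    have hmem : (-s) • d ∈ interior P := hsum ▸ hIntAdd e he _ hz
    have h0 : (-s) • d = 0 := hPRzero _ (interior_subset hmem) (hall (-s))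
    rw [h0] at hmem
    exact h0ni hmem
  · push_neg at hline
    have hray : ∀ x ∈ Set.range R, ∃ c : ℝ, 0 ≤ c ∧ x = c • d := by
      intro x hx
      obtain ⟨c, hc⟩ := hmd x hx
      rcases le_or_gt 0 c with h1 | h1
      · exact ⟨c, h1, hc⟩
      · exact absurd hc (hline x hx c h1)
    -- -d ∈ P
    have hdP : -d ∈ P := by
      obtain ⟨s, hs0, hs⟩ := hray (R (-d)) ⟨-d, rfl⟩
      have h2 : Q (-d) = (1+s) • (-d) := by
        rw [hQeq (-d), hs, add_smul, one_smul, smul_neg]; abel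
      have h1 : R ((1+s) • (-d)) = ((1+s) * s) • d := by
        rw [Rhom (1+s) (by linarith) (-d), hs, smul_smul]
      have h3 := hRQ0 (-d)
      rw [h2, h1] at h3
      have hz : (1+s) * s = 0 := by
        rcases smul_eq_zero.mp h3 with h4 | h4
        · exact h4
        · exact absurd h4 hdne
      have hs0' : s = 0 := by
        rcases mul_eq_zero.mp hz with h4 | h4
        · linarith
        · exact h4
      exact hmemP _ (by rw [hs, hs0', zero_smul])
    have hnegdP : ∀ t : ℝ, t ≤ 0 → t • d ∈ P := by
      intro t ht
      have h1 := Qcone (-t) (by linarith) (-d) hdP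
      rwa [smul_neg, ← neg_smul, neg_neg] at h1
    -- key interior lemma
    have hBint : ∀ q ∈ interior P, ∀ t c : ℝ, 0 ≤ t → R (q + t • d) = c • d → c ≤ t := by
      intro q hq t c ht hc
      by_contra hct
      push_neg at hct
      have hcpos : 0 < c := lt_of_le_of_lt ht hct
      have hw : q + t • d ∉ P := by
        intro hw
        have h1 := hRP _ hw
        rw [hc] at h1
        rcases smul_eq_zero.mp h1 with h2 | h2
        · exact hcpos.ne' h2
        · exact hdne h2
      have hQw : Q (q + t • d) = q + (t - c) • d := by
        rw [hQeq, hc, sub_smul]; abel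
      have hQint : Q (q + t • d) ∈ interior P := by
        rw [hQw]
        exact hIntAdd q hq _ (hnegdP (t - c) (by linarith))
      have hfr := Qfront _ hw
      rw [Qclosed.frontier_eq] at hfr
      exact hfr.2 hQint
    obtain ⟨e, he⟩ := hint
    -- key lemma for all p ∈ P by approximation
    have hB : ∀ p ∈ P, ∀ t c : ℝ, 0 ≤ t → R (p + t • d) = c • d → c ≤ t := by
      intro p hp t c ht hc
      have hq : ∀ n : ℕ, p + (1 / (n+1) : ℝ) • e ∈ interior P := by
        intro n
        have h1 : (1 / (n+1) : ℝ) • e ∈ interior P := hsint _ (by positivity) e he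
        have h2 := hIntAdd _ h1 p hp
        rwa [add_comm] at h2
      have hcn : ∀ n : ℕ, ∃ cn : ℝ, 0 ≤ cn ∧ R (p + (1/(n+1):ℝ) • e + t • d) = cn • d :=
        fun n => hray _ ⟨_, rfl⟩
      choose cn hcn0 hcns using hcn
      have hcle : ∀ n, cn n ≤ t := fun n => hBint _ (hq n) t (cn n) ht (hcns n)
      have hlim1 : Filter.Tendsto (fun n : ℕ => p + (1/(n+1):ℝ) • e + t • d)
          Filter.atTop (nhds (p + t • d)) := by
        have h0 : Filter.Tendsto (fun n : ℕ => (1/(n+1):ℝ)) Filter.atTop (nhds 0) :=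
          tendsto_one_div_add_atTop_nhds_zero_nat
        have h1 : Filter.Tendsto (fun n : ℕ => (1/(n+1):ℝ) • e) Filter.atTop (nhds (0:X)) := by
          simpa using h0.smul_const e
        have h2 := ((tendsto_const_nhds (α := ℕ) (x := p)).add h1).add
          (tendsto_const_nhds (α := ℕ) (x := t • d))
        simpa using h2
      have hlim2 : Filter.Tendsto (fun n => cn n • d) Filter.atTop (nhds (c • d)) := by
        have h1 := (Rcont.tendsto (p + t • d)).comp hlim1
        rw [hc] at h1
        convert h1 using 2 with n
        exact (hcns n).symm
      have hlimc : Filter.Tendsto cn Filter.atTop (nhds c) := by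
        have hdn : 0 < ‖d‖ := norm_pos_iff.2 hdne
        have h1 : Filter.Tendsto (fun n => dist (cn n • d) (c • d)) Filter.atTop (nhds 0) :=
          tendsto_iff_dist_tendsto_zero.mp hlim2
        have h2 : ∀ n, dist (cn n) c = dist (cn n • d) (c • d) / ‖d‖ := by
          intro n
          rw [dist_eq_norm, dist_eq_norm, ← sub_smul, norm_smul, Real.norm_eq_abs,
            mul_div_assoc, div_self hdn.ne', mul_one]
        have h3 : Filter.Tendsto (fun n => dist (cn n) c) Filter.atTop (nhds 0) := by
          simp only [h2]
          simpa using h1.div_const ‖d‖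
        exact tendsto_iff_dist_tendsto_zero.mpr h3
      exact le_of_tendsto hlimc (Filter.Eventually.of_forall hcle)
    -- assemble the two goals
    have key : ∀ x y : X, ∃ a b c : ℝ, 0 ≤ a ∧ 0 ≤ b ∧ 0 ≤ c ∧ c ≤ a + b ∧
        R x = a • d ∧ R y = b • d ∧ R (x + y) = c • d := by
      intro x y
      obtain ⟨a, ha0, ha⟩ := hray (R x) ⟨x, rfl⟩
      obtain ⟨b, hb0, hb⟩ := hray (R y) ⟨y, rfl⟩
      obtain ⟨c, hc0, hc⟩ := hray (R (x+y)) ⟨x+y, rfl⟩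
      refine ⟨a, b, c, ha0, hb0, hc0, ?_, ha, hb, hc⟩
      have hxy : x + y = (Q x + Q y) + (a + b) • d := by
        rw [hQeq x, hQeq y, ha, hb, add_smul]
        abel
      refine hB (Q x + Q y) (hPadd _ ⟨x, rfl⟩ _ ⟨y, rfl⟩) (a+b) c (by linarith) ?_
      rw [← hxy]
      exact hc
    constructor
    · intro x y
      obtain ⟨a, b, c, ha0, hb0, hc0, hcab, ha, hb, hc⟩ := key x y
      have hgoal : Q x + Q y - Q (x+y) = (c - (a+b)) • d := by
        rw [hQeq x, hQeq y, hQeq (x+y), ha, hb, hc, sub_smul, add_smul]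
        abel
      rw [hgoal]
      exact hnegdP _ (by linarith)
    · intro x y
      obtain ⟨a, b, c, ha0, hb0, hc0, hcab, ha, hb, hc⟩ := key x y
      have hgoal : R x + R y - R (x+y) = (a + b - c) • d := by
        rw [ha, hb, hc, sub_smul, add_smul]
      rw [hgoal]
      exact Rcone _ (by linarith) d hd
end

section
/- Let X be a separable Banach space, M a closed cone with nonempty interior, and N a one-dimensional closed cone such that M and N are transversal. Then there exists a unique pair of mutually polar retractions Q, R with range Q = M and range R = N, and both Q and R are subadditive with respect to the orders induced by their respective cone ranges. -/
open Set

variable {X : Type*} [NormedAddCommGroup X] [NormedSpace ℝ X]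

set_option maxHeartbeats 1000000

theorem stmt16 [CompleteSpace X] [TopologicalSpace.SeparableSpace X]
    (M N : Set X) (hMc : IsClosed M) (hNc : IsClosed N)
    (hMconv : Convex ℝ M) (hNconv : Convex ℝ N)
    (hMcone : ∀ t : ℝ, 0 ≤ t → ∀ x ∈ M, t • x ∈ M)
    (hNcone : ∀ t : ℝ, 0 ≤ t → ∀ x ∈ N, t • x ∈ N)
    (hMp : M ∩ (-M) = {0}) (hNp : N ∩ (-N) = {0})
    (hMint : (interior M).Nonempty)
    (hNdim : Module.finrank ℝ (Submodule.span ℝ N) = 1)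
    (htr : Transversal M N) :
    (∃! p : (X → X) × (X → X),
        MutuallyPolar p.1 p.2 ∧ Set.range p.1 = M ∧ Set.range p.2 = N) ∧
    ∀ Q R : X → X, MutuallyPolar Q R → Set.range Q = M → Set.range R = N →
      (∀ x y : X, Q x + Q y - Q (x + y) ∈ M) ∧
      (∀ x y : X, R x + R y - R (x + y) ∈ N) := by
  obtain ⟨Δ, hMN0, ⟨d, hd0, hΔ⟩, ⟨q, hqΔ, hqM, hq0⟩, ⟨e, heΔ, heN, he0'⟩, ⟨w, hwΔ, hw⟩⟩ := htr
  have he0 : e ≠ 0 := fun h => he0' (by simp [h])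
  have hq0' : q ≠ 0 := fun h => hq0 (by simp [h])
  -- additivity of M and N
  have hMadd : ∀ a ∈ M, ∀ b ∈ M, a + b ∈ M := by
    intro a ha b hb
    have h1 := hMconv ha hb (by norm_num : (0:ℝ) ≤ 1/2) (by norm_num : (0:ℝ) ≤ 1/2)
      (by norm_num : (1/2:ℝ) + 1/2 = 1)
    have h2 := hMcone 2 (by norm_num) _ h1
    have : a + b = (2:ℝ) • ((1/2:ℝ) • a + (1/2:ℝ) • b) := by module
    rwa [this]
  -- positive multiples of e are not in M
  have hceM : ∀ c : ℝ, 0 < c → c • e ∉ M := by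
    intro c hc hmem
    have : (1/c) • (c • e) ∈ M := hMcone _ (by positivity) _ hmem
    rw [smul_smul, one_div_mul_cancel hc.ne', one_smul] at this
    have : e ∈ M ∩ N := ⟨this, heN⟩
    rw [hMN0] at this
    exact he0 this
  -- everything on Δ is a multiple of e
  have hΔe : ∀ z ∈ Δ, ∃ c : ℝ, z = c • e := by
    have heΔ' := heΔ
    rw [hΔ] at heΔ'
    obtain ⟨a, ha⟩ := Submodule.mem_span_singleton.mp heΔ'
    have ha0 : a ≠ 0 := by rintro rfl; simp at ha; exact he0 ha.symm
    intro z hz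
    rw [hΔ] at hz
    obtain ⟨b, hb⟩ := Submodule.mem_span_singleton.mp hz
    refine ⟨b / a, ?_⟩
    rw [← ha, ← hb, smul_smul]
    congr 1
    field_simp
  -- -e ∈ M
  have hneM : -e ∈ M := by
    obtain ⟨a, rfl⟩ := hΔe q hqΔ
    have ha0 : a ≠ 0 := fun h => hq0' (by simp [h])
    rcases lt_or_gt_of_ne ha0 with h | h
    · have := hMcone (-1/a) (le_of_lt (div_pos_of_neg_of_neg (by norm_num) h)) _ hqM
      rwa [smul_smul, div_mul_cancel₀ _ ha0, neg_one_smul] at this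
    · exact absurd hqM (hceM a h)
  -- c • e ∈ M ↔ c ≤ 0
  have hceM' : ∀ c : ℝ, c • e ∈ M ↔ c ≤ 0 := by
    intro c
    constructor
    · intro h
      by_contra hc
      exact hceM c (lt_of_not_ge hc) h
    · intro h
      have : c • e = (-c) • (-e) := by module
      rw [this]
      exact hMcone _ (by linarith) _ hneM
  -- N is the ray generated by e
  have hNspan : N ⊆ (Submodule.span ℝ ({e} : Set X) : Set X) := by
    have hle : Submodule.span ℝ ({e} : Set X) ≤ Submodule.span ℝ N :=
      Submodule.span_mono (by simpa using heN)
    haveI : FiniteDimensional ℝ (Submodule.span ℝ N) := FiniteDimensional.of_finrank_eq_succ hNdim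
    have heq : Submodule.span ℝ ({e} : Set X) = Submodule.span ℝ N :=
      Submodule.eq_of_le_of_finrank_le hle (by rw [hNdim, finrank_span_singleton he0])
    intro n hn
    rw [heq]
    exact Submodule.subset_span hn
  have hNray : ∀ n ∈ N, ∃ t : ℝ, 0 ≤ t ∧ n = t • e := by
    intro n hn
    obtain ⟨t, ht⟩ := Submodule.mem_span_singleton.mp (hNspan hn)
    refine ⟨t, ?_, ht.symm⟩
    by_contra hneg
    push_neg at hneg
    have hmn : -n ∈ N := by
      have := hNcone (-t) (by linarith) e heN
      rwa [show -n = (-t) • e by rw [← ht]; module]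
    have : n ∈ N ∩ (-N) := ⟨hn, by simpa using hmn⟩
    rw [hNp] at this
    rw [this] at ht
    simp at ht
    rcases ht with h | h
    · exact absurd h hneg.ne
    · exact he0 h
  have hNe : ∀ t : ℝ, 0 ≤ t → t • e ∈ N := fun t ht => hNcone t ht e heN
  have heinj : ∀ t s : ℝ, t • e = s • e → t = s := by
    intro t s h
    have : (t - s) • e = 0 := by rw [sub_smul, h, sub_self]
    rcases smul_eq_zero.mp this with h' | h'
    · linarith [sub_eq_zero.mp (by linarith [h'] : t - s = 0)]
    · exact absurd h' he0
  -- positive scalings preserve interior of M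
  have hScaleInt : ∀ m ∈ interior M, ∀ c : ℝ, 0 < c → c • m ∈ interior M := by
    intro m hm c hc
    obtain ⟨δ, hδ, hballm⟩ := Metric.isOpen_iff.mp isOpen_interior m hm
    rw [mem_interior]
    refine ⟨Metric.ball (c • m) (c * δ), ?_, Metric.isOpen_ball,
      Metric.mem_ball_self (by positivity)⟩
    intro z hz
    have h1 : (1/c) • z ∈ Metric.ball m δ := by
      rw [Metric.mem_ball, dist_eq_norm] at hz ⊢
      have heq : (1/c) • z - m = (1/c) • (z - c • m) := by
        rw [smul_sub, smul_smul]
        field_simp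
        rw [one_smul]
      rw [heq, norm_smul, Real.norm_eq_abs, abs_of_pos (by positivity : (0:ℝ) < 1/c)]
      calc 1/c * ‖z - c • m‖ < 1/c * (c * δ) := by
            exact mul_lt_mul_of_pos_left hz (by positivity)
        _ = δ := by field_simp
    have h2 : (1/c) • z ∈ M := interior_subset (hballm h1)
    have h3 : c • ((1/c) • z) ∈ M := hMcone c hc.le _ h2
    rwa [smul_smul, mul_one_div, div_self hc.ne', one_smul] at h3
  -- if N has nonempty interior then X = span e
  have hXspan : (interior N).Nonempty → ∀ x : X, ∃ c : ℝ, x = c • e := by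
    rintro ⟨n0, hn0⟩ x
    have h1 : (interior ((Submodule.span ℝ ({e} : Set X)) : Set X)).Nonempty :=
      ⟨n0, interior_mono hNspan hn0⟩
    have htop := (Submodule.span ℝ ({e} : Set X)).eq_top_of_nonempty_interior' h1
    have hx : x ∈ Submodule.span ℝ ({e} : Set X) := htop.symm ▸ Submodule.mem_top
    obtain ⟨c, hc⟩ := Submodule.mem_span_singleton.mp hx
    exact ⟨c, hc.symm⟩
  have henorm : 0 < ‖e‖ := norm_pos_iff.mpr he0
  -- some negative multiple of e is in interior M
  obtain ⟨t₀, ht₀⟩ : ∃ t₀ : ℝ, t₀ • e ∈ interior M := by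
    rcases hw with hwM | hwN
    · obtain ⟨c, rfl⟩ := hΔe w hwΔ
      exact ⟨c, hwM⟩
    · obtain ⟨m0, hm0⟩ := hMint
      obtain ⟨c, hc⟩ := hXspan ⟨w, hwN⟩ m0
      exact ⟨c, hc ▸ hm0⟩
  have ht₀neg : t₀ < 0 := by
    rcases lt_trichotomy t₀ 0 with h | h | h
    · exact h
    · exfalso
      rw [h, zero_smul] at ht₀
      obtain ⟨δ, hδ, hball0⟩ := Metric.isOpen_iff.mp isOpen_interior 0 ht₀
      have hcpos : 0 < δ / (2 * ‖e‖) := div_pos hδ (by positivity)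
      have hmem : (δ/(2*‖e‖)) • e ∈ Metric.ball (0:X) δ := by
        rw [Metric.mem_ball, dist_zero_right, norm_smul, Real.norm_eq_abs, abs_of_pos hcpos]
        have : δ/(2*‖e‖) * ‖e‖ = δ/2 := by field_simp
        rw [this]; linarith
      exact hceM _ hcpos (interior_subset (hball0 hmem))
    · exact absurd (interior_subset ht₀) (hceM t₀ h)
  have hInt : -e ∈ interior M := by
    have h1 := hScaleInt _ ht₀ (-1/t₀) (div_pos_of_neg_of_neg (by norm_num) ht₀neg)
    rwa [smul_smul, div_mul_cancel₀ _ ht₀neg.ne, neg_one_smul] at h1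
  -- choose ε
  obtain ⟨ε₀, hε₀, hball₀⟩ := Metric.isOpen_iff.mp isOpen_interior _ hInt
  set ε := min ε₀ ‖e‖ with hεdef
  have hεpos : 0 < ε := lt_min hε₀ henorm
  have hεe : ε ≤ ‖e‖ := min_le_right _ _
  have hball : Metric.ball (-e) ε ⊆ M := fun z hz =>
    interior_subset (hball₀ (Metric.ball_subset_ball (min_le_left _ _) hz))
  -- pointedness: nothing of M is ε-close to e
  have hptd : ∀ z ∈ M, ‖z - e‖ < ε → False := by
    intro z hz hze
    have h1 : -z ∈ Metric.ball (-e) ε := by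
      rw [Metric.mem_ball, dist_eq_norm, show -z - -e = -(z - e) by abel, norm_neg]
      exact hze
    have h2 : z ∈ M ∩ (-M) := ⟨hz, by simpa using hball h1⟩
    rw [hMp] at h2
    rw [Set.mem_singleton_iff.mp h2, zero_sub, norm_neg] at hze
    linarith
  -- the slice sets and the functional f
  set S : X → Set ℝ := fun x => {t : ℝ | x - t • e ∈ M} with hSdef
  set f : X → ℝ := fun x => sInf (S x) with hfdef
  have hSiff : ∀ (x : X) (t : ℝ), t ∈ S x ↔ x - t • e ∈ M := fun x t => Iff.rfl
  have hSmem : ∀ (x : X) (t : ℝ), ‖x‖/ε < t → t ∈ S x := by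
    intro x t ht
    have htpos : 0 < t := lt_of_le_of_lt (by positivity) ht
    have h1 : (1/t) • x - e ∈ Metric.ball (-e) ε := by
      rw [Metric.mem_ball, dist_eq_norm, show (1/t) • x - e - (-e) = (1/t) • x by abel,
        norm_smul, Real.norm_eq_abs, abs_of_pos (by positivity : (0:ℝ) < 1/t)]
      rw [div_lt_iff₀ hεpos] at ht
      calc 1/t * ‖x‖ < 1/t * (t*ε) := mul_lt_mul_of_pos_left ht (by positivity)
        _ = ε := by field_simp
    have h2 := hMcone t htpos.le _ (hball h1)
    rw [hSiff]
    rwa [smul_sub, smul_smul, mul_one_div, div_self htpos.ne', one_smul] at h2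
  have hSbdd : ∀ (x : X), ∀ t ∈ S x, -(‖x‖/ε) ≤ t := by
    intro x t ht
    by_contra hlt
    push_neg at hlt
    have htneg : t < 0 := lt_of_lt_of_le hlt (neg_nonpos.mpr (by positivity))
    have hmt : 0 < -t := neg_pos.mpr htneg
    have hmtinv : 0 < 1/(-t) := one_div_pos.mpr hmt
    rw [hSiff] at ht
    have h2 : (1/(-t)) • (x - t • e) ∈ M := hMcone _ hmtinv.le _ ht
    have h3 : (1/(-t)) • (x - t • e) - e = (1/(-t)) • x := by
      have hc : (1/(-t)) * t = -1 := by field_simp; rw [div_self htneg.ne]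
      rw [smul_sub, smul_smul, hc, neg_one_smul]
      abel
    apply hptd _ h2
    rw [h3, norm_smul, Real.norm_eq_abs, abs_of_pos hmtinv]
    have h4 : ‖x‖ < (-t) * ε := by
      rw [← div_lt_iff₀ hεpos] at *
      linarith
    calc 1/(-t) * ‖x‖ < 1/(-t) * ((-t)*ε) := mul_lt_mul_of_pos_left h4 hmtinv
      _ = ε := by field_simp [htneg.ne]
  have hSclosed : ∀ x : X, IsClosed (S x) := by
    intro x
    have : S x = (fun t : ℝ => x - t • e) ⁻¹' M := rfl
    rw [this]
    exact hMc.preimage (continuous_const.sub (continuous_id.smul continuous_const))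
  have hSne : ∀ x : X, (S x).Nonempty := fun x => ⟨‖x‖/ε + 1, hSmem x _ (by linarith)⟩
  have hSbb : ∀ x : X, BddBelow (S x) := fun x => ⟨-(‖x‖/ε), fun t ht => hSbdd x t ht⟩
  have hfmem : ∀ x : X, x - f x • e ∈ M := fun x =>
    (hSiff x (f x)).mp ((hSclosed x).csInf_mem (hSne x) (hSbb x))
  have hfS : ∀ (x : X), ∀ t ∈ S x, f x ≤ t := fun x t ht => csInf_le (hSbb x) ht
  have hfle : ∀ x : X, f x ≤ ‖x‖/ε := by
    intro x
    have h := csInf_le_csInf (hSbb x) Set.nonempty_Ioi (fun s hs => hSmem x s hs)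
    rwa [csInf_Ioi] at h
  have hfsub : ∀ x y : X, f (x+y) ≤ f x + f y := by
    intro x y
    apply hfS
    rw [hSiff, show (x+y) - (f x + f y) • e = (x - f x • e) + (y - f y • e) by module]
    exact hMadd _ (hfmem x) _ (hfmem y)
  have hfM : ∀ x : X, x ∈ M ↔ f x ≤ 0 := by
    intro x
    constructor
    · intro hx
      apply hfS
      rw [hSiff, zero_smul, sub_zero]
      exact hx
    · intro hx
      rw [show x = (x - f x • e) + (- f x) • (-e) by module]
      exact hMadd _ (hfmem x) _ (hMcone _ (by linarith) _ hneM)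
  have hfe : ∀ t : ℝ, f (t • e) = t := by
    intro t
    have hSt : S (t • e) = Set.Ici t := by
      ext s
      rw [hSiff, Set.mem_Ici, ← sub_smul, hceM']
      constructor <;> intro h <;> linarith
    simp only [hfdef]
    rw [hSt, csInf_Ici]
  have hfcont : Continuous f := by
    have hlip : ∀ x y : X, f x ≤ f y + ‖x - y‖/ε := by
      intro x y
      calc f x = f (y + (x - y)) := by rw [add_sub_cancel]
        _ ≤ f y + f (x - y) := hfsub y (x - y)
        _ ≤ f y + ‖x - y‖/ε := by linarith [hfle (x - y)]
    rw [Metric.continuous_iff]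
    intro x δ hδ
    refine ⟨ε * δ, by positivity, fun y hy => ?_⟩
    have h3 : ‖y - x‖ < ε*δ := by rwa [← dist_eq_norm]
    have h4 : ‖x - y‖ < ε*δ := by rwa [norm_sub_rev]
    have h5 : ‖y - x‖/ε < δ := by rw [div_lt_iff₀ hεpos]; nlinarith
    have h6 : ‖x - y‖/ε < δ := by rw [div_lt_iff₀ hεpos]; nlinarith
    rw [Real.dist_eq, abs_sub_lt_iff]
    exact ⟨by linarith [hlip y x], by linarith [hlip x y]⟩
  have hf0 : f 0 = 0 := by
    have h := hfe 0
    rwa [zero_smul] at h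
  have hfhomle : ∀ c : ℝ, 0 < c → ∀ x : X, f (c • x) ≤ c * f x := by
    intro c hc x
    apply hfS
    rw [hSiff, show c • x - (c * f x) • e = c • (x - f x • e) by module]
    exact hMcone c hc.le _ (hfmem x)
  have hfhom : ∀ c : ℝ, 0 ≤ c → ∀ x : X, f (c • x) = c * f x := by
    intro c hc x
    rcases eq_or_lt_of_le hc with h | h
    · rw [← h, zero_smul, zero_mul, hf0]
    · refine le_antisymm (hfhomle c h x) ?_
      have h2 := hfhomle (1/c) (by positivity) (c • x)
      rw [smul_smul, one_div_mul_cancel h.ne', one_smul] at h2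
      have h3 := mul_le_mul_of_nonneg_left h2 hc
      calc c * f x ≤ c * (1/c * f (c • x)) := h3
        _ = f (c • x) := by field_simp
  -- the retraction pair
  set r : X → ℝ := fun x => max (f x) 0 with hrrdef
  set Q0 : X → X := fun x => x - r x • e with hQ0def
  set R0 : X → X := fun x => r x • e with hR0def
  have hr0 : ∀ x : X, 0 ≤ r x := fun x => le_max_right _ _
  have hrhom : ∀ c : ℝ, 0 ≤ c → ∀ x : X, r (c • x) = c * r x := by
    intro c hc x
    simp only [hrrdef]
    rw [hfhom c hc x, mul_max_of_nonneg (f x) 0 hc, mul_zero]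
  have hrM : ∀ x : X, x - r x • e ∈ M := by
    intro x
    rcases le_or_gt (f x) 0 with h | h
    · simp only [hrrdef]
      rw [max_eq_right h, zero_smul, sub_zero]
      exact (hfM x).mpr h
    · simp only [hrrdef]
      rw [max_eq_left h.le]
      exact hfmem x
  have hrMx : ∀ x ∈ M, r x = 0 := by
    intro x hx
    simp only [hrrdef]
    exact max_eq_right ((hfM x).mp hx)
  have hrsub : ∀ x y : X, r (x + y) ≤ r x + r y := by
    intro x y
    simp only [hrrdef]
    refine max_le (le_trans (hfsub x y) (add_le_add (le_max_left _ _) (le_max_left _ _))) ?_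
    positivity
  have hre : ∀ t : ℝ, 0 ≤ t → r (t • e) = t := by
    intro t ht
    simp only [hrrdef]
    rw [hfe t]
    exact max_eq_left ht
  have hrcont : Continuous r := hfcont.max continuous_const
  -- membership facts
  have hQ0mem : ∀ x : X, Q0 x ∈ M := hrM
  have hQ0fix : ∀ x ∈ M, Q0 x = x := by
    intro x hx
    simp only [hQ0def]
    rw [hrMx x hx, zero_smul, sub_zero]
  have hrangeQ0 : Set.range Q0 = M := by
    ext x
    constructor
    · rintro ⟨y, rfl⟩; exact hQ0mem y
    · intro hx; exact ⟨x, hQ0fix x hx⟩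
  have hR0mem : ∀ x : X, R0 x ∈ N := fun x => hNe (r x) (hr0 x)
  have hrangeR0 : Set.range R0 = N := by
    ext x
    constructor
    · rintro ⟨y, rfl⟩; exact hR0mem y
    · intro hx
      obtain ⟨t, ht0, rfl⟩ := hNray x hx
      exact ⟨t • e, by simp only [hR0def]; rw [hre t ht0]⟩
  have hM0 : M ≠ ({0} : Set X) := by
    intro h
    rw [h] at hneM
    exact he0 (neg_eq_zero.mp hneM)
  have hN0 : N ≠ ({0} : Set X) := by
    intro h
    rw [h] at heN
    exact he0 heN
  -- interior lemma for uniqueness & frontier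
  have hQintL : ∀ m ∈ M, ∀ c : ℝ, 0 < c → m - c • e ∈ interior M := by
    intro m hm c hc
    rw [mem_interior]
    refine ⟨Metric.ball (m - c • e) (c * ε), ?_, Metric.isOpen_ball,
      Metric.mem_ball_self (by positivity)⟩
    intro y hy
    have h1 : y - m ∈ Metric.ball (-(c • e)) (c * ε) := by
      rw [Metric.mem_ball, dist_eq_norm, show y - m - -(c • e) = y - (m - c • e) by abel,
        ← dist_eq_norm]
      exact hy
    have h2 : (1/c) • (y - m) ∈ Metric.ball (-e) ε := by
      rw [Metric.mem_ball, dist_eq_norm,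
        show (1/c) • (y - m) - -e = (1/c) • (y - m - -(c • e)) by
          match_scalars <;> field_simp,
        norm_smul, Real.norm_eq_abs, abs_of_pos (by positivity : (0:ℝ) < 1/c)]
      rw [Metric.mem_ball, dist_eq_norm] at h1
      calc 1/c * ‖y - m - -(c • e)‖ < 1/c * (c * ε) := mul_lt_mul_of_pos_left h1 (by positivity)
        _ = ε := by field_simp
    have h3 : y - m ∈ M := by
      have := hMcone c hc.le _ (hball h2)
      rwa [smul_smul, mul_one_div, div_self hc.ne', one_smul] at this
    have := hMadd m hm _ h3
    rwa [add_sub_cancel] at this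
  -- Q0 is a retraction
  have hQ0ret : IsRetraction Q0 := by
    refine ⟨?_, ?_, ?_, ?_, ?_, ?_, ?_, ?_⟩
    · exact continuous_id.sub (hrcont.smul continuous_const)
    · intro t ht x
      simp only [hQ0def]
      rw [hrhom t ht x, smul_sub, smul_smul]
    · intro x
      have h1 : r (Q0 x) = 0 := hrMx _ (hQ0mem x)
      show Q0 x - r (Q0 x) • e = Q0 x
      rw [h1, zero_smul, sub_zero]
    · rw [hrangeQ0]; exact hM0
    · rw [hrangeQ0]; exact hMc
    · rw [hrangeQ0]; exact hMconv
    · rw [hrangeQ0]; exact hMcone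
    · intro x hx
      rw [hrangeQ0] at hx ⊢
      rw [hMc.frontier_eq]
      refine ⟨hQ0mem x, fun hint => ?_⟩
      have hfx : 0 < f x := by
        by_contra h
        push_neg at h
        exact hx ((hfM x).mpr h)
      have hrx : r x = f x := max_eq_left hfx.le
      obtain ⟨δ, hδ, hballQ⟩ := Metric.isOpen_iff.mp isOpen_interior _ hint
      have hd : 0 < δ/(‖e‖+1) := by positivity
      have hmem : x - (f x - δ/(‖e‖+1)) • e ∈ Metric.ball (Q0 x) δ := by
        rw [Metric.mem_ball, dist_eq_norm]
        have heq : x - (f x - δ/(‖e‖+1)) • e - Q0 x = (δ/(‖e‖+1)) • e := by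
          simp only [hQ0def]
          rw [hrx]
          module
        rw [heq, norm_smul, Real.norm_eq_abs, abs_of_pos hd, div_mul_eq_mul_div,
          div_lt_iff₀ (by positivity : (0:ℝ) < ‖e‖+1)]
        nlinarith [norm_nonneg e]
      have h5 := hfS x _ ((hSiff x _).mpr (interior_subset (hballQ hmem)))
      linarith
  -- R0 is a retraction
  have hR0ret : IsRetraction R0 := by
    refine ⟨?_, ?_, ?_, ?_, ?_, ?_, ?_, ?_⟩
    · exact hrcont.smul continuous_const
    · intro t ht x
      simp only [hR0def]
      rw [hrhom t ht x, mul_smul]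
    · intro x
      show r (R0 x) • e = R0 x
      simp only [hR0def]
      rw [hre _ (hr0 x)]
    · rw [hrangeR0]; exact hN0
    · rw [hrangeR0]; exact hNc
    · rw [hrangeR0]; exact hNconv
    · rw [hrangeR0]; exact hNcone
    · intro x hx
      rw [hrangeR0] at hx ⊢
      rw [hNc.frontier_eq]
      refine ⟨hR0mem x, fun hint => ?_⟩
      obtain ⟨t, rfl⟩ := hXspan ⟨R0 x, hint⟩ x
      have htneg : t < 0 := by
        by_contra h
        push_neg at h
        exact hx (hNe t h)
      have hrx : r (t • e) = 0 := by
        simp only [hrrdef]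
        rw [hfe t]
        exact max_eq_right htneg.le
      have h0int : (0:X) ∈ interior N := by
        have : R0 (t • e) = 0 := by simp only [hR0def]; rw [hrx, zero_smul]
        rwa [this] at hint
      obtain ⟨δ, hδ, hballN⟩ := Metric.isOpen_iff.mp isOpen_interior _ h0int
      have hcpos : 0 < δ/(2*‖e‖) := div_pos hδ (by positivity)
      have hzmem : (-(δ/(2*‖e‖))) • e ∈ Metric.ball (0:X) δ := by
        rw [Metric.mem_ball, dist_zero_right, norm_smul, Real.norm_eq_abs, abs_neg,
          abs_of_pos hcpos]
        have : δ/(2*‖e‖) * ‖e‖ = δ/2 := by field_simp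
        rw [this]; linarith
      have hzN : (-(δ/(2*‖e‖))) • e ∈ N := interior_subset (hballN hzmem)
      obtain ⟨t', ht'0, ht'⟩ := hNray _ hzN
      have := heinj _ _ ht'.symm
      linarith
  -- mutual polarity of (Q0, R0)
  have hpolar : MutuallyPolar Q0 R0 := by
    refine ⟨hQ0ret, hR0ret, ?_, ?_, ?_⟩
    · intro x
      show (x - r x • e) + r x • e = x
      abel
    · intro x
      show R0 x - r (R0 x) • e = 0
      have : r (R0 x) = r x := by
        simp only [hR0def]
        exact hre _ (hr0 x)
      rw [this]
      simp only [hR0def]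
      abel
    · intro x
      show r (Q0 x) • e = 0
      rw [hrMx _ (hQ0mem x), zero_smul]
  -- key uniqueness lemma
  have key : ∀ Q R : X → X, MutuallyPolar Q R → Set.range Q = M → Set.range R = N →
      ∀ x, Q x = Q0 x ∧ R x = R0 x := by
    intro Q R hQR hrQ hrR x
    obtain ⟨hQret, hRret, hsum, hQR0, hRQ0⟩ := hQR
    have hRx : R x ∈ N := hrR ▸ Set.mem_range_self x
    obtain ⟨t, ht0, hte⟩ := hNray _ hRx
    have hQx : Q x = x - t • e := by
      rw [← hte]
      exact eq_sub_of_add_eq (hsum x)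
    have hQxM : Q x ∈ M := hrQ ▸ Set.mem_range_self x
    have hfxt : f x ≤ t := hfS x t ((hSiff x t).mpr (hQx ▸ hQxM))
    have hrt : r x ≤ t := max_le hfxt ht0
    have htr : t ≤ r x := by
      by_contra hgt
      push_neg at hgt
      have hQint : Q x ∈ interior M := by
        have heq : Q x = (x - r x • e) - (t - r x) • e := by
          rw [hQx]
          module
        rw [heq]
        exact hQintL _ (hrM x) _ (by linarith)
      rcases Classical.em (x ∈ M) with hxM | hxM
      · have hx' : Q x = x := by
          obtain ⟨z, hz⟩ := (hrQ ▸ hxM : x ∈ Set.range Q)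
          rw [← hz, hQret.2.2.1]
        have hR0x : R x = 0 := by
          have h := hsum x
          rw [hx'] at h
          exact add_eq_left.mp h
        have ht00 : t • e = (0:ℝ) • e := by rw [zero_smul, ← hte]; exact hR0x
        have := heinj _ _ ht00
        linarith [hr0 x]
      · have hfront := hQret.2.2.2.2.2.2.2 x (by rwa [hrQ])
        rw [hrQ] at hfront
        exact hfront.2 hQint
    have htt : t = r x := le_antisymm htr hrt
    constructor
    · rw [hQx, htt]
    · rw [hte, htt]
  refine ⟨⟨(Q0, R0), ⟨hpolar, hrangeQ0, hrangeR0⟩, ?_⟩, ?_⟩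
  · rintro ⟨Q, R⟩ ⟨hQR, hrQ, hrR⟩
    have hk := key Q R hQR hrQ hrR
    exact Prod.ext (funext fun x => (hk x).1) (funext fun x => (hk x).2)
  · intro Q R hQR hrQ hrR
    have hk := key Q R hQR hrQ hrR
    constructor
    · intro x y
      have heq : Q x + Q y - Q (x + y) = (r x + r y - r (x+y)) • (-e) := by
        rw [(hk x).1, (hk y).1, (hk (x+y)).1]
        simp only [hQ0def]
        module
      rw [heq]
      exact hMcone _ (by linarith [hrsub x y]) _ hneM
    · intro x y
      have heq : R x + R y - R (x + y) = (r x + r y - r (x+y)) • e := by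
        rw [(hk x).2, (hk y).2, (hk (x+y)).2]
        simp only [hR0def]
        module
      rw [heq]
      exact hNe _ (by linarith [hrsub x y])
end

section
/- Let K be a generating closed convex cone in a separable Hilbert space H and let P be the metric projection onto K. If P is subadditive with respect to the order induced by K, then I − P is isotone with respect to the order induced by K° (the range of I − P); symmetrically, if P is isotone then I − P is subadditive. -/
open Set RealInnerProductSpace

theorem stmt19 {H : Type*} [NormedAddCommGroup H] [InnerProductSpace ℝ H] [CompleteSpace H]
    [TopologicalSpace.SeparableSpace H]
    (K : Set H) (hK : IsClosed K) (hconv : Convex ℝ K)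
    (hcone : ∀ t : ℝ, 0 ≤ t → ∀ x ∈ K, t • x ∈ K)
    (hgen : ∀ z : H, ∃ a ∈ K, ∃ b ∈ K, z = a - b)
    (P : H → H) (hP : ∀ x, P x ∈ K ∧ ∀ y ∈ K, ‖x - P x‖ ≤ ‖x - y‖) :
    ((∀ x y : H, P x + P y - P (x + y) ∈ K) →
      ∀ x y : H, y - x ∈ {z : H | ∀ w ∈ K, ⟪z, w⟫ ≤ 0} →
        (y - P y) - (x - P x) ∈ {z : H | ∀ w ∈ K, ⟪z, w⟫ ≤ 0}) ∧
    ((∀ x y : H, y - x ∈ K → P y - P x ∈ K) →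
      ∀ x y : H, (x - P x) + (y - P y) - ((x + y) - P (x + y)) ∈
        {z : H | ∀ w ∈ K, ⟪z, w⟫ ≤ 0}) := by
  have hPK : ∀ z, P z ∈ K := fun z => (hP z).1
  have hmin : ∀ z, ∀ c ∈ K, ‖z - P z‖ ≤ ‖z - c‖ := fun z => (hP z).2
  -- 0 ∈ K
  have h0K : (0 : H) ∈ K := by
    obtain ⟨a, ha, -⟩ := hgen 0
    simpa using hcone 0 le_rfl a ha
  -- K is closed under addition
  have hKadd : ∀ a ∈ K, ∀ b ∈ K, a + b ∈ K := by
    intro a ha b hb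
    have h2 : ((1:ℝ)/2) • a + ((1:ℝ)/2) • b ∈ K :=
      hconv ha hb (by norm_num) (by norm_num) (by norm_num)
    have := hcone 2 (by norm_num) _ h2
    have heq : (2:ℝ) • (((1:ℝ)/2) • a + ((1:ℝ)/2) • b) = a + b := by
      rw [smul_add, smul_smul, smul_smul]; norm_num
    rwa [heq] at this
  -- variational inequality
  have hvar : ∀ z, ∀ c ∈ K, ⟪z - P z, c - P z⟫ ≤ 0 := by
    intro z c hc
    have hiInf : ‖z - P z‖ = ⨅ w : K, ‖z - w‖ := by
      haveI : Nonempty K := ⟨⟨P z, hPK z⟩⟩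
      refine le_antisymm (le_ciInf fun w => hmin z w w.2) (ciInf_le ?_ (⟨P z, hPK z⟩ : K))
      exact ⟨0, by rintro r ⟨w, rfl⟩; exact norm_nonneg _⟩
    exact (norm_eq_iInf_iff_real_inner_le_zero hconv (hPK z)).1 hiInf c hc
  -- orthogonality ⟪z - P z, P z⟫ = 0
  have horth : ∀ z, ⟪z - P z, P z⟫ = 0 := by
    intro z
    have h1 : ⟪z - P z, (2:ℝ) • P z - P z⟫ ≤ 0 :=
      hvar z _ (hcone 2 (by norm_num) _ (hPK z))
    have h2 : ⟪z - P z, (0:H) - P z⟫ ≤ 0 := hvar z 0 h0K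
    have e1 : (2:ℝ) • P z - P z = P z := by
      rw [two_smul]; abel
    rw [e1] at h1
    rw [zero_sub, inner_neg_right] at h2
    linarith
  -- polar membership of residuals
  have hpolar : ∀ z, ∀ w ∈ K, ⟪z - P z, w⟫ ≤ 0 := by
    intro z w hw
    have h1 : ⟪z - P z, (P z + w) - P z⟫ ≤ 0 := hvar z _ (hKadd _ (hPK z) _ hw)
    simpa using h1
  -- P u = 0 for u in the polar cone
  have hPzero : ∀ u : H, (∀ w ∈ K, ⟪u, w⟫ ≤ 0) → P u = 0 := by
    intro u hu
    have h1 : ‖u - P u‖ ≤ ‖u - 0‖ := hmin u 0 h0K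
    have h2 : ⟪u, P u⟫ ≤ 0 := hu _ (hPK u)
    have h3 : ‖u - P u‖ ^ 2 ≤ ‖u‖ ^ 2 := by
      rw [sub_zero] at h1
      exact pow_le_pow_left₀ (norm_nonneg _) h1 2
    have h4 : ‖u - P u‖ ^ 2 = ‖u‖ ^ 2 - 2 * ⟪u, P u⟫ + ‖P u‖ ^ 2 :=
      norm_sub_sq_real u (P u)
    have h6 : ‖P u‖ = 0 := by nlinarith [sq_nonneg ‖P u‖, norm_nonneg (P u)]
    exact norm_eq_zero.1 h6
  -- P k = k for k ∈ K
  have hPfix : ∀ k ∈ K, P k = k := by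
    intro k hk
    have h1 : ‖k - P k‖ ≤ ‖k - k‖ := hmin k k hk
    rw [sub_self, norm_zero] at h1
    have h2 : ‖k - P k‖ = 0 := le_antisymm h1 (norm_nonneg _)
    have h3 := norm_eq_zero.1 h2
    rw [sub_eq_zero] at h3
    exact h3.symm
  constructor
  · -- Part 1: subadditive ⟹ I - P isotone w.r.t. K°
    intro hsub x y hu
    simp only [mem_setOf_eq] at hu ⊢
    set d := (y - P y) - (x - P x) with hd
    have hPu : P (y - x) = 0 := hPzero _ hu
    have hk : P x - P y ∈ K := by
      have := hsub x (y - x)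
      rw [hPu, add_sub_cancel] at this
      simpa using this
    have hdk : d = (y - x) + (P x - P y) := by rw [hd]; abel
    -- k - P d ∈ K
    have hm : (P x - P y) - P d ∈ K := by
      have h1 := hsub (y - x) (P x - P y)
      rw [hPu, hPfix _ hk, zero_add, ← hdk] at h1
      exact h1
    -- ⟪x - P x, k⟫ ≥ 0
    have hrk : 0 ≤ ⟪x - P x, P x - P y⟫ := by
      have h1 : ⟪x - P x, P y - P x⟫ ≤ 0 := hvar x _ (hPK y)
      have e : ⟪x - P x, P y - P x⟫ = - ⟪x - P x, P x - P y⟫ := by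
        rw [← inner_neg_right]; congr 1; abel
      rw [e] at h1; linarith
    have hrm : ⟪x - P x, (P x - P y) - P d⟫ ≤ 0 := hpolar x _ hm
    have hrc : 0 ≤ ⟪x - P x, P d⟫ := by
      have e : ⟪x - P x, (P x - P y) - P d⟫
          = ⟪x - P x, P x - P y⟫ - ⟪x - P x, P d⟫ := inner_sub_right _ _ _
      linarith
    have hsc : ⟪y - P y, P d⟫ ≤ 0 := hpolar y _ (hPK d)
    have hdc : ⟪d, P d⟫ = ‖P d‖ ^ 2 := by
      have h1 := horth d
      rw [inner_sub_left, sub_eq_zero] at h1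
      rw [h1, real_inner_self_eq_norm_sq]
    have hdsplit : ⟪d, P d⟫ = ⟪y - P y, P d⟫ - ⟪x - P x, P d⟫ := by
      rw [hd, inner_sub_left]
    have hc0 : P d = 0 := by
      have h5 : ‖P d‖ ^ 2 ≤ 0 := by rw [← hdc, hdsplit]; linarith
      have h6 : ‖P d‖ = 0 := by nlinarith [sq_nonneg ‖P d‖, norm_nonneg (P d)]
      exact norm_eq_zero.1 h6
    intro w hw
    have h7 := hpolar d w hw
    rw [hc0, sub_zero] at h7
    exact h7
  · -- Part 2: isotone ⟹ I - P subadditive w.r.t. K°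
    intro hiso x y
    simp only [mem_setOf_eq]
    -- key: for any z and u ∈ K°, P (z + u) - P z ∈ K°
    have key : ∀ z u : H, (∀ w ∈ K, ⟪u, w⟫ ≤ 0) →
        ∀ w ∈ K, ⟪P (z + u) - P z, w⟫ ≤ 0 := by
      intro z u hu
      set δ := P (z + u) - P z with hδdef
      have hbδ : P (z + u) - δ = P z := by rw [hδdef]; abel
      have hbc : P (z + u) - P δ ∈ K := by
        have h1 : P (P (z + u)) - P δ ∈ K := hiso δ (P (z + u)) (by rw [hbδ]; exact hPK z)
        rwa [hPfix _ (hPK (z + u))] at h1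
      have hsb : ⟪(z + u) - P (z + u), P (z + u)⟫ = 0 := horth (z + u)
      have hsk : ⟪(z + u) - P (z + u), P (z + u) - P δ⟫ ≤ 0 := hpolar (z + u) _ hbc
      have hsc : 0 ≤ ⟪(z + u) - P (z + u), P δ⟫ := by
        have e : ⟪(z + u) - P (z + u), P (z + u) - P δ⟫
            = ⟪(z + u) - P (z + u), P (z + u)⟫ - ⟪(z + u) - P (z + u), P δ⟫ :=
          inner_sub_right _ _ _
        rw [hsb] at e; linarith
      have hdc : ⟪δ, P δ⟫ = ‖P δ‖ ^ 2 := by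
        have h1 := horth δ
        rw [inner_sub_left, sub_eq_zero] at h1
        rw [h1, real_inner_self_eq_norm_sq]
      have hδsplit : δ = u + (z - P z) - ((z + u) - P (z + u)) := by rw [hδdef]; abel
      have huc : ⟪u, P δ⟫ ≤ 0 := hu _ (hPK δ)
      have hrc : ⟪z - P z, P δ⟫ ≤ 0 := hpolar z _ (hPK δ)
      have hc0 : P δ = 0 := by
        have e : ⟪u + (z - P z) - ((z + u) - P (z + u)), P δ⟫
            = ⟪u, P δ⟫ + ⟪z - P z, P δ⟫ - ⟪(z + u) - P (z + u), P δ⟫ := by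
          rw [inner_sub_left, inner_add_left]
        rw [← hδsplit] at e
        have h5 : ‖P δ‖ ^ 2 ≤ 0 := by rw [← hdc, e]; linarith
        have h6 : ‖P δ‖ = 0 := by nlinarith [sq_nonneg ‖P δ‖, norm_nonneg (P δ)]
        exact norm_eq_zero.1 h6
      intro w hw
      have h7 := hpolar δ w hw
      rw [hc0, sub_zero] at h7
      exact h7
    have hz : P x + P y ∈ K := hKadd _ (hPK x) _ (hPK y)
    have hu : ∀ w ∈ K, ⟪(x - P x) + (y - P y), w⟫ ≤ 0 := by
      intro w hw
      have h1 := hpolar x w hw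
      have h2 := hpolar y w hw
      rw [inner_add_left]; linarith
    have h := key (P x + P y) ((x - P x) + (y - P y)) hu
    have hzq : (P x + P y) + ((x - P x) + (y - P y)) = x + y := by abel
    rw [hzq, hPfix _ hz] at h
    intro w hw
    have h8 := h w hw
    have e : ⟪(x - P x) + (y - P y) - ((x + y) - P (x + y)), w⟫
        = ⟪P (x + y) - (P x + P y), w⟫ := by
      congr 1; abel
    rw [e]
    exact h8
end
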